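/- arXiv:2108.10827 — 5 statements merged into one kernel-verified Lean document; each statement's English description precedes it below -/
import Mathlib

section
/- Let λ be a Young diagram and define the Laurent polynomial g_λ(t) ∈ ℤ[t,t^{−1}] by g_λ(t) = Σ_{(a,a)∈λ, a≥1} t^{−a} + Σ_{((i,j),(l,k))∈λ×λ : i−l = j−k = a, a∈ℤ, a∉{0,1}} sgn(a)·t^{a} − Σ_{((i,j),(l,k))∈λ×λ : i−l+1 = j−k = a, a∈ℤ, a∉{0,1}} sgn(a)·t^{a}. Then there exists a Laurent polynomial A(t) ∈ ℤ[t,t^{−1}] such that g_λ(t) = A(t) + t·A(t^{−1}). -/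
open LaurentPolynomial Finset

/-- The ring involution of `ℤ[T,T⁻¹]` sending `T ↦ T⁻¹`, induced by negation on the
exponents. -/
noncomputable def laurentInvert : LaurentPolynomial ℤ ≃ₐ[ℤ] LaurentPolynomial ℤ :=
  AddMonoidAlgebra.domCongr ℤ ℤ (AddEquiv.neg ℤ)

lemma lcoeff_T_mul_invert (B : LaurentPolynomial ℤ) (n : ℤ) :
    (T 1 * laurentInvert B : LaurentPolynomial ℤ).coeff n = B.coeff (1 - n) := by
  have h := AddMonoidAlgebra.coeff_single_mul_apply (laurentInvert B) 1 1 n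
  have hT : (T 1 : LaurentPolynomial ℤ) = AddMonoidAlgebra.single (1 : ℤ) (1 : ℤ) := rfl
  rw [hT, h, one_mul, laurentInvert, AddMonoidAlgebra.coeff_domCongr]
  congr 1
  simp
  ring

lemma exists_decomp (P : LaurentPolynomial ℤ) (h : ∀ n, P.coeff n = P.coeff (1 - n)) :
    ∃ A, P = A + T 1 * laurentInvert A := by
  classical
  refine ⟨AddMonoidAlgebra.ofCoeff (Finsupp.filter (fun n => 1 ≤ n) P.coeff), LaurentPolynomial.ext fun n => ?_⟩
  have hadd : ∀ (B C : LaurentPolynomial ℤ) (m : ℤ), (B + C : LaurentPolynomial ℤ).coeff m = B.coeff m + C.coeff m :=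
    fun _ _ _ => rfl
  rw [hadd, lcoeff_T_mul_invert]
  have hf : ∀ m : ℤ, (AddMonoidAlgebra.ofCoeff (Finsupp.filter (fun n => 1 ≤ n) P.coeff) : LaurentPolynomial ℤ).coeff m
      = if 1 ≤ m then P.coeff m else 0 := fun m => Finsupp.filter_apply _ _ _
  rw [hf, hf]
  by_cases hn : 1 ≤ n
  · have h2 : ¬ (1 ≤ 1 - n) := by omega
    simp [hn, h2]
  · have h2 : 1 ≤ 1 - n := by omega
    simp [hn, h2, h n]

lemma sum_T_apply {α : Type*} (s : Finset α) (e : α → ℤ) (n : ℤ) :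
    (∑ x ∈ s, (T (e x) : LaurentPolynomial ℤ)).coeff n = ((s.filter (fun x => e x = n)).card : ℤ) := by
  classical
  rw [AddMonoidAlgebra.coeff_sum, Finset.sum_apply']
  simp only [T_apply]
  rw [Finset.sum_boole]

lemma sum_sign_T_apply {α : Type*} (s : Finset α) (e : α → ℤ) (n : ℤ) :
    (∑ x ∈ s, (C (e x).sign * T (e x) : LaurentPolynomial ℤ)).coeff n
      = n.sign * ((s.filter (fun x => e x = n)).card : ℤ) := by
  classical
  rw [AddMonoidAlgebra.coeff_sum, Finset.sum_apply']
  have key : ∀ x, (C (e x).sign * T (e x) : LaurentPolynomial ℤ).coeff n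
      = n.sign * (if e x = n then 1 else 0) := by
    intro x
    rw [← single_eq_C_mul_T, AddMonoidAlgebra.coeff_single, Finsupp.single_apply]
    by_cases h : e x = n
    · simp [h]
    · simp [h]
  rw [Finset.sum_congr rfl fun x _ => key x, ← Finset.mul_sum, Finset.sum_boole]

lemma card_pairs (μ : YoungDiagram) (x y : ℤ) (hx : 0 ≤ x) (hy : 0 ≤ y) :
    ((μ.cells ×ˢ μ.cells).filter
        (fun p => (p.1.1 : ℤ) - p.2.1 = x ∧ (p.1.2 : ℤ) - p.2.2 = y)).card
    = (μ.cells.filter (fun c => x ≤ (c.1 : ℤ) ∧ y ≤ (c.2 : ℤ))).card := by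
  classical
  refine Finset.card_bij' (fun p _ => p.1)
      (fun c _ => (c, (c.1 - x.toNat, c.2 - y.toNat))) ?hi ?hj ?li ?ri
  case hi =>
    rintro ⟨p1, p2⟩ hp
    simp only [Finset.mem_filter, Finset.mem_product] at hp ⊢
    obtain ⟨⟨h1, h2⟩, h3, h4⟩ := hp
    exact ⟨h1, by omega, by omega⟩
  case hj =>
    rintro c hc
    simp only [Finset.mem_filter, Finset.mem_product, YoungDiagram.mem_cells] at hc ⊢
    obtain ⟨h1, h2, h3⟩ := hc
    refine ⟨⟨h1, μ.up_left_mem (by omega) (by omega) h1⟩, by omega, by omega⟩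
  case li =>
    rintro ⟨p1, p2⟩ hp
    simp only [Finset.mem_filter, Finset.mem_product] at hp
    obtain ⟨⟨h1, h2⟩, h3, h4⟩ := hp
    obtain ⟨a, b⟩ := p2
    simp only [Prod.mk.injEq] at h3 h4 ⊢
    exact ⟨trivial, by omega, by omega⟩
  case ri =>
    rintro c hc
    rfl

lemma card_pairs_swap (μ : YoungDiagram) (x y : ℤ) :
    ((μ.cells ×ˢ μ.cells).filter
        (fun p => (p.1.1 : ℤ) - p.2.1 = x ∧ (p.1.2 : ℤ) - p.2.2 = y)).card
    = ((μ.cells ×ˢ μ.cells).filter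
        (fun p => (p.1.1 : ℤ) - p.2.1 = -x ∧ (p.1.2 : ℤ) - p.2.2 = -y)).card := by
  classical
  refine Finset.card_bij' (fun p _ => p.swap) (fun p _ => p.swap) ?hi ?hj ?li ?ri
  case hi =>
    rintro ⟨p1, p2⟩ hp
    simp only [Finset.mem_filter, Finset.mem_product, Prod.swap_prod_mk] at hp ⊢
    obtain ⟨⟨h1, h2⟩, h3, h4⟩ := hp
    exact ⟨⟨h2, h1⟩, by omega, by omega⟩
  case hj =>
    rintro ⟨p1, p2⟩ hp
    simp only [Finset.mem_filter, Finset.mem_product, Prod.swap_prod_mk] at hp ⊢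
    obtain ⟨⟨h1, h2⟩, h3, h4⟩ := hp
    exact ⟨⟨h2, h1⟩, by omega, by omega⟩
  case li => rintro ⟨p1, p2⟩ _; rfl
  case ri => rintro ⟨p1, p2⟩ _; rfl

lemma filter_card_split {α : Type*} (s : Finset α) (r A : α → Prop)
    [DecidablePred r] [DecidablePred A] :
    (s.filter r).card = (s.filter (fun x => r x ∧ A x)).card
      + (s.filter (fun x => r x ∧ ¬ A x)).card := by
  rw [← Finset.filter_filter, ← Finset.filter_filter,
    Finset.card_filter_add_card_filter_not]

lemma card_cell_eq (μ : YoungDiagram) (k l : ℕ) :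
    (μ.cells.filter (fun c => (c.1 : ℤ) = k ∧ (c.2 : ℤ) = l)).card
      = if (k, l) ∈ μ then 1 else 0 := by
  classical
  split_ifs with h
  · rw [Finset.card_eq_one]
    refine ⟨(k, l), ?_⟩
    ext c
    simp only [Finset.mem_filter, YoungDiagram.mem_cells, Finset.mem_singleton]
    constructor
    · rintro ⟨_, h1, h2⟩
      obtain ⟨a, b⟩ := c
      simp only [Prod.mk.injEq]
      constructor <;> omega
    · rintro rfl
      exact ⟨h, rfl, rfl⟩
  · rw [Finset.card_eq_zero, Finset.filter_eq_empty_iff]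
    rintro c hc ⟨h1, h2⟩
    rw [YoungDiagram.mem_cells] at hc
    have : c = (k, l) := by
      obtain ⟨a, b⟩ := c
      simp only [Prod.mk.injEq]
      constructor <;> omega
    exact h (this ▸ hc)

/-- number of cells of `μ` weakly right-below of `(x, y)` -/
noncomputable def cnt (μ : YoungDiagram) (x y : ℤ) : ℕ :=
  (μ.cells.filter (fun c => x ≤ (c.1 : ℤ) ∧ y ≤ (c.2 : ℤ))).card

lemma key_identity (μ : YoungDiagram) (b : ℤ) (hb : 1 ≤ b) :
    (cnt μ b b : ℤ) + cnt μ (b + 1) (b + 1)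
      = (if (b.toNat, b.toNat) ∈ μ then 1 else 0) + cnt μ b (b + 1) + cnt μ (b + 1) b := by
  classical
  have h1 : cnt μ b b = cnt μ (b + 1) b
      + (μ.cells.filter (fun c => (c.1 : ℤ) = b ∧ b ≤ (c.2 : ℤ))).card := by
    rw [cnt, filter_card_split _ _ (fun c => b + 1 ≤ (c.1 : ℤ))]
    congr 1
    · rw [cnt]; apply congrArg; apply Finset.filter_congr; intro c _; constructor
      · rintro ⟨⟨_, h⟩, h'⟩; exact ⟨h', h⟩
      · rintro ⟨h', h⟩; exact ⟨⟨by omega, h⟩, h'⟩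
    · apply congrArg; apply Finset.filter_congr; intro c _; constructor
      · rintro ⟨⟨ha, h2⟩, h3⟩; exact ⟨by omega, h2⟩
      · rintro ⟨ha, h2⟩; exact ⟨⟨by omega, h2⟩, by omega⟩
  have h2 : cnt μ b (b + 1) = cnt μ (b + 1) (b + 1)
      + (μ.cells.filter (fun c => (c.1 : ℤ) = b ∧ b + 1 ≤ (c.2 : ℤ))).card := by
    rw [cnt, filter_card_split _ _ (fun c => b + 1 ≤ (c.1 : ℤ))]
    congr 1
    · rw [cnt]; apply congrArg; apply Finset.filter_congr; intro c _; constructor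
      · rintro ⟨⟨_, h⟩, h'⟩; exact ⟨h', h⟩
      · rintro ⟨h', h⟩; exact ⟨⟨by omega, h⟩, h'⟩
    · apply congrArg; apply Finset.filter_congr; intro c _; constructor
      · rintro ⟨⟨ha, h2⟩, h3⟩; exact ⟨by omega, h2⟩
      · rintro ⟨ha, h2⟩; exact ⟨⟨by omega, h2⟩, by omega⟩
  have h3 : (μ.cells.filter (fun c => (c.1 : ℤ) = b ∧ b ≤ (c.2 : ℤ))).card
      = (μ.cells.filter (fun c => (c.1 : ℤ) = b ∧ b + 1 ≤ (c.2 : ℤ))).card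
        + (if (b.toNat, b.toNat) ∈ μ then 1 else 0) := by
    rw [filter_card_split _ _ (fun c => b + 1 ≤ (c.2 : ℤ))]
    congr 1
    · apply congrArg; apply Finset.filter_congr; intro c _; constructor
      · rintro ⟨⟨hc1, _⟩, h3⟩; exact ⟨hc1, h3⟩
      · rintro ⟨hc1, h3⟩; exact ⟨⟨hc1, by omega⟩, h3⟩
    · rw [← card_cell_eq μ b.toNat b.toNat]
      apply congrArg; apply Finset.filter_congr; intro c _; constructor
      · rintro ⟨⟨hc1, hc2⟩, hc3⟩; constructor <;> omega
      · rintro ⟨hc1, hc2⟩; refine ⟨⟨by omega, by omega⟩, by omega⟩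
  split_ifs at h3 ⊢ <;> omega


/-- The Laurent polynomial
`g_μ(t) = Σ_{(a,a)∈μ, a≥1} t^{−a}
  + Σ_{((i,j),(l,k))∈μ×μ : i−l = j−k = a, a∉{0,1}} sgn(a)·t^{a}
  − Σ_{((i,j),(l,k))∈μ×μ : i−l+1 = j−k = a, a∉{0,1}} sgn(a)·t^{a}`. -/
noncomputable def gLam (μ : YoungDiagram) : LaurentPolynomial ℤ :=
  (∑ c ∈ μ.cells.filter (fun c => c.1 = c.2 ∧ 1 ≤ c.1), T (-(c.1 : ℤ)))
  + (∑ p ∈ (μ.cells ×ˢ μ.cells).filter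
        (fun p => (p.1.1 : ℤ) - p.2.1 = (p.1.2 : ℤ) - p.2.2
          ∧ (p.1.1 : ℤ) - p.2.1 ≠ 0 ∧ (p.1.1 : ℤ) - p.2.1 ≠ 1),
      C ((p.1.1 : ℤ) - p.2.1).sign * T ((p.1.1 : ℤ) - p.2.1))
  - (∑ p ∈ (μ.cells ×ˢ μ.cells).filter
        (fun p => (p.1.1 : ℤ) - p.2.1 + 1 = (p.1.2 : ℤ) - p.2.2
          ∧ (p.1.1 : ℤ) - p.2.1 + 1 ≠ 0 ∧ (p.1.1 : ℤ) - p.2.1 + 1 ≠ 1),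
      C ((p.1.1 : ℤ) - p.2.1 + 1).sign * T ((p.1.1 : ℤ) - p.2.1 + 1))

lemma gLam_apply (μ : YoungDiagram) (n : ℤ) :
    (gLam μ : LaurentPolynomial ℤ).coeff n =
      ((μ.cells.filter (fun c => (c.1 = c.2 ∧ 1 ≤ c.1) ∧ -(c.1 : ℤ) = n)).card : ℤ)
      + n.sign * (((μ.cells ×ˢ μ.cells).filter
          (fun p => ((p.1.1 : ℤ) - p.2.1 = (p.1.2 : ℤ) - p.2.2
            ∧ (p.1.1 : ℤ) - p.2.1 ≠ 0 ∧ (p.1.1 : ℤ) - p.2.1 ≠ 1)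
            ∧ (p.1.1 : ℤ) - p.2.1 = n)).card : ℤ)
      - n.sign * (((μ.cells ×ˢ μ.cells).filter
          (fun p => ((p.1.1 : ℤ) - p.2.1 + 1 = (p.1.2 : ℤ) - p.2.2
            ∧ (p.1.1 : ℤ) - p.2.1 + 1 ≠ 0 ∧ (p.1.1 : ℤ) - p.2.1 + 1 ≠ 1)
            ∧ (p.1.1 : ℤ) - p.2.1 + 1 = n)).card : ℤ) := by
  classical
  have happ : (gLam μ : LaurentPolynomial ℤ).coeff n =
      (∑ c ∈ μ.cells.filter (fun c => c.1 = c.2 ∧ 1 ≤ c.1),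
        (T (-(c.1 : ℤ)) : LaurentPolynomial ℤ)).coeff n
      + (∑ p ∈ (μ.cells ×ˢ μ.cells).filter
            (fun p => (p.1.1 : ℤ) - p.2.1 = (p.1.2 : ℤ) - p.2.2
              ∧ (p.1.1 : ℤ) - p.2.1 ≠ 0 ∧ (p.1.1 : ℤ) - p.2.1 ≠ 1),
          (C ((p.1.1 : ℤ) - p.2.1).sign * T ((p.1.1 : ℤ) - p.2.1) : LaurentPolynomial ℤ)).coeff n
      - (∑ p ∈ (μ.cells ×ˢ μ.cells).filter
            (fun p => (p.1.1 : ℤ) - p.2.1 + 1 = (p.1.2 : ℤ) - p.2.2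
              ∧ (p.1.1 : ℤ) - p.2.1 + 1 ≠ 0 ∧ (p.1.1 : ℤ) - p.2.1 + 1 ≠ 1),
          (C ((p.1.1 : ℤ) - p.2.1 + 1).sign * T ((p.1.1 : ℤ) - p.2.1 + 1)
            : LaurentPolynomial ℤ)).coeff n := rfl
  rw [happ]
  simp only [sum_T_apply, sum_sign_T_apply, Finset.filter_filter]

lemma gLam_apply_two_le (μ : YoungDiagram) (n : ℤ) (hn : 2 ≤ n) :
    (gLam μ : LaurentPolynomial ℤ).coeff n = (cnt μ n n : ℤ) - cnt μ (n - 1) n := by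
  classical
  rw [gLam_apply]
  have hsign : n.sign = 1 := Int.sign_eq_one_iff_pos.mpr (by omega)
  have hD : (μ.cells.filter (fun c => (c.1 = c.2 ∧ 1 ≤ c.1) ∧ -(c.1 : ℤ) = n)) = ∅ :=
    Finset.filter_false_of_mem (fun c _ h => by omega)
  have h2 : ((μ.cells ×ˢ μ.cells).filter
      (fun p => ((p.1.1 : ℤ) - p.2.1 = (p.1.2 : ℤ) - p.2.2
        ∧ (p.1.1 : ℤ) - p.2.1 ≠ 0 ∧ (p.1.1 : ℤ) - p.2.1 ≠ 1)
        ∧ (p.1.1 : ℤ) - p.2.1 = n)).card = cnt μ n n := by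
    rw [cnt, ← card_pairs μ n n (by omega) (by omega)]
    apply congrArg; apply Finset.filter_congr; intro p _
    constructor
    · rintro ⟨⟨hd, _, _⟩, he⟩; exact ⟨he, by omega⟩
    · rintro ⟨he1, he2⟩; exact ⟨⟨by omega, by omega, by omega⟩, he1⟩
  have h3 : ((μ.cells ×ˢ μ.cells).filter
      (fun p => ((p.1.1 : ℤ) - p.2.1 + 1 = (p.1.2 : ℤ) - p.2.2
        ∧ (p.1.1 : ℤ) - p.2.1 + 1 ≠ 0 ∧ (p.1.1 : ℤ) - p.2.1 + 1 ≠ 1)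
        ∧ (p.1.1 : ℤ) - p.2.1 + 1 = n)).card = cnt μ (n - 1) n := by
    rw [cnt, ← card_pairs μ (n - 1) n (by omega) (by omega)]
    apply congrArg; apply Finset.filter_congr; intro p _
    constructor
    · rintro ⟨⟨hd, _, _⟩, he⟩; exact ⟨by omega, by omega⟩
    · rintro ⟨he1, he2⟩; exact ⟨⟨by omega, by omega, by omega⟩, by omega⟩
  rw [hsign, hD, h2, h3]
  simp

lemma gLam_apply_neg (μ : YoungDiagram) (n : ℤ) (hn : n ≤ -1) :
    (gLam μ : LaurentPolynomial ℤ).coeff n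
      = (if ((-n).toNat, (-n).toNat) ∈ μ then 1 else 0)
        - (cnt μ (-n) (-n) : ℤ) + cnt μ (1 - n) (-n) := by
  classical
  rw [gLam_apply]
  have hsign : n.sign = -1 := Int.sign_eq_neg_one_iff_neg.mpr (by omega)
  have hD : (μ.cells.filter (fun c => (c.1 = c.2 ∧ 1 ≤ c.1) ∧ -(c.1 : ℤ) = n)).card
      = if ((-n).toNat, (-n).toNat) ∈ μ then 1 else 0 := by
    rw [← card_cell_eq μ (-n).toNat (-n).toNat]
    apply congrArg; apply Finset.filter_congr; intro c _
    constructor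
    · rintro ⟨⟨h1, h2⟩, h3⟩; constructor <;> omega
    · rintro ⟨h1, h2⟩; refine ⟨⟨by omega, by omega⟩, by omega⟩
  have h2 : ((μ.cells ×ˢ μ.cells).filter
      (fun p => ((p.1.1 : ℤ) - p.2.1 = (p.1.2 : ℤ) - p.2.2
        ∧ (p.1.1 : ℤ) - p.2.1 ≠ 0 ∧ (p.1.1 : ℤ) - p.2.1 ≠ 1)
        ∧ (p.1.1 : ℤ) - p.2.1 = n)).card = cnt μ (-n) (-n) := by
    have e1 : ((μ.cells ×ˢ μ.cells).filter
        (fun p => ((p.1.1 : ℤ) - p.2.1 = (p.1.2 : ℤ) - p.2.2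
          ∧ (p.1.1 : ℤ) - p.2.1 ≠ 0 ∧ (p.1.1 : ℤ) - p.2.1 ≠ 1)
          ∧ (p.1.1 : ℤ) - p.2.1 = n))
        = ((μ.cells ×ˢ μ.cells).filter
            (fun p => (p.1.1 : ℤ) - p.2.1 = n ∧ (p.1.2 : ℤ) - p.2.2 = n)) := by
      apply Finset.filter_congr; intro p _
      constructor
      · rintro ⟨⟨hd, _, _⟩, he⟩; exact ⟨by omega, by omega⟩
      · rintro ⟨he1, he2⟩; exact ⟨⟨by omega, by omega, by omega⟩, by omega⟩
    rw [cnt, e1, card_pairs_swap μ n n, card_pairs μ (-n) (-n) (by omega) (by omega)]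
  have h3 : ((μ.cells ×ˢ μ.cells).filter
      (fun p => ((p.1.1 : ℤ) - p.2.1 + 1 = (p.1.2 : ℤ) - p.2.2
        ∧ (p.1.1 : ℤ) - p.2.1 + 1 ≠ 0 ∧ (p.1.1 : ℤ) - p.2.1 + 1 ≠ 1)
        ∧ (p.1.1 : ℤ) - p.2.1 + 1 = n)).card = cnt μ (1 - n) (-n) := by
    have e1 : ((μ.cells ×ˢ μ.cells).filter
        (fun p => ((p.1.1 : ℤ) - p.2.1 + 1 = (p.1.2 : ℤ) - p.2.2
          ∧ (p.1.1 : ℤ) - p.2.1 + 1 ≠ 0 ∧ (p.1.1 : ℤ) - p.2.1 + 1 ≠ 1)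
          ∧ (p.1.1 : ℤ) - p.2.1 + 1 = n))
        = ((μ.cells ×ˢ μ.cells).filter
            (fun p => (p.1.1 : ℤ) - p.2.1 = -(1 - n) ∧ (p.1.2 : ℤ) - p.2.2 = -(-n))) := by
      apply Finset.filter_congr; intro p _
      constructor
      · rintro ⟨⟨hd, _, _⟩, he⟩; exact ⟨by omega, by omega⟩
      · rintro ⟨he1, he2⟩; exact ⟨⟨by omega, by omega, by omega⟩, by omega⟩
    rw [cnt, e1, ← card_pairs_swap μ (1 - n) (-n),
      card_pairs μ (1 - n) (-n) (by omega) (by omega)]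
  rw [hsign, hD, h2, h3]
  split_ifs with h <;> push_cast <;> ring

lemma gLam_apply_zero (μ : YoungDiagram) : (gLam μ : LaurentPolynomial ℤ).coeff 0 = 0 := by
  classical
  rw [gLam_apply]
  have hD : (μ.cells.filter (fun c => (c.1 = c.2 ∧ 1 ≤ c.1) ∧ -(c.1 : ℤ) = 0)) = ∅ :=
    Finset.filter_false_of_mem (fun c _ h => by omega)
  rw [hD]
  simp

lemma gLam_apply_one (μ : YoungDiagram) : (gLam μ : LaurentPolynomial ℤ).coeff 1 = 0 := by
  classical
  rw [gLam_apply]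
  have hD : (μ.cells.filter (fun c => (c.1 = c.2 ∧ 1 ≤ c.1) ∧ -(c.1 : ℤ) = 1)) = ∅ :=
    Finset.filter_false_of_mem (fun c _ h => by omega)
  have h2 : ((μ.cells ×ˢ μ.cells).filter
      (fun p => ((p.1.1 : ℤ) - p.2.1 = (p.1.2 : ℤ) - p.2.2
        ∧ (p.1.1 : ℤ) - p.2.1 ≠ 0 ∧ (p.1.1 : ℤ) - p.2.1 ≠ 1)
        ∧ (p.1.1 : ℤ) - p.2.1 = 1)) = ∅ :=
    Finset.filter_false_of_mem (fun p _ h => by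
      obtain ⟨⟨_, _, hne⟩, he⟩ := h; exact hne he)
  have h3 : ((μ.cells ×ˢ μ.cells).filter
      (fun p => ((p.1.1 : ℤ) - p.2.1 + 1 = (p.1.2 : ℤ) - p.2.2
        ∧ (p.1.1 : ℤ) - p.2.1 + 1 ≠ 0 ∧ (p.1.1 : ℤ) - p.2.1 + 1 ≠ 1)
        ∧ (p.1.1 : ℤ) - p.2.1 + 1 = 1)) = ∅ :=
    Finset.filter_false_of_mem (fun p _ h => by
      obtain ⟨⟨_, _, hne⟩, he⟩ := h; exact hne he)
  rw [hD, h2, h3]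
  simp

lemma gLam_symm (μ : YoungDiagram) : ∀ n : ℤ,
    (gLam μ : LaurentPolynomial ℤ).coeff n = (gLam μ).coeff (1 - n) := by
  have aux : ∀ n : ℤ, 2 ≤ n → (gLam μ : LaurentPolynomial ℤ).coeff n = (gLam μ).coeff (1 - n) := by
    intro n hn
    rw [gLam_apply_two_le μ n hn, gLam_apply_neg μ (1 - n) (by omega)]
    rw [show -(1 - n) = n - 1 by ring, show 1 - (1 - n) = n by ring]
    have hkey := key_identity μ (n - 1) (by omega)
    rw [show n - 1 + 1 = n by ring] at hkey
    omega
  intro n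
  rcases le_or_gt 2 n with hn | hn
  · exact aux n hn
  · rcases le_or_gt n (-1) with hn' | hn'
    · have := aux (1 - n) (by omega)
      rw [show 1 - (1 - n) = n by ring] at this
      exact this.symm
    · interval_cases n
      · rw [gLam_apply_zero, show (1 : ℤ) - 0 = 1 by ring, gLam_apply_one]
      · rw [gLam_apply_one, show (1 : ℤ) - 1 = 0 by ring, gLam_apply_zero]


/-- **Lemma.** For every Young diagram `μ` there is a Laurent polynomial `A(t)` with
`g_μ(t) = A(t) + t·A(t⁻¹)`. -/
theorem gLam_eq_A_add_T_mul_invert_A (μ : YoungDiagram) :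
    ∃ A : LaurentPolynomial ℤ, gLam μ = A + T 1 * laurentInvert A :=
  exists_decomp (gLam μ) (gLam_symm μ)
end

section
/- Let λ be a Young diagram. Then the following identity of integers holds: ∏_{(i,j)∈λ, i≠j} (j−i) · ∏_{((i,j),(l,k))∈λ×λ, 1+i−j+k−l≠0} (1+i−j+k−l) = σ(λ) · (∏_{□∈λ} h(□)) · ∏_{((i,j),(l,k))∈λ×λ, i−j+k−l≠0} (i−j+k−l). -/
open Finset

namespace SignedHook

def az (x : ℤ) : ℤ := if x = 0 then 1 else |x|

def ct (c : ℕ × ℕ) : ℤ := (c.2 : ℤ) - c.1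

def A1 (s : Finset (ℕ × ℕ)) : ℤ := ∏ c ∈ s, az (ct c)
def A2 (s : Finset (ℕ × ℕ)) : ℤ := ∏ p ∈ s ×ˢ s, az (1 - ct p.1 + ct p.2)
def A3 (s : Finset (ℕ × ℕ)) : ℤ := ∏ p ∈ s ×ˢ s, az (ct p.2 - ct p.1)
def ff (s : Finset (ℕ × ℕ)) (t : ℤ) : ℤ := ∏ c ∈ s, az (t - ct c)
def Hp (μ : YoungDiagram) : ℤ :=
  ∏ c ∈ μ.cells, ((μ.rowLen c.1 : ℤ) + (μ.colLen c.2 : ℤ) - c.1 - c.2 - 1)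

lemma az_pos (x : ℤ) : 0 < az x := by
  unfold az; split
  · norm_num
  · exact abs_pos.mpr ‹_›
lemma az_ne_zero (x : ℤ) : az x ≠ 0 := (az_pos x).ne'
lemma az_neg (x : ℤ) : az (-x) = az x := by unfold az; simp [neg_eq_zero, abs_neg]
lemma az_of_pos {x : ℤ} (h : 0 < x) : az x = x := by
  unfold az; rw [if_neg h.ne', abs_of_pos h]

lemma prod_az_ne_zero {α : Type*} (s : Finset α) (g : α → ℤ) :
    (∏ x ∈ s, az (g x)) ≠ 0 :=
  Finset.prod_ne_zero_iff.mpr fun x _ => az_ne_zero _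

/-- square insert splitting -/
lemma prod_sq_insert (b : ℕ × ℕ) (s : Finset (ℕ × ℕ)) (hb : b ∉ s)
    (G : (ℕ × ℕ) × (ℕ × ℕ) → ℤ) :
    ∏ p ∈ (insert b s) ×ˢ (insert b s), G p
      = G (b, b) * (∏ y ∈ s, G (b, y)) * (∏ x ∈ s, G (x, b)) * ∏ p ∈ s ×ˢ s, G p := by
  rw [Finset.prod_product, Finset.prod_insert hb]
  rw [Finset.prod_insert hb]
  have h1 : ∀ x ∈ s, (∏ y ∈ insert b s, G (x, y)) = G (x, b) * ∏ y ∈ s, G (x, y) := by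
    intro x _; rw [Finset.prod_insert hb]
  rw [Finset.prod_congr rfl h1, Finset.prod_mul_distrib, Finset.prod_product]
  ring

/-- exchanged-factor lemma -/
lemma prod_swap_factor {m q : ℕ} (hq : q < m) (f g : ℕ → ℤ)
    (hfg : ∀ j, j ≠ q → f j = g j) :
    (∏ j ∈ range m, f j) * g q = (∏ j ∈ range m, g j) * f q := by
  have hmem : q ∈ range m := Finset.mem_range.mpr hq
  rw [← Finset.mul_prod_erase _ f hmem, ← Finset.mul_prod_erase _ g hmem]
  have : ∏ j ∈ (range m).erase q, f j = ∏ j ∈ (range m).erase q, g j :=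
    Finset.prod_congr rfl fun j hj => hfg j (Finset.ne_of_mem_erase hj)
  rw [this]; ring

lemma az_shift (u : ℤ) (m : ℕ) :
    (∏ j ∈ range m, az (u + 1 - j)) * az (u + 1 - m)
      = (∏ j ∈ range m, az (u - j)) * az (u + 1) := by
  induction m with
  | zero => simp
  | succ n ih =>
    rw [Finset.prod_range_succ, Finset.prod_range_succ]
    push_cast
    have e1 : u + 1 - ((n : ℤ) + 1) = u - n := by ring
    rw [e1, ih]
    ring

lemma az_shift_up (v : ℤ) (L : ℕ) :
    (∏ i ∈ range L, az (v + 1 + i)) * az v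
      = (∏ i ∈ range L, az (v + i)) * az (v + L) := by
  induction L with
  | zero => simp
  | succ n ih =>
    rw [Finset.prod_range_succ, Finset.prod_range_succ]
    push_cast
    rw [mul_right_comm, ih]
    have h2 : v + 1 + (n : ℤ) = v + ((n : ℤ) + 1) := by ring
    rw [h2]

lemma prod_desc_succ (q : ℕ) :
    ∏ j ∈ range (q + 1), ((q : ℤ) + 1 - j) = ((q : ℤ) + 1) * ∏ j ∈ range q, ((q : ℤ) - j) := by
  rw [Finset.prod_range_succ' (fun j => ((q : ℤ) + 1 - j)) q]
  push_cast
  rw [mul_comm]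
  congr 1
  apply Finset.prod_congr rfl
  intro j _
  push_cast
  ring
lemma prod_filter_sign {α : Type*} (s : Finset α) (g : α → ℤ) :
    ∏ x ∈ s.filter (fun x => g x ≠ 0), g x
      = (∏ x ∈ s.filter (fun x => g x ≠ 0), (g x).sign) * ∏ x ∈ s, az (g x) := by
  have h1 : ∏ x ∈ s, az (g x) = ∏ x ∈ s.filter (fun x => g x ≠ 0), az (g x) := by
    rw [Finset.prod_filter]
    apply Finset.prod_congr rfl
    intro x _
    by_cases h : g x = 0 <;> simp [h, az]
  rw [h1, ← Finset.prod_mul_distrib]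
  apply Finset.prod_congr rfl
  intro x hx
  have h := (Finset.mem_filter.mp hx).2
  simp [az, h, Int.sign_mul_abs]

lemma sign_sq {x : ℤ} (h : x ≠ 0) : x.sign * x.sign = 1 := by
  rcases x with ((_|n)|n) <;> simp at h ⊢

lemma prod_sign_sq {α : Type*} (s : Finset α) (g : α → ℤ) :
    (∏ x ∈ s.filter (fun x => g x ≠ 0), (g x).sign)
      * (∏ x ∈ s.filter (fun x => g x ≠ 0), (g x).sign) = 1 := by
  rw [← Finset.prod_mul_distrib]
  apply Finset.prod_eq_one
  intro x hx
  exact sign_sq (Finset.mem_filter.mp hx).2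


lemma prod_cells_rows (μ : YoungDiagram) {L : ℕ} (hL : μ.colLen 0 ≤ L) (F : ℕ × ℕ → ℤ) :
    ∏ c ∈ μ.cells, F c = ∏ i ∈ range L, ∏ j ∈ range (μ.rowLen i), F (i, j) := by
  have hcells : μ.cells = (range L).biUnion (fun i => μ.row i) := by
    ext c
    simp only [Finset.mem_biUnion, Finset.mem_range, YoungDiagram.mem_row_iff,
      YoungDiagram.mem_cells]
    constructor
    · intro hc
      refine ⟨c.1, ?_, hc, rfl⟩
      have h0 : (c.1, 0) ∈ μ := μ.up_left_mem le_rfl (Nat.zero_le _) (by simpa using hc)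
      have := YoungDiagram.mem_iff_lt_colLen.mp h0
      omega
    · rintro ⟨i, _, hc, _⟩; exact hc
  rw [hcells, Finset.prod_biUnion]
  · apply Finset.prod_congr rfl
    intro i _
    rw [YoungDiagram.row_eq_prod, Finset.prod_product]
    simp
  · intro a _ b _ hab
    apply Finset.disjoint_left.mpr
    intro c hc hc'
    rw [YoungDiagram.mem_row_iff] at hc hc'
    exact hab (hc.2 ▸ hc'.2 ▸ rfl)

lemma nat_eq_of_lt_iff {m n : ℕ} (h : ∀ j, j < m ↔ j < n) : m = n := by
  have h1 := h m; have h2 := h n; omega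


section corner
variable (μ : YoungDiagram) (hne : μ.cells.Nonempty)
include hne

-- r = last row index, q = last column index in that row
noncomputable def rr (μ : YoungDiagram) : ℕ := μ.colLen 0 - 1
noncomputable def qq (μ : YoungDiagram) : ℕ := μ.rowLen (rr μ) - 1

lemma colLen0_pos : 0 < μ.colLen 0 := by
  obtain ⟨c, hc⟩ := hne
  rw [YoungDiagram.mem_cells] at hc
  have h0 : (0, 0) ∈ μ := μ.up_left_mem (Nat.zero_le _) (Nat.zero_le _) hc
  exact YoungDiagram.mem_iff_lt_colLen.mp h0

lemma colLen0_eq : μ.colLen 0 = rr μ + 1 := by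
  have := colLen0_pos μ hne; unfold rr; omega

lemma rowLen_rr_pos : 0 < μ.rowLen (rr μ) := by
  have h : (rr μ, 0) ∈ μ := YoungDiagram.mem_iff_lt_colLen.mpr (by rw [colLen0_eq μ hne]; omega)
  exact YoungDiagram.mem_iff_lt_rowLen.mp h

lemma rowLen_rr_eq : μ.rowLen (rr μ) = qq μ + 1 := by
  have := rowLen_rr_pos μ hne; unfold qq; omega

lemma b_mem : (rr μ, qq μ) ∈ μ :=
  YoungDiagram.mem_iff_lt_rowLen.mpr (by rw [rowLen_rr_eq μ hne]; omega)

-- every row length is ≤ rowLen 0 etc.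
lemma rowLen_le_q {i : ℕ} (hi : rr μ ≤ i) : μ.rowLen i ≤ qq μ + 1 := by
  rw [← rowLen_rr_eq μ hne]; exact μ.rowLen_anti _ _ hi

lemma colLen_of_le {j : ℕ} (hj : j ≤ qq μ) : μ.colLen j = rr μ + 1 := by
  apply le_antisymm
  · rw [← colLen0_eq μ hne]; exact μ.colLen_anti 0 j (Nat.zero_le _)
  · have : (rr μ, j) ∈ μ := μ.up_left_mem le_rfl hj (b_mem μ hne)
    exact YoungDiagram.mem_iff_lt_colLen.mp this

/-- the diagram with the corner removed -/
noncomputable def nu (μ : YoungDiagram) (hne : μ.cells.Nonempty) : YoungDiagram where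
  cells := μ.cells.erase (rr μ, qq μ)
  isLowerSet := by
    intro x y hyx hx
    simp only [Finset.coe_erase, Set.mem_diff, Finset.mem_coe, YoungDiagram.mem_cells,
      Set.mem_singleton_iff] at hx ⊢
    rw [Prod.le_def] at hyx
    refine ⟨μ.up_left_mem hyx.1 hyx.2 hx.1, ?_⟩
    rintro rfl
    -- y = (rr,qq) ≤ x, x ∈ μ, x ≠ (rr,qq)
    have hx1 : (x.1, x.2) ∈ μ := by simpa using hx.1
    have hk : x.2 < μ.rowLen x.1 := YoungDiagram.mem_iff_lt_rowLen.mp hx1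
    have hk2 : μ.rowLen x.1 ≤ qq μ + 1 := rowLen_le_q μ hne hyx.1
    have hkq : x.2 = qq μ := by have := hyx.2; simp only at this; omega
    have hl : x.1 < μ.colLen x.2 := YoungDiagram.mem_iff_lt_colLen.mp hx1
    rw [hkq, colLen_of_le μ hne le_rfl] at hl
    have hlr : x.1 = rr μ := by have := hyx.1; simp only at this; omega
    exact hx.2 (by rw [← hlr, ← hkq])

lemma nu_cells : (nu μ hne).cells = μ.cells.erase (rr μ, qq μ) := rfl

lemma mem_nu {c : ℕ × ℕ} : c ∈ nu μ hne ↔ c ∈ μ ∧ c ≠ (rr μ, qq μ) := by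
  rw [← YoungDiagram.mem_cells, nu_cells, Finset.mem_erase, ← YoungDiagram.mem_cells, and_comm]

lemma cells_eq_insert : μ.cells = insert (rr μ, qq μ) (nu μ hne).cells := by
  rw [nu_cells, Finset.insert_erase (by rw [YoungDiagram.mem_cells]; exact b_mem μ hne)]

lemma b_not_mem_nu : (rr μ, qq μ) ∉ (nu μ hne).cells := by
  rw [nu_cells]; exact Finset.notMem_erase _ _

lemma nu_rowLen_ne {i : ℕ} (hi : i ≠ rr μ) : (nu μ hne).rowLen i = μ.rowLen i := by
  apply nat_eq_of_lt_iff
  intro j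
  rw [← YoungDiagram.mem_iff_lt_rowLen, ← YoungDiagram.mem_iff_lt_rowLen, mem_nu]
  simp only [ne_eq, Prod.mk.injEq, not_and]
  exact ⟨fun h => h.1, fun h => ⟨h, fun h' => absurd h' hi⟩⟩

lemma nu_rowLen_rr : (nu μ hne).rowLen (rr μ) = qq μ := by
  apply nat_eq_of_lt_iff
  intro j
  rw [← YoungDiagram.mem_iff_lt_rowLen, mem_nu]
  constructor
  · rintro ⟨h1, h2⟩
    have := YoungDiagram.mem_iff_lt_rowLen.mp h1
    rw [rowLen_rr_eq μ hne] at this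
    simp only [ne_eq, Prod.mk.injEq, true_and] at h2
    omega
  · intro hj
    constructor
    · exact YoungDiagram.mem_iff_lt_rowLen.mpr (by rw [rowLen_rr_eq μ hne]; omega)
    · simp only [ne_eq, Prod.mk.injEq, true_and]; omega

lemma nu_colLen_ne {j : ℕ} (hj : j ≠ qq μ) : (nu μ hne).colLen j = μ.colLen j := by
  apply nat_eq_of_lt_iff
  intro i
  rw [← YoungDiagram.mem_iff_lt_colLen, ← YoungDiagram.mem_iff_lt_colLen, mem_nu]
  simp only [ne_eq, Prod.mk.injEq, not_and]
  exact ⟨fun h => h.1, fun h => ⟨h, fun _ h' => absurd h' hj⟩⟩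

lemma nu_colLen_qq : (nu μ hne).colLen (qq μ) = rr μ := by
  apply nat_eq_of_lt_iff
  intro i
  rw [← YoungDiagram.mem_iff_lt_colLen, mem_nu]
  constructor
  · rintro ⟨h1, h2⟩
    have := YoungDiagram.mem_iff_lt_colLen.mp h1
    rw [colLen_of_le μ hne le_rfl] at this
    simp only [ne_eq, Prod.mk.injEq, and_true] at h2
    omega
  · intro hi
    constructor
    · exact μ.up_left_mem (le_of_lt hi) le_rfl (b_mem μ hne)
    · simp only [ne_eq, Prod.mk.injEq, and_true]; omega

end corner
-- the (F) identity
lemma F_identity (ρ : YoungDiagram) (c : ℤ) :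
    ff ρ.cells (c + 1) * ff ρ.cells (c - 1) * az c
      * (∏ i ∈ range (ρ.colLen 0), az (c + 1 + i - ρ.rowLen i))
    = ff ρ.cells c * ff ρ.cells c * az (c + ρ.colLen 0)
      * (∏ i ∈ range (ρ.colLen 0), az (c + i - ρ.rowLen i)) := by
  set L := ρ.colLen 0 with hLdef
  have hff : ∀ t : ℤ, ff ρ.cells t = ∏ i ∈ range L, ∏ j ∈ range (ρ.rowLen i), az (t + i - j) := by
    intro t
    rw [ff, prod_cells_rows ρ le_rfl]
    apply Finset.prod_congr rfl; intro i _
    apply Finset.prod_congr rfl; intro j _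
    congr 1; rw [ct]; push_cast; ring
  have S1 : ff ρ.cells (c + 1) * (∏ i ∈ range L, az (c + 1 + i - ρ.rowLen i))
      = ff ρ.cells c * (∏ i ∈ range L, az (c + 1 + i)) := by
    rw [hff, hff, ← Finset.prod_mul_distrib, ← Finset.prod_mul_distrib]
    apply Finset.prod_congr rfl; intro i _
    have h := az_shift (c + i) (ρ.rowLen i)
    calc (∏ j ∈ range (ρ.rowLen i), az (c + 1 + i - j)) * az (c + 1 + i - ρ.rowLen i)
        = (∏ j ∈ range (ρ.rowLen i), az (c + i + 1 - j)) * az (c + i + 1 - ρ.rowLen i) := by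
          congr 1
          · apply Finset.prod_congr rfl; intro j _; congr 1; ring
          · congr 1; ring
      _ = (∏ j ∈ range (ρ.rowLen i), az (c + i - j)) * az (c + i + 1) := h
      _ = (∏ j ∈ range (ρ.rowLen i), az (c + i - j)) * az (c + 1 + i) := by
          congr 1; congr 1; ring
  have S2 : ff ρ.cells c * (∏ i ∈ range L, az (c + i - ρ.rowLen i))
      = ff ρ.cells (c - 1) * (∏ i ∈ range L, az (c + i)) := by
    rw [hff, hff, ← Finset.prod_mul_distrib, ← Finset.prod_mul_distrib]
    apply Finset.prod_congr rfl; intro i _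
    have h := az_shift (c - 1 + i) (ρ.rowLen i)
    calc (∏ j ∈ range (ρ.rowLen i), az (c + i - j)) * az (c + i - ρ.rowLen i)
        = (∏ j ∈ range (ρ.rowLen i), az (c - 1 + i + 1 - j)) * az (c - 1 + i + 1 - ρ.rowLen i) := by
          congr 1
          · apply Finset.prod_congr rfl; intro j _; congr 1; ring
          · congr 1; ring
      _ = (∏ j ∈ range (ρ.rowLen i), az (c - 1 + i - j)) * az (c - 1 + i + 1) := h
      _ = (∏ j ∈ range (ρ.rowLen i), az (c - 1 + i - j)) * az (c + i) := by
          congr 1; congr 1; ring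
  have S3 : (∏ i ∈ range L, az (c + 1 + i)) * az c
      = (∏ i ∈ range L, az (c + i)) * az (c + L) := az_shift_up c L
  set f1 := ff ρ.cells (c + 1)
  set f0 := ff ρ.cells c
  set fm := ff ρ.cells (c - 1)
  set B1 := ∏ i ∈ range L, az (c + 1 + i - ρ.rowLen i)
  set B0 := ∏ i ∈ range L, az (c + i - ρ.rowLen i)
  set P1 := ∏ i ∈ range L, az (c + 1 + i)
  set P0 := ∏ i ∈ range L, az (c + i)
  have hX : B0 * P0 ≠ 0 :=
    mul_ne_zero (prod_az_ne_zero _ _) (prod_az_ne_zero _ _)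
  apply mul_right_cancel₀ hX
  linear_combination (fm * az c * B0 * P0) * S1 + (f0 * fm * B0 * P0) * S3
    - (f0 * B0 * P0 * az (c + L)) * S2

section main

theorem unsigned_step (μ : YoungDiagram) (hne : μ.cells.Nonempty)
    (IH : A1 (nu μ hne).cells * A2 (nu μ hne).cells = Hp (nu μ hne) * A3 (nu μ hne).cells) :
    A1 μ.cells * A2 μ.cells = Hp μ * A3 μ.cells := by
  set r := rr μ with hr
  set q := qq μ with hq
  set ν := nu μ hne with hν
  set c : ℤ := (q : ℤ) - (r : ℤ) with hc
  -- basic facts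
  have hqr : μ.rowLen r = q + 1 := rowLen_rr_eq μ hne
  have hcol0 : μ.colLen 0 = r + 1 := colLen0_eq μ hne
  have hbmem := b_mem μ hne
  have hbnot := b_not_mem_nu μ hne
  have hins := cells_eq_insert μ hne
  rw [← hν] at hbnot hins
  rw [← hr, ← hq] at hbmem hbnot hins
  -- row lengths ≥ q+1 for i ≤ r
  have hrowge : ∀ i : ℕ, i ≤ r → q + 1 ≤ μ.rowLen i := by
    intro i hi
    rw [← hqr]; exact μ.rowLen_anti i r hi
  have hpos2 : ∀ i : ℕ, i < r → (2 : ℤ) ≤ (μ.rowLen i : ℤ) - i - c := by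
    intro i hi
    have h1 := hrowge i (le_of_lt hi)
    rw [hc]; push_cast; omega
  -- colLen of ν at 0
  have hνcol0 : ν.colLen 0 = if q = 0 then r else r + 1 := by
    by_cases h0 : q = 0
    · rw [if_pos h0]
      have h := nu_colLen_qq μ hne
      have hqq0 : qq μ = 0 := by rw [← hq]; exact h0
      rw [hqq0] at h
      rw [← h0, hq] at h ⊢
      exact h
    · rw [if_neg h0, hν, nu_colLen_ne μ hne (by omega : 0 ≠ qq μ), hcol0]
  have hνrow : ∀ i : ℕ, i < r → ν.rowLen i = μ.rowLen i := by
    intro i hi; exact nu_rowLen_ne μ hne (by omega)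
  have hνrowr : ν.rowLen r = q := nu_rowLen_rr μ hne
  -- ### splitting the three products
  have hct : ct (r, q) = c := by rw [ct, hc]
  have hA1 : A1 μ.cells = az c * A1 ν.cells := by
    rw [A1, hins, Finset.prod_insert hbnot, hct, A1]
  have hA2 : A2 μ.cells = ff ν.cells (c - 1) * ff ν.cells (c + 1) * A2 ν.cells := by
    rw [A2, hins, prod_sq_insert _ _ hbnot]
    dsimp only
    rw [hct]
    have e0 : az (1 - c + c) = 1 := by norm_num [az]
    have e1 : (∏ y ∈ ν.cells, az (1 - c + ct y)) = ff ν.cells (c - 1) := by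
      rw [ff]; apply Finset.prod_congr rfl; intro y _
      rw [← az_neg (c - 1 - ct y)]; congr 1; ring
    have e2 : (∏ x ∈ ν.cells, az (1 - ct x + c)) = ff ν.cells (c + 1) := by
      rw [ff]; apply Finset.prod_congr rfl; intro x _
      congr 1; ring
    rw [e0, e1, e2, A2]; ring
  have hA3 : A3 μ.cells = ff ν.cells c * ff ν.cells c * A3 ν.cells := by
    rw [A3, hins, prod_sq_insert _ _ hbnot]
    dsimp only
    rw [hct]
    have e0 : az (c - c) = 1 := by norm_num [az]
    have e1 : (∏ y ∈ ν.cells, az (ct y - c)) = ff ν.cells c := by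
      rw [ff]; apply Finset.prod_congr rfl; intro y _
      rw [← az_neg (c - ct y)]; congr 1; ring
    have e2 : (∏ x ∈ ν.cells, az (c - ct x)) = ff ν.cells c := by
      rw [ff]
    rw [e0, e1, e2, A3]; ring
  -- ### hook product relation
  set D : ℤ := ∏ i ∈ range r, ((μ.rowLen i : ℤ) - i - c - 1) with hD
  set N : ℤ := ∏ i ∈ range r, ((μ.rowLen i : ℤ) - i - c) with hN
  set Q : ℤ := ∏ j ∈ range q, ((q : ℤ) - j) with hQ
  have HR : Hp μ * D = Hp ν * ((q : ℤ) + 1) * N := by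
    have hμrows : Hp μ = ∏ i ∈ range (r + 1), ∏ j ∈ range (μ.rowLen i),
        ((μ.rowLen i : ℤ) + (μ.colLen j : ℤ) - i - j - 1) :=
      prod_cells_rows μ (le_of_eq hcol0) _
    have hνrows : Hp ν = ∏ i ∈ range (r + 1), ∏ j ∈ range (ν.rowLen i),
        ((ν.rowLen i : ℤ) + (ν.colLen j : ℤ) - i - j - 1) := by
      apply prod_cells_rows ν _ _
      rw [hνcol0]; split <;> omega
    -- row r of μ
    have hPμr : (∏ j ∈ range (μ.rowLen r), ((μ.rowLen r : ℤ) + (μ.colLen j : ℤ) - r - j - 1))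
        = ((q : ℤ) + 1) * Q := by
      rw [hqr, ← prod_desc_succ q]
      apply Finset.prod_congr rfl; intro j hj
      rw [Finset.mem_range] at hj
      rw [colLen_of_le μ hne (by omega : j ≤ qq μ)]
      push_cast; ring
    -- row r of ν
    have hPνr : (∏ j ∈ range (ν.rowLen r), ((ν.rowLen r : ℤ) + (ν.colLen j : ℤ) - r - j - 1))
        = Q := by
      rw [hνrowr, hQ]
      apply Finset.prod_congr rfl; intro j hj
      rw [Finset.mem_range] at hj
      have : ν.colLen j = μ.colLen j := nu_colLen_ne μ hne (by omega)
      rw [this, colLen_of_le μ hne (by omega : j ≤ qq μ)]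
      push_cast; ring
    -- rows i < r
    have hrow_i : ∀ i ∈ range r,
        (∏ j ∈ range (μ.rowLen i), ((μ.rowLen i : ℤ) + (μ.colLen j : ℤ) - i - j - 1))
          * ((μ.rowLen i : ℤ) - i - c - 1)
        = (∏ j ∈ range (ν.rowLen i), ((ν.rowLen i : ℤ) + (ν.colLen j : ℤ) - i - j - 1))
          * ((μ.rowLen i : ℤ) - i - c) := by
      intro i hi
      rw [Finset.mem_range] at hi
      have hri := hνrow i hi
      have hqlt : q < μ.rowLen i := by have := hrowge i (le_of_lt hi); omega
      have hswap := prod_swap_factor hqlt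
        (fun j => ((μ.rowLen i : ℤ) + (μ.colLen j : ℤ) - i - j - 1))
        (fun j => ((μ.rowLen i : ℤ) + (ν.colLen j : ℤ) - i - j - 1))
        (by intro j hj
            have h2 : ν.colLen j = μ.colLen j := nu_colLen_ne μ hne (by rw [← hq]; exact hj)
            rw [h2])
      have hgq : ((μ.rowLen i : ℤ) + (ν.colLen q : ℤ) - i - q - 1)
          = (μ.rowLen i : ℤ) - i - c - 1 := by
        rw [hν, nu_colLen_qq μ hne, ← hr, hc]; push_cast; ring
      have hfq : ((μ.rowLen i : ℤ) + (μ.colLen q : ℤ) - i - q - 1)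
          = (μ.rowLen i : ℤ) - i - c := by
        rw [colLen_of_le μ hne le_rfl, ← hr, hc]; push_cast; ring
      rw [hgq, hfq] at hswap
      rw [hswap, hri]
    -- assemble
    rw [hμrows, hνrows, Finset.prod_range_succ, Finset.prod_range_succ, hPμr, hPνr, hD]
    rw [mul_assoc, mul_comm (((q:ℤ)+1) * Q), ← mul_assoc, ← Finset.prod_mul_distrib]
    rw [Finset.prod_congr rfl hrow_i, Finset.prod_mul_distrib]
    rw [hN]; ring
  -- ### boundary identifications
  have hB1 : (∏ i ∈ range (ν.colLen 0), az (c + 1 + i - ν.rowLen i)) = D := by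
    have hterm : ∀ i ∈ range r, az (c + 1 + i - ν.rowLen i) = (μ.rowLen i : ℤ) - i - c - 1 := by
      intro i hi
      rw [Finset.mem_range] at hi
      rw [hνrow i hi, ← az_neg (c + 1 + i - μ.rowLen i)]
      have h2 := hpos2 i hi
      have : -(c + 1 + (i:ℤ) - μ.rowLen i) = (μ.rowLen i : ℤ) - i - c - 1 := by ring
      rw [this, az_of_pos (by omega)]
    rw [hνcol0]
    by_cases h0 : q = 0
    · rw [if_pos h0, hD]; exact Finset.prod_congr rfl hterm
    · rw [if_neg h0, Finset.prod_range_succ, hνrowr]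
      have hlast : az (c + 1 + r - q) = 1 := by
        have : c + 1 + (r:ℤ) - q = 1 := by rw [hc]; ring
        rw [this]; norm_num [az]
      rw [hlast, mul_one, hD]; exact Finset.prod_congr rfl hterm
  have hB0 : (∏ i ∈ range (ν.colLen 0), az (c + i - ν.rowLen i)) = N := by
    have hterm : ∀ i ∈ range r, az (c + i - ν.rowLen i) = (μ.rowLen i : ℤ) - i - c := by
      intro i hi
      rw [Finset.mem_range] at hi
      rw [hνrow i hi, ← az_neg (c + i - μ.rowLen i)]
      have h2 := hpos2 i hi
      have : -(c + (i:ℤ) - μ.rowLen i) = (μ.rowLen i : ℤ) - i - c := by ring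
      rw [this, az_of_pos (by omega)]
    rw [hνcol0]
    by_cases h0 : q = 0
    · rw [if_pos h0, hN]; exact Finset.prod_congr rfl hterm
    · rw [if_neg h0, Finset.prod_range_succ, hνrowr]
      have hlast : az (c + r - q) = 1 := by
        have : c + (r:ℤ) - q = 0 := by rw [hc]; ring
        rw [this]; norm_num [az]
      rw [hlast, mul_one, hN]; exact Finset.prod_congr rfl hterm
  have hAz : az (c + (ν.colLen 0 : ℤ)) = (q : ℤ) + 1 := by
    rw [hνcol0]
    by_cases h0 : q = 0
    · rw [if_pos h0]
      have : c + (r : ℤ) = 0 := by rw [hc, h0]; push_cast; ring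
      rw [this, h0]; norm_num [az]
    · rw [if_neg h0]
      have : c + ((r + 1 : ℕ) : ℤ) = (q : ℤ) + 1 := by rw [hc]; push_cast; ring
      rw [this, az_of_pos (by positivity)]
  -- ### the (F) identity, specialized
  have Fb : ff ν.cells (c + 1) * ff ν.cells (c - 1) * az c * D
      = ff ν.cells c * ff ν.cells c * (((q : ℤ) + 1) * N) := by
    have h := F_identity ν c
    rw [hB1, hB0, hAz] at h
    rw [h]; ring
  -- ### KEY identity
  have hDpos : (0 : ℤ) < D := by
    rw [hD]; apply Finset.prod_pos
    intro i hi
    rw [Finset.mem_range] at hi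
    have := hpos2 i hi; omega
  have KEY : az c * ff ν.cells (c + 1) * ff ν.cells (c - 1) * Hp ν
      = Hp μ * (ff ν.cells c * ff ν.cells c) := by
    apply mul_right_cancel₀ hDpos.ne'
    linear_combination Hp ν * Fb - (ff ν.cells c * ff ν.cells c) * HR
  -- ### finish
  rw [hA1, hA2, hA3]
  linear_combination (az c * ff ν.cells (c - 1) * ff ν.cells (c + 1)) * IH
    + A3 ν.cells * KEY

theorem unsigned (μ : YoungDiagram) :
    A1 μ.cells * A2 μ.cells = Hp μ * A3 μ.cells := by
  suffices H : ∀ (n : ℕ) (μ : YoungDiagram), μ.cells.card ≤ n →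
      A1 μ.cells * A2 μ.cells = Hp μ * A3 μ.cells from H μ.cells.card μ le_rfl
  intro n
  induction n with
  | zero =>
    intro μ hμ
    have : μ.cells = ∅ := Finset.card_eq_zero.mp (Nat.le_zero.mp hμ)
    simp [A1, A2, A3, Hp, this]
  | succ n ih =>
    intro μ hμ
    by_cases h : μ.cells = ∅
    · simp [A1, A2, A3, Hp, h]
    · have hne : μ.cells.Nonempty := Finset.nonempty_iff_ne_empty.mpr h
      apply unsigned_step μ hne
      apply ih
      have : (nu μ hne).cells.card = μ.cells.card - 1 := by
        rw [nu_cells, Finset.card_erase_of_mem]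
        rw [YoungDiagram.mem_cells]; exact b_mem μ hne
      have hpos : 0 < μ.cells.card := Finset.card_pos.mpr hne
      omega

end main
end SignedHook

/-- The sign `σ(μ) ∈ {±1}`:
`σ(μ) = ∏_{(i,j)∈μ, i≠j} sgn(j−i)
  · ∏_{((i,j),(l,k))∈μ×μ, 1+i−j+k−l≠0} sgn(1+i−j+k−l)
  · ∏_{((i,j),(l,k))∈μ×μ, i−j+k−l≠0} sgn(i−j+k−l)`. -/
def youngSigma (μ : YoungDiagram) : ℤ :=
  (∏ c ∈ μ.cells.filter (fun c => c.1 ≠ c.2), ((c.2 : ℤ) - c.1).sign)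
  * (∏ p ∈ (μ.cells ×ˢ μ.cells).filter
      (fun p => (1 : ℤ) + p.1.1 - p.1.2 + p.2.2 - p.2.1 ≠ 0),
      ((1 : ℤ) + p.1.1 - p.1.2 + p.2.2 - p.2.1).sign)
  * (∏ p ∈ (μ.cells ×ˢ μ.cells).filter
      (fun p => (p.1.1 : ℤ) - p.1.2 + p.2.2 - p.2.1 ≠ 0),
      ((p.1.1 : ℤ) - p.1.2 + p.2.2 - p.2.1).sign)

/-- **Lemma (signed hook-length identity).** For a Young diagram `μ`,
`∏_{(i,j)∈μ, i≠j} (j−i) · ∏_{((i,j),(l,k))∈μ×μ, 1+i−j+k−l≠0} (1+i−j+k−l)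
  = σ(μ) · (∏_{□∈μ} h(□)) · ∏_{((i,j),(l,k))∈μ×μ, i−j+k−l≠0} (i−j+k−l)`,
where `h(i,j) = μ_i + μ̄_j − i − j − 1` is the hook length. -/
theorem youngDiagram_signed_hook_identity (μ : YoungDiagram) :
    (∏ c ∈ μ.cells.filter (fun c => c.1 ≠ c.2), ((c.2 : ℤ) - c.1))
      * (∏ p ∈ (μ.cells ×ˢ μ.cells).filter
          (fun p => (1 : ℤ) + p.1.1 - p.1.2 + p.2.2 - p.2.1 ≠ 0),
          ((1 : ℤ) + p.1.1 - p.1.2 + p.2.2 - p.2.1))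
    = youngSigma μ
      * (∏ c ∈ μ.cells, ((μ.rowLen c.1 : ℤ) + (μ.colLen c.2 : ℤ) - c.1 - c.2 - 1))
      * (∏ p ∈ (μ.cells ×ˢ μ.cells).filter
          (fun p => (p.1.1 : ℤ) - p.1.2 + p.2.2 - p.2.1 ≠ 0),
          ((p.1.1 : ℤ) - p.1.2 + p.2.2 - p.2.1)) := by
  classical
  have key := SignedHook.unsigned μ
  set S1 := ∏ c ∈ μ.cells.filter (fun c => c.1 ≠ c.2), ((c.2 : ℤ) - c.1).sign with hS1
  set S2 := ∏ p ∈ (μ.cells ×ˢ μ.cells).filter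
      (fun p => (1 : ℤ) + p.1.1 - p.1.2 + p.2.2 - p.2.1 ≠ 0),
      ((1 : ℤ) + p.1.1 - p.1.2 + p.2.2 - p.2.1).sign with hS2
  set S3 := ∏ p ∈ (μ.cells ×ˢ μ.cells).filter
      (fun p => (p.1.1 : ℤ) - p.1.2 + p.2.2 - p.2.1 ≠ 0),
      ((p.1.1 : ℤ) - p.1.2 + p.2.2 - p.2.1).sign with hS3
  -- first product
  have hfilter1 : μ.cells.filter (fun c => c.1 ≠ c.2)
      = μ.cells.filter (fun c => ((c.2 : ℤ) - (c.1 : ℤ)) ≠ 0) := by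
    apply Finset.filter_congr
    intro c _
    simp only [ne_eq, sub_eq_zero]
    constructor
    · intro h h'; exact h (by exact_mod_cast h'.symm)
    · intro h h'; exact h (by exact_mod_cast h'.symm)
  have h1 : (∏ c ∈ μ.cells.filter (fun c => c.1 ≠ c.2), ((c.2 : ℤ) - c.1))
      = S1 * SignedHook.A1 μ.cells := by
    rw [hfilter1, SignedHook.prod_filter_sign μ.cells (fun c => ((c.2 : ℤ) - (c.1 : ℤ)))]
    rw [hS1, hfilter1]
    rfl
  have h2 : (∏ p ∈ (μ.cells ×ˢ μ.cells).filter
        (fun p => (1 : ℤ) + p.1.1 - p.1.2 + p.2.2 - p.2.1 ≠ 0),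
        ((1 : ℤ) + p.1.1 - p.1.2 + p.2.2 - p.2.1))
      = S2 * SignedHook.A2 μ.cells := by
    rw [SignedHook.prod_filter_sign (μ.cells ×ˢ μ.cells)
      (fun p => (1 : ℤ) + p.1.1 - p.1.2 + p.2.2 - p.2.1)]
    congr 1
    apply Finset.prod_congr rfl
    intro p _
    congr 1
    rw [SignedHook.ct, SignedHook.ct]
    ring
  have h3 : (∏ p ∈ (μ.cells ×ˢ μ.cells).filter
        (fun p => (p.1.1 : ℤ) - p.1.2 + p.2.2 - p.2.1 ≠ 0),
        ((p.1.1 : ℤ) - p.1.2 + p.2.2 - p.2.1))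
      = S3 * SignedHook.A3 μ.cells := by
    rw [SignedHook.prod_filter_sign (μ.cells ×ˢ μ.cells)
      (fun p => (p.1.1 : ℤ) - p.1.2 + p.2.2 - p.2.1)]
    congr 1
    apply Finset.prod_congr rfl
    intro p _
    congr 1
    rw [SignedHook.ct, SignedHook.ct]
    ring
  have hsq : S3 * S3 = 1 := SignedHook.prod_sign_sq (μ.cells ×ˢ μ.cells)
    (fun p => (p.1.1 : ℤ) - p.1.2 + p.2.2 - p.2.1)
  have hHp : (∏ c ∈ μ.cells, ((μ.rowLen c.1 : ℤ) + (μ.colLen c.2 : ℤ) - c.1 - c.2 - 1))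
      = SignedHook.Hp μ := rfl
  rw [h1, h2, h3, hHp, youngSigma, ← hS1, ← hS2, ← hS3]
  linear_combination (S1 * S2) * key
    - (S1 * S2 * SignedHook.Hp μ * SignedHook.A3 μ.cells) * hsq
end

section
/- Let λ be a Young diagram. Then the following identity of natural numbers holds: ∏_{(i,j)∈λ, i≠j} |j−i| · ∏_{((i,j),(l,k))∈λ×λ, 1+i−j+k−l≠0} |1+i−j+k−l| = (∏_{□∈λ} h(□)) · ∏_{((i,j),(l,k))∈λ×λ, i−j+k−l≠0} |i−j+k−l|. -/
open Finset

namespace YDHook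

variable (μ : YoungDiagram)

/-- `f i = λ_i - i`. -/
def f (i : ℕ) : ℤ := (μ.rowLen i : ℤ) - i

/-- `fb j = λ̄_j - j`. -/
def fb (j : ℕ) : ℤ := (μ.colLen j : ℤ) - j

def Bead (x : ℤ) : Prop := ∃ i, f μ i = x

noncomputable instance : DecidablePred (Bead μ) := Classical.decPred _

noncomputable def u (x : ℤ) : ℤ := if Bead μ x then 1 else 0

noncomputable def N (c : ℤ) : ℕ :=
  (μ.cells.filter (fun x => (x.2 : ℤ) - x.1 = c)).card

noncomputable def Dd (e : ℤ) : ℕ :=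
  ((μ.cells ×ˢ μ.cells).filter
    (fun p => ((p.2.2 : ℤ) - p.2.1) - ((p.1.2 : ℤ) - p.1.1) = e)).card

noncomputable def Hk (m : ℕ) : ℕ :=
  (μ.cells.filter (fun x => μ.rowLen x.1 + μ.colLen x.2 - x.1 - x.2 - 1 = m)).card

variable {μ}

lemma mem_cells_iff_f {i j : ℕ} : (i, j) ∈ μ.cells ↔ (j : ℤ) < (μ.rowLen i : ℤ) := by
  rw [YoungDiagram.mem_cells, YoungDiagram.mem_iff_lt_rowLen]
  exact_mod_cast Iff.rfl

lemma mem_cells_iff_fb {i j : ℕ} : (i, j) ∈ μ.cells ↔ (i : ℤ) < (μ.colLen j : ℤ) := by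
  rw [YoungDiagram.mem_cells, YoungDiagram.mem_iff_lt_colLen]
  exact_mod_cast Iff.rfl

lemma cell_lt {x : ℕ × ℕ} (hx : x ∈ μ.cells) :
    (x.2 : ℤ) < (μ.rowLen x.1 : ℤ) ∧ (x.1 : ℤ) < (μ.colLen x.2 : ℤ) :=
  ⟨mem_cells_iff_f.1 hx, mem_cells_iff_fb.1 hx⟩

lemma f_anti : ∀ {i j : ℕ}, i ≤ j → f μ j ≤ f μ i := by
  intro i j hij
  have := μ.rowLen_anti i j hij
  unfold f; omega

lemma f_strictAnti : ∀ {i j : ℕ}, i < j → f μ j < f μ i := by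
  intro i j hij
  have := μ.rowLen_anti i j (le_of_lt hij)
  unfold f; omega

lemma f_inj : ∀ {i j : ℕ}, f μ i = f μ j → i = j := by
  intro i j h
  rcases lt_trichotomy i j with h1 | h1 | h1
  · exact absurd h (ne_of_gt (f_strictAnti h1))
  · exact h1
  · exact absurd h (ne_of_lt (f_strictAnti h1))

lemma fb_strictAnti : ∀ {i j : ℕ}, i < j → fb μ j < fb μ i := by
  intro i j hij
  have := μ.colLen_anti i j (le_of_lt hij)
  unfold fb; omega

lemma fb_inj : ∀ {i j : ℕ}, fb μ i = fb μ j → i = j := by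
  intro i j h
  rcases lt_trichotomy i j with h1 | h1 | h1
  · exact absurd h (ne_of_gt (fb_strictAnti h1))
  · exact h1
  · exact absurd h (ne_of_lt (fb_strictAnti h1))

lemma f_le_W (i : ℕ) : f μ i ≤ (μ.rowLen 0 : ℤ) := by
  have := μ.rowLen_anti 0 i (Nat.zero_le i)
  unfold f; omega

lemma rowLen_eq_zero_of_ge {i : ℕ} (h : μ.colLen 0 ≤ i) : μ.rowLen i = 0 := by
  by_contra hne
  have : (i, 0) ∈ μ.cells := mem_cells_iff_f.2 (by push_cast; omega)
  have := mem_cells_iff_fb.1 this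
  push_cast at this; omega

lemma bead_of_le {x : ℤ} (h : x ≤ -(μ.colLen 0 : ℤ)) : Bead μ x := by
  refine ⟨(-x).toNat, ?_⟩
  have h0 : (0:ℤ) ≤ -x := by
    have : (0:ℤ) ≤ (μ.colLen 0 : ℤ) := by positivity
    omega
  have hge : μ.colLen 0 ≤ (-x).toNat := by omega
  have := rowLen_eq_zero_of_ge hge
  unfold f; rw [this]; push_cast; omega

/-- membership from `f i + fb j ≥ 2` -/
lemma mem_of_two_le {i j : ℕ} (h : 2 ≤ f μ i + fb μ j) : (i, j) ∈ μ.cells := by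
  by_contra hn
  have h1 : ¬ ((j : ℤ) < (μ.rowLen i : ℤ)) := fun hh => hn (mem_cells_iff_f.2 hh)
  have h2 : ¬ ((i : ℤ) < (μ.colLen j : ℤ)) := fun hh => hn (mem_cells_iff_fb.2 hh)
  unfold f fb at h; omega

/-- exclusivity: a value cannot be both a bead and a cobead. -/
lemma bead_not_cobead {x : ℤ} {i j : ℕ} (hi : f μ i = x) (hj : fb μ j = 1 - x) : False := by
  by_cases hmem : (i, j) ∈ μ.cells
  · have h1 := mem_cells_iff_f.1 hmem
    have h2 := mem_cells_iff_fb.1 hmem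
    unfold f at hi; unfold fb at hj; omega
  · have h1 : ¬ ((j : ℤ) < (μ.rowLen i : ℤ)) := fun hh => hmem (mem_cells_iff_f.2 hh)
    have h2 : ¬ ((i : ℤ) < (μ.colLen j : ℤ)) := fun hh => hmem (mem_cells_iff_fb.2 hh)
    unfold f at hi; unfold fb at hj; omega

/-- exhaustiveness -/
lemma cobead_of_not_bead {x : ℤ} (h : ¬ Bead μ x) : ∃ j, fb μ j = 1 - x := by
  by_cases hx : (μ.rowLen 0 : ℤ) < x
  · refine ⟨(x - 1).toNat, ?_⟩
    have h0 : (0:ℤ) ≤ x - 1 := by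
      have : (0:ℤ) ≤ (μ.rowLen 0 : ℤ) := by positivity
      omega
    have hge : μ.rowLen 0 ≤ (x-1).toNat := by omega
    have hc : μ.colLen ((x-1).toNat) = 0 := by
      by_contra hne
      have : (0, (x-1).toNat) ∈ μ.cells := mem_cells_iff_fb.2 (by push_cast; omega)
      have := mem_cells_iff_f.1 this
      push_cast at this; omega
    unfold fb; rw [hc]; push_cast; omega
  · push_neg at hx
    have hex : ∃ i, f μ i < x := by
      refine ⟨μ.rowLen 0 + (-x).toNat + 1, ?_⟩
      have hr := μ.rowLen_anti 0 (μ.rowLen 0 + (-x).toNat + 1) (Nat.zero_le _)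
      unfold f
      push_cast
      omega
    classical
    set i := Nat.find hex with hidef
    have hfi : f μ i < x := Nat.find_spec hex
    have hipos : 0 < i := by
      rcases Nat.eq_zero_or_pos i with h0 | h0
      · exfalso
        have : f μ 0 < x := by rw [← h0]; exact hfi
        unfold f at this; push_cast at this; omega
      · exact h0
    have hprev : ¬ f μ (i-1) < x := Nat.find_min hex (by omega)
    push_neg at hprev
    have hprev' : x + 1 ≤ f μ (i-1) := by
      rcases lt_or_eq_of_le hprev with h1 | h1
      · omega
      · exact absurd ⟨i-1, h1.symm⟩ h
    have hfi' : f μ i ≤ x - 1 := by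
      have : f μ i ≠ x := fun hh => h ⟨i, hh⟩
      omega
    have hj0 : (0:ℤ) ≤ x + i - 1 := by
      have : (0:ℤ) ≤ (μ.rowLen i : ℤ) := by positivity
      unfold f at hfi'; omega
    refine ⟨(x + i - 1).toNat, ?_⟩
    have hcol : (μ.colLen ((x + i - 1).toNat) : ℤ) = i := by
      have hub : ¬ ((i : ℤ) < (μ.colLen ((x + i - 1).toNat) : ℤ)) := by
        intro hlt
        have hmem : (i, (x + i - 1).toNat) ∈ μ.cells := mem_cells_iff_fb.2 hlt
        have := mem_cells_iff_f.1 hmem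
        unfold f at hfi'
        omega
      have hlb : ((i:ℤ) - 1) < (μ.colLen ((x + i - 1).toNat) : ℤ) := by
        have hmem : (i - 1, (x + i - 1).toNat) ∈ μ.cells := by
          apply mem_cells_iff_f.2
          unfold f at hprev'
          push_cast
          omega
        have := mem_cells_iff_fb.1 hmem
        push_cast at this
        omega
      omega
    unfold fb
    rw [hcol]
    omega

/-! ### The counting function `A` -/

lemma exists_f_lt (μ : YoungDiagram) (x : ℤ) : ∃ i, f μ i < x := by
  refine ⟨μ.rowLen 0 + (1-x).toNat + 1, ?_⟩
  have hr := μ.rowLen_anti 0 (μ.rowLen 0 + (1-x).toNat + 1) (Nat.zero_le _)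
  unfold f
  push_cast
  omega

noncomputable def A (μ : YoungDiagram) (x : ℤ) : ℕ := Nat.find (exists_f_lt μ x)

lemma lt_A_iff {x : ℤ} {i : ℕ} : i < A μ x ↔ x ≤ f μ i := by
  constructor
  · intro h
    have := Nat.find_min (exists_f_lt μ x) h
    omega
  · intro h
    by_contra hn
    push_neg at hn
    have hs : f μ (A μ x) < x := Nat.find_spec (exists_f_lt μ x)
    have := f_anti (μ := μ) hn
    omega

lemma A_succ (c : ℤ) : A μ c = A μ (c+1) + (if Bead μ c then 1 else 0) := by
  classical
  have hmono : A μ (c+1) ≤ A μ c := by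
    by_contra hn
    push_neg at hn
    have h1 : c + 1 ≤ f μ (A μ c) := lt_A_iff.1 hn
    have h2 : f μ (A μ c) < c := Nat.find_spec (exists_f_lt μ c)
    omega
  by_cases hb : Bead μ c
  · rw [if_pos hb]
    obtain ⟨i, hi⟩ := hb
    have h1 : i < A μ c := lt_A_iff.2 (by omega)
    have h2 : ¬ i < A μ (c+1) := by
      intro hh
      have := lt_A_iff.1 hh
      omega
    have hub : A μ c ≤ A μ (c+1) + 1 := by
      by_contra hn
      push_neg at hn
      have ha : c ≤ f μ (A μ (c+1) + 1) := lt_A_iff.1 (by omega)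
      have hb2 : f μ (A μ (c+1)) < c + 1 := Nat.find_spec (exists_f_lt μ (c+1))
      have := f_strictAnti (μ := μ) (show A μ (c+1) < A μ (c+1) + 1 by omega)
      omega
    omega
  · rw [if_neg hb]
    have : A μ c ≤ A μ (c+1) := by
      by_contra hn
      push_neg at hn
      have h1 : c ≤ f μ (A μ (c+1)) := lt_A_iff.1 hn
      have h2 : f μ (A μ (c+1)) < c + 1 := Nat.find_spec (exists_f_lt μ (c+1))
      have : f μ (A μ (c+1)) = c := by omega
      exact hb ⟨_, this⟩
    omega

lemma toNat_le_A (c : ℤ) : (-c).toNat ≤ A μ (c+1) := by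
  rcases le_or_gt c (-1) with h | h
  · have h1 : (-c).toNat - 1 < A μ (c+1) := by
      apply lt_A_iff.2
      have : (0:ℤ) ≤ (μ.rowLen ((-c).toNat - 1) : ℤ) := by positivity
      unfold f
      omega
    omega
  · have : (-c).toNat = 0 := by omega
    omega

lemma N_add_toNat (c : ℤ) : N μ c + (-c).toNat = A μ (c+1) := by
  classical
  have hcard : N μ c = (Finset.Ico ((-c).toNat) (A μ (c+1))).card := by
    unfold N
    refine Finset.card_nbij' (fun x => x.1) (fun i => (i, ((i:ℤ) + c).toNat)) ?_ ?_ ?_ ?_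
    · intro x hx
      simp only [Finset.mem_coe, Finset.mem_filter] at hx
      obtain ⟨hx1, hx2⟩ := hx
      have hx1' : ((x.2:ℤ)) < (μ.rowLen x.1 : ℤ) := (cell_lt hx1).1
      simp only [Finset.mem_coe, Finset.mem_Ico]
      constructor
      · omega
      · apply lt_A_iff.2
        unfold f
        omega
    · intro i hi
      simp only [Finset.mem_coe, Finset.mem_Ico] at hi
      have hf : c + 1 ≤ f μ i := lt_A_iff.1 hi.2
      have hc0 : (0:ℤ) ≤ (i:ℤ) + c := by omega
      simp only [Finset.mem_coe, Finset.mem_filter]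
      constructor
      · apply mem_cells_iff_f.2
        unfold f at hf
        push_cast
        omega
      · push_cast
        omega
    · intro x hx
      simp only [Finset.mem_coe, Finset.mem_filter] at hx
      have : ((x.2 : ℤ)) = (x.1 : ℤ) + c := by omega
      have h2 : ((x.1:ℤ) + c).toNat = x.2 := by omega
      simp [h2]
    · intro i hi
      simp
  rw [hcard, Nat.card_Ico]
  have := toNat_le_A (μ := μ) c
  omega

lemma K1 (c : ℤ) : (N μ c : ℤ) - (N μ (c-1) : ℤ)
    = (if c ≤ 0 then 1 else 0) - (if Bead μ c then 1 else 0) := by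
  have h1 := N_add_toNat (μ := μ) c
  have h2 := N_add_toNat (μ := μ) (c-1)
  have h3 := A_succ (μ := μ) c
  have h4 : c - 1 + 1 = c := by ring
  rw [h4] at h2
  have h6 : (-(c-1)) = 1 - c := by ring
  rw [h6] at h2
  by_cases hb : Bead μ c <;> rcases le_or_gt c 0 with hc | hc <;>
    simp only [hb, hc, if_true, if_false, if_pos, if_neg, not_lt, not_le,
      show ¬ (c:ℤ) ≤ 0 ↔ 0 < c from not_le] at h3 ⊢ <;>
    omega

lemma Spt (y : ℤ) : (N μ (y+1) : ℤ) + (N μ (y-1) : ℤ) - 2 * (N μ y : ℤ)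
    = u μ y - u μ (y+1) - (if y = 0 then 1 else 0) := by
  have k1 := K1 (μ := μ) (y+1)
  have k2 := K1 (μ := μ) y
  have e1 : (y+1) - 1 = y := by ring
  rw [e1] at k1
  unfold u
  split_ifs at k1 k2 ⊢ <;> omega

/-! ### Interval sum helpers -/

lemma sum_Ioc_split (A₀ B₀ C₀ : ℤ) (h : A₀ ≤ B₀) (h2 : B₀ ≤ C₀) (g : ℤ → ℤ) :
    ∑ c ∈ Finset.Ioc A₀ C₀, g c = ∑ c ∈ Finset.Ioc A₀ B₀, g c + ∑ c ∈ Finset.Ioc B₀ C₀, g c := by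
  rw [← Finset.Ioc_union_Ioc_eq_Ioc h h2, Finset.sum_union]
  rw [Finset.disjoint_left]
  intro a ha hb
  simp only [Finset.mem_Ioc] at ha hb
  omega

lemma sum_Ioc_singleton (a : ℤ) (g : ℤ → ℤ) :
    ∑ c ∈ Finset.Ioc (a-1) a, g c = g a := by
  have : Finset.Ioc (a-1) a = {a} := by
    ext x; simp only [Finset.mem_Ioc, Finset.mem_singleton]; omega
  rw [this, Finset.sum_singleton]

/-! ### Content bounds, vanishing of N -/

lemma content_bounds {x : ℕ × ℕ} (hx : x ∈ μ.cells) :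
    -(μ.colLen 0 : ℤ) < (x.2 : ℤ) - x.1 ∧ (x.2 : ℤ) - x.1 < (μ.rowLen 0 : ℤ) := by
  have h1 := (cell_lt hx).1
  have h2 := (cell_lt hx).2
  have h3 := μ.rowLen_anti 0 x.1 (Nat.zero_le _)
  have h4 := μ.colLen_anti 0 x.2 (Nat.zero_le _)
  omega

lemma N_zero {c : ℤ} (h : c ≤ -(μ.colLen 0 : ℤ) ∨ (μ.rowLen 0 : ℤ) ≤ c) : N μ c = 0 := by
  unfold N
  rw [Finset.card_eq_zero, Finset.filter_eq_empty_iff]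
  intro x hx
  have := content_bounds (μ := μ) hx
  omega

/-! ### Hook lemmas -/

lemma hook_cast {x : ℕ × ℕ} (hx : x ∈ μ.cells) :
    ((μ.rowLen x.1 + μ.colLen x.2 - x.1 - x.2 - 1 : ℕ) : ℤ) = f μ x.1 + fb μ x.2 - 1 := by
  have h1 := (cell_lt hx).1
  have h2 := (cell_lt hx).2
  unfold f fb
  omega

lemma hook_pos {x : ℕ × ℕ} (hx : x ∈ μ.cells) :
    1 ≤ μ.rowLen x.1 + μ.colLen x.2 - x.1 - x.2 - 1 := by
  have h1 := (cell_lt hx).1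
  have h2 := (cell_lt hx).2
  omega

/-! ### Dd lemmas -/

lemma Dd_eq_sum (e : ℤ) : Dd μ e = ∑ x ∈ μ.cells, N μ ((x.2 : ℤ) - x.1 + e) := by
  classical
  unfold Dd
  rw [Finset.card_eq_sum_card_fiberwise
    (f := Prod.fst) (t := μ.cells)
    (fun p hp => (Finset.mem_product.1 (Finset.mem_filter.1 hp).1).1)]
  apply Finset.sum_congr rfl
  intro x hx
  unfold N
  refine Finset.card_nbij' (fun p => p.2) (fun y => (x, y)) ?_ ?_ ?_ ?_
  · intro p hp
    simp only [Finset.mem_coe, Finset.mem_filter, Finset.mem_product] at hp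
    obtain ⟨⟨⟨hp1, hp2⟩, hq⟩, hfst⟩ := hp
    have e1 : (p.1.1 : ℤ) = x.1 := by rw [hfst]
    have e2 : (p.1.2 : ℤ) = x.2 := by rw [hfst]
    simp only [Finset.mem_coe, Finset.mem_filter]
    exact ⟨hp2, by omega⟩
  · intro y hy
    simp only [Finset.mem_coe, Finset.mem_filter] at hy
    simp only [Finset.mem_coe, Finset.mem_filter, Finset.mem_product]
    refine ⟨⟨⟨hx, hy.1⟩, ?_⟩, trivial⟩
    show ((y.2:ℤ) - y.1) - ((x.2:ℤ) - x.1) = _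
    omega
  · intro p hp
    simp only [Finset.mem_coe, Finset.mem_filter] at hp
    exact Prod.ext hp.2.symm rfl
  · intro y hy
    rfl

lemma Dd_symm (e : ℤ) : Dd μ (-e) = Dd μ e := by
  classical
  unfold Dd
  refine Finset.card_nbij' (fun p => (p.2, p.1)) (fun p => (p.2, p.1)) ?_ ?_ ?_ ?_
  · intro p hp
    simp only [Finset.mem_coe, Finset.mem_filter, Finset.mem_product] at hp ⊢
    refine ⟨⟨hp.1.2, hp.1.1⟩, ?_⟩
    show ((p.1.2:ℤ) - p.1.1) - ((p.2.2:ℤ) - p.2.1) = _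
    omega
  · intro p hp
    simp only [Finset.mem_coe, Finset.mem_filter, Finset.mem_product] at hp ⊢
    refine ⟨⟨hp.1.2, hp.1.1⟩, ?_⟩
    show ((p.1.2:ℤ) - p.1.1) - ((p.2.2:ℤ) - p.2.1) = _
    omega
  · intro p _; rfl
  · intro p _; rfl

/-! ### F2 : `N` as a count of beads above level m -/

lemma N_card {m : ℕ} (hm : 1 ≤ m) {B₀ : ℤ} (hB : (μ.rowLen 0 : ℤ) ≤ B₀) :
    N μ (m : ℤ) = ((Finset.Ioc (0:ℤ) B₀).filter (fun c => Bead μ (c + m))).card := by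
  classical
  unfold N
  refine Finset.card_bij (fun x _ => f μ x.1 - m) ?_ ?_ ?_
  · intro x hx
    simp only [Finset.mem_filter] at hx
    obtain ⟨hx1, hx2⟩ := hx
    have h1 := (cell_lt hx1).1
    have hfW := f_le_W (μ := μ) x.1
    simp only [Finset.mem_filter, Finset.mem_Ioc]
    refine ⟨⟨by unfold f; omega, by unfold f at *; omega⟩, ⟨x.1, by ring⟩⟩
  · intro x1 hx1 x2 hx2 heq
    simp only [Finset.mem_filter] at hx1 hx2
    have heq' : f μ x1.1 - (m:ℤ) = f μ x2.1 - (m:ℤ) := heq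
    have hf : f μ x1.1 = f μ x2.1 := by omega
    have h1 : x1.1 = x2.1 := f_inj hf
    have h2 : x1.2 = x2.2 := by omega
    exact Prod.ext h1 h2
  · intro c hc
    simp only [Finset.mem_filter, Finset.mem_Ioc] at hc
    obtain ⟨⟨hc1, hc2⟩, ⟨i, hi⟩⟩ := hc
    have hm1 : (1:ℤ) ≤ (m:ℤ) := by exact_mod_cast hm
    have hmem : (i, i + m) ∈ μ.cells := by
      apply mem_cells_iff_f.2
      unfold f at hi
      push_cast
      omega
    refine ⟨(i, i + m), Finset.mem_filter.2 ⟨hmem, by push_cast; omega⟩, by dsimp only; omega⟩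

/-! ### F1 : hooks as bead/gap pairs -/

lemma Hk_card {m : ℕ} (hm : 1 ≤ m) {A₀ B₀ : ℤ}
    (hA : A₀ ≤ -(μ.colLen 0 : ℤ)) (hB : (μ.rowLen 0 : ℤ) ≤ B₀) :
    Hk μ m = ((Finset.Ioc A₀ B₀).filter (fun c => ¬ Bead μ c ∧ Bead μ (c + m))).card := by
  classical
  unfold Hk
  refine Finset.card_bij (fun x _ => f μ x.1 - m) ?_ ?_ ?_
  · intro x hx
    simp only [Finset.mem_filter] at hx
    obtain ⟨hx1, hx2⟩ := hx
    have hcast := hook_cast (μ := μ) hx1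
    rw [hx2] at hcast
    have hm1 : (1:ℤ) ≤ (m:ℤ) := by exact_mod_cast hm
    have hfW := f_le_W (μ := μ) x.1
    have hnot : ¬ Bead μ (f μ x.1 - m) := by
      rintro ⟨i', hi'⟩
      exact bead_not_cobead hi' (show fb μ x.2 = 1 - (f μ x.1 - m) by omega)
    have hlow : A₀ < f μ x.1 - m := by
      by_contra hcon
      push_neg at hcon
      exact hnot (bead_of_le (by omega))
    simp only [Finset.mem_filter, Finset.mem_Ioc]
    exact ⟨⟨hlow, by omega⟩, hnot, ⟨x.1, by ring⟩⟩
  · intro x1 hx1 x2 hx2 heq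
    simp only [Finset.mem_filter] at hx1 hx2
    have hcast1 := hook_cast (μ := μ) hx1.1
    rw [hx1.2] at hcast1
    have hcast2 := hook_cast (μ := μ) hx2.1
    rw [hx2.2] at hcast2
    have heq' : f μ x1.1 - (m:ℤ) = f μ x2.1 - (m:ℤ) := heq
    have hf : f μ x1.1 = f μ x2.1 := by omega
    have h1 : x1.1 = x2.1 := f_inj hf
    have hb : fb μ x1.2 = fb μ x2.2 := by omega
    have h2 : x1.2 = x2.2 := fb_inj hb
    exact Prod.ext h1 h2
  · intro c hc
    simp only [Finset.mem_filter, Finset.mem_Ioc] at hc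
    obtain ⟨⟨hc1, hc2⟩, hnb, ⟨i, hi⟩⟩ := hc
    obtain ⟨j, hj⟩ := cobead_of_not_bead hnb
    have hm1 : (1:ℤ) ≤ (m:ℤ) := by exact_mod_cast hm
    have hmem : (i, j) ∈ μ.cells := mem_of_two_le (by omega)
    have hcast := hook_cast (μ := μ) hmem
    have hhook : μ.rowLen (i,j).1 + μ.colLen (i,j).2 - (i,j).1 - (i,j).2 - 1 = m := by
      have : ((μ.rowLen (i,j).1 + μ.colLen (i,j).2 - (i,j).1 - (i,j).2 - 1 : ℕ) : ℤ) = (m:ℤ) := by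
        rw [hcast]; dsimp only; omega
      exact_mod_cast this
    refine ⟨(i, j), Finset.mem_filter.2 ⟨hmem, hhook⟩, by dsimp only; omega⟩

/-! ### The main counting identity -/

lemma main (μ : YoungDiagram) {m : ℕ} (hm : 1 ≤ m) :
    N μ (m:ℤ) + N μ (-(m:ℤ)) + Dd μ ((m:ℤ)-1) + Dd μ (-((m:ℤ)+1))
      = Hk μ m + Dd μ (m:ℤ) + Dd μ (-(m:ℤ)) := by
  classical
  have hm1 : (1:ℤ) ≤ (m:ℤ) := by exact_mod_cast hm
  have hL0 : (0:ℤ) ≤ (μ.colLen 0 : ℤ) := by positivity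
  have hW0 : (0:ℤ) ≤ (μ.rowLen 0 : ℤ) := by positivity
  set L : ℤ := (μ.colLen 0 : ℤ) with hLdef
  set W : ℤ := (μ.rowLen 0 : ℤ) with hWdef
  set A₀ : ℤ := -L - m - 2 with hAdef
  set B₀ : ℤ := W + m + 2 with hBdef
  have hA0 : A₀ ≤ 0 := by omega
  have hB0 : (0:ℤ) ≤ B₀ := by omega
  have hAL : A₀ ≤ -L := by omega
  have hBW : W ≤ B₀ := by omega
  -- contents land in the window
  have hct : ∀ x ∈ μ.cells, ((x.2:ℤ) - x.1) ∈ Finset.Ioc A₀ B₀ := by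
    intro x hx
    have h := content_bounds (μ := μ) hx
    rw [Finset.mem_Ioc]
    omega
  -- Dd as a sum over cells
  have hDd : ∀ e : ℤ, (Dd μ e : ℤ) = ∑ x ∈ μ.cells, (N μ ((x.2:ℤ) - x.1 + e) : ℤ) := by
    intro e
    rw [Dd_eq_sum (μ := μ) e]
    push_cast
    rfl
  -- step: second difference of Dd
  have h2 : (Dd μ ((m:ℤ)+1) : ℤ) + (Dd μ ((m:ℤ)-1) : ℤ) - 2 * (Dd μ (m:ℤ) : ℤ)
      = (∑ x ∈ μ.cells, (u μ ((x.2:ℤ) - x.1 + m) - u μ ((x.2:ℤ) - x.1 + m + 1)))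
        - (N μ (-(m:ℤ)) : ℤ) := by
    rw [hDd, hDd, hDd]
    have e1 : ∀ x ∈ μ.cells, (N μ ((x.2:ℤ) - x.1 + ((m:ℤ)+1)) : ℤ) = (N μ (((x.2:ℤ) - x.1 + m) + 1) : ℤ) := by
      intro x _
      congr 1
      ring
    have e2 : ∀ x ∈ μ.cells, (N μ ((x.2:ℤ) - x.1 + ((m:ℤ)-1)) : ℤ) = (N μ (((x.2:ℤ) - x.1 + m) - 1) : ℤ) := by
      intro x _
      congr 1
      ring
    rw [Finset.sum_congr rfl e1, Finset.sum_congr rfl e2]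
    have key : ∀ x ∈ μ.cells,
        (N μ (((x.2:ℤ) - x.1 + m) + 1) : ℤ) + (N μ (((x.2:ℤ) - x.1 + m) - 1) : ℤ)
          - 2 * (N μ ((x.2:ℤ) - x.1 + m) : ℤ)
        = (u μ ((x.2:ℤ) - x.1 + m) - u μ ((x.2:ℤ) - x.1 + m + 1))
          - (if (x.2:ℤ) - x.1 = -(m:ℤ) then 1 else 0) := by
      intro x _
      have := Spt (μ := μ) ((x.2:ℤ) - x.1 + m)
      rw [this]
      have : ((x.2:ℤ) - x.1 + m = 0) ↔ ((x.2:ℤ) - x.1 = -(m:ℤ)) := by omega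
      rw [if_congr this rfl rfl]
    have hsum : ∑ x ∈ μ.cells,
        ((N μ (((x.2:ℤ) - x.1 + m) + 1) : ℤ) + (N μ (((x.2:ℤ) - x.1 + m) - 1) : ℤ)
          - 2 * (N μ ((x.2:ℤ) - x.1 + m) : ℤ))
        = ∑ x ∈ μ.cells, ((u μ ((x.2:ℤ) - x.1 + m) - u μ ((x.2:ℤ) - x.1 + m + 1))
          - (if (x.2:ℤ) - x.1 = -(m:ℤ) then 1 else 0)) := Finset.sum_congr rfl key
    have hN : ∑ x ∈ μ.cells, (if (x.2:ℤ) - x.1 = -(m:ℤ) then (1:ℤ) else 0) = (N μ (-(m:ℤ)) : ℤ) := by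
      rw [Finset.sum_boole]
      unfold N
      norm_num
    have hL : ∑ x ∈ μ.cells,
        ((N μ (((x.2:ℤ) - x.1 + m) + 1) : ℤ) + (N μ (((x.2:ℤ) - x.1 + m) - 1) : ℤ)
          - 2 * (N μ ((x.2:ℤ) - x.1 + m) : ℤ))
        = ∑ x ∈ μ.cells, (N μ (((x.2:ℤ) - x.1 + m) + 1) : ℤ)
          + ∑ x ∈ μ.cells, (N μ (((x.2:ℤ) - x.1 + m) - 1) : ℤ)
          - 2 * ∑ x ∈ μ.cells, (N μ ((x.2:ℤ) - x.1 + m) : ℤ) := by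
      rw [Finset.sum_sub_distrib, Finset.sum_add_distrib, ← Finset.mul_sum]
    have hR : ∑ x ∈ μ.cells, ((u μ ((x.2:ℤ) - x.1 + m) - u μ ((x.2:ℤ) - x.1 + m + 1))
          - (if (x.2:ℤ) - x.1 = -(m:ℤ) then 1 else 0))
        = ∑ x ∈ μ.cells, (u μ ((x.2:ℤ) - x.1 + m) - u μ ((x.2:ℤ) - x.1 + m + 1))
          - ∑ x ∈ μ.cells, (if (x.2:ℤ) - x.1 = -(m:ℤ) then (1:ℤ) else 0) :=
      Finset.sum_sub_distrib _ _
    rw [hL, hR, hN] at hsum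
    linarith [hsum]
  -- step: fiberwise
  have h3 : (∑ x ∈ μ.cells, (u μ ((x.2:ℤ) - x.1 + m) - u μ ((x.2:ℤ) - x.1 + m + 1)))
      = ∑ c ∈ Finset.Ioc A₀ B₀, (N μ c : ℤ) * (u μ (c + m) - u μ (c + m + 1)) := by
    rw [← Finset.sum_fiberwise_of_maps_to hct
      (fun x => u μ ((x.2:ℤ) - x.1 + m) - u μ ((x.2:ℤ) - x.1 + m + 1))]
    apply Finset.sum_congr rfl
    intro c _
    have hcongr : ∀ x ∈ μ.cells.filter (fun x => (x.2:ℤ) - x.1 = c),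
        (u μ ((x.2:ℤ) - x.1 + m) - u μ ((x.2:ℤ) - x.1 + m + 1)) = (u μ (c + m) - u μ (c + m + 1)) := by
      intro x hx
      rw [(Finset.mem_filter.1 hx).2]
    rw [Finset.sum_congr rfl hcongr, Finset.sum_const, nsmul_eq_mul]
    unfold N
    norm_num
  -- boundary vanishing
  have hNA : (N μ A₀ : ℤ) = 0 := by
    rw [N_zero (μ := μ) (Or.inl (by omega))]
    norm_num
  have hNB : (N μ B₀ : ℤ) = 0 := by
    rw [N_zero (μ := μ) (Or.inr (by omega))]
    norm_num
  -- Abel shift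
  have h4 : ∑ c ∈ Finset.Ioc A₀ B₀, (N μ c : ℤ) * u μ (c + m + 1)
      = ∑ c ∈ Finset.Ioc A₀ B₀, (N μ (c-1) : ℤ) * u μ (c + m) := by
    have hre : ∑ c ∈ Finset.Ioc A₀ B₀, (N μ (c-1) : ℤ) * u μ (c + m)
        = ∑ c ∈ Finset.Ioc (A₀-1) (B₀-1), (N μ c : ℤ) * u μ (c + m + 1) := by
      refine Finset.sum_nbij' (fun c => c - 1) (fun c => c + 1) ?_ ?_ ?_ ?_ ?_
      · intro a ha; simp only [Finset.mem_Ioc] at *; omega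
      · intro a ha; simp only [Finset.mem_Ioc] at *; omega
      · intro a _; exact (by omega : a - 1 + 1 = a)
      · intro a _; exact (by omega : a + 1 - 1 = a)
      · intro a _
        show (N μ (a-1) : ℤ) * u μ (a + m) = (N μ (a-1) : ℤ) * u μ ((a - 1) + m + 1)
        have : a - 1 + m + 1 = a + m := by ring
        rw [this]
    rw [hre]
    have e1 := sum_Ioc_split (A₀-1) (B₀-1) B₀ (by omega) (by omega)
      (fun c => (N μ c : ℤ) * u μ (c + m + 1))
    have e2 := sum_Ioc_split (A₀-1) A₀ B₀ (by omega) (by omega)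
      (fun c => (N μ c : ℤ) * u μ (c + m + 1))
    have e3 : ∑ c ∈ Finset.Ioc (B₀-1) B₀, (N μ c : ℤ) * u μ (c + m + 1)
        = (N μ B₀ : ℤ) * u μ (B₀ + m + 1) := sum_Ioc_singleton B₀ _
    have e4 : ∑ c ∈ Finset.Ioc (A₀-1) A₀, (N μ c : ℤ) * u μ (c + m + 1)
        = (N μ A₀ : ℤ) * u μ (A₀ + m + 1) := sum_Ioc_singleton A₀ _
    simp only [e3, e4, hNA, hNB, zero_mul, add_zero, zero_add] at e1 e2
    linarith [e1, e2]
  -- K1 pointwise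
  have h5 : ∑ c ∈ Finset.Ioc A₀ B₀, ((N μ c : ℤ) - (N μ (c-1) : ℤ)) * u μ (c + m)
      = ∑ c ∈ Finset.Ioc A₀ B₀, ((if c ≤ 0 then (1:ℤ) else 0) - u μ c) * u μ (c + m) := by
    apply Finset.sum_congr rfl
    intro c _
    rw [K1 (μ := μ) c]
    rfl
  -- indicator part
  have h6 : ∑ c ∈ Finset.Ioc A₀ B₀, (if c ≤ 0 then (1:ℤ) else 0) * u μ (c + m)
      = ∑ c ∈ Finset.Ioc A₀ (0:ℤ), u μ (c + m) := by
    have e1 : ∀ c ∈ Finset.Ioc A₀ B₀,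
        (if c ≤ 0 then (1:ℤ) else 0) * u μ (c + m) = (if c ≤ 0 then u μ (c + m) else 0) := by
      intro c _
      split <;> ring
    rw [Finset.sum_congr rfl e1, ← Finset.sum_filter]
    congr 1
    ext c
    simp only [Finset.mem_filter, Finset.mem_Ioc]
    omega
  -- window split
  have h7 : ∑ c ∈ Finset.Ioc A₀ B₀, u μ (c + m)
      = ∑ c ∈ Finset.Ioc A₀ (0:ℤ), u μ (c + m) + ∑ c ∈ Finset.Ioc (0:ℤ) B₀, u μ (c + m) :=
    sum_Ioc_split A₀ 0 B₀ hA0 hB0 _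
  -- F2
  have h8 : ∑ c ∈ Finset.Ioc (0:ℤ) B₀, u μ (c + m) = (N μ (m:ℤ) : ℤ) := by
    unfold u
    rw [Finset.sum_boole, N_card (μ := μ) hm hBW]
  -- F1
  have h9 : (Hk μ m : ℤ) = ∑ c ∈ Finset.Ioc A₀ B₀, (1 - u μ c) * u μ (c + m) := by
    have e1 : ∀ c ∈ Finset.Ioc A₀ B₀,
        (1 - u μ c) * u μ (c + m) = (if ¬ Bead μ c ∧ Bead μ (c + m) then (1:ℤ) else 0) := by
      intro c _
      unfold u
      by_cases hb1 : Bead μ c <;> by_cases hb2 : Bead μ (c + m) <;>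
        simp [hb1, hb2]
    rw [Finset.sum_congr rfl e1, Finset.sum_boole, Hk_card (μ := μ) hm hAL hBW]
  -- expansions
  have hexp1 : ∑ c ∈ Finset.Ioc A₀ B₀, (1 - u μ c) * u μ (c + m)
      = ∑ c ∈ Finset.Ioc A₀ B₀, u μ (c + m) - ∑ c ∈ Finset.Ioc A₀ B₀, u μ c * u μ (c + m) := by
    rw [← Finset.sum_sub_distrib]
    apply Finset.sum_congr rfl
    intro c _
    ring
  have hexp2 : ∑ c ∈ Finset.Ioc A₀ B₀, ((if c ≤ 0 then (1:ℤ) else 0) - u μ c) * u μ (c + m)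
      = ∑ c ∈ Finset.Ioc A₀ B₀, (if c ≤ 0 then (1:ℤ) else 0) * u μ (c + m)
        - ∑ c ∈ Finset.Ioc A₀ B₀, u μ c * u μ (c + m) := by
    rw [← Finset.sum_sub_distrib]
    apply Finset.sum_congr rfl
    intro c _
    ring
  have hexp3 : ∑ c ∈ Finset.Ioc A₀ B₀, ((N μ c : ℤ) - (N μ (c-1) : ℤ)) * u μ (c + m)
      = ∑ c ∈ Finset.Ioc A₀ B₀, (N μ c : ℤ) * u μ (c + m)
        - ∑ c ∈ Finset.Ioc A₀ B₀, (N μ (c-1) : ℤ) * u μ (c + m) := by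
    rw [← Finset.sum_sub_distrib]
    apply Finset.sum_congr rfl
    intro c _
    ring
  have hexp4 : ∑ c ∈ Finset.Ioc A₀ B₀, (N μ c : ℤ) * (u μ (c + m) - u μ (c + m + 1))
      = ∑ c ∈ Finset.Ioc A₀ B₀, (N μ c : ℤ) * u μ (c + m)
        - ∑ c ∈ Finset.Ioc A₀ B₀, (N μ c : ℤ) * u μ (c + m + 1) := by
    rw [← Finset.sum_sub_distrib]
    apply Finset.sum_congr rfl
    intro c _
    ring
  -- symmetry
  have hs1 : (Dd μ (-((m:ℤ)+1)) : ℤ) = (Dd μ ((m:ℤ)+1) : ℤ) :=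
    congrArg (fun n : ℕ => (n : ℤ)) (Dd_symm (μ := μ) ((m:ℤ)+1))
  have hs2 : (Dd μ (-(m:ℤ)) : ℤ) = (Dd μ (m:ℤ) : ℤ) :=
    congrArg (fun n : ℕ => (n : ℤ)) (Dd_symm (μ := μ) (m:ℤ))
  -- assemble
  have hfinal : (N μ (m:ℤ) : ℤ) + (N μ (-(m:ℤ)) : ℤ) + (Dd μ ((m:ℤ)-1) : ℤ) + (Dd μ (-((m:ℤ)+1)) : ℤ)
      = (Hk μ m : ℤ) + (Dd μ (m:ℤ) : ℤ) + (Dd μ (-(m:ℤ)) : ℤ) := by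
    rw [hs1, hs2]
    linarith [h2, h3, h4, h5, h6, h7, h8, h9, hexp1, hexp2, hexp3, hexp4]
  exact_mod_cast hfinal


/-! ### Count helpers -/

lemma card_eq_N (c : ℤ) {p : ℕ × ℕ → Prop} [DecidablePred p]
    (hp : ∀ x ∈ μ.cells, p x ↔ ((x.2 : ℤ) - x.1 = c)) :
    (μ.cells.filter p).card = N μ c := by
  unfold N
  exact congrArg Finset.card (Finset.filter_congr hp)

lemma card_eq_Dd (e : ℤ) {p : (ℕ × ℕ) × (ℕ × ℕ) → Prop} [DecidablePred p]
    (hp : ∀ q ∈ μ.cells ×ˢ μ.cells,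
      p q ↔ (((q.2.2 : ℤ) - q.2.1) - ((q.1.2 : ℤ) - q.1.1) = e)) :
    ((μ.cells ×ˢ μ.cells).filter p).card = Dd μ e := by
  unfold Dd
  exact congrArg Finset.card (Finset.filter_congr hp)

lemma card_eq_Hk (m : ℕ) {p : ℕ × ℕ → Prop} [DecidablePred p]
    (hp : ∀ x ∈ μ.cells, p x ↔ (μ.rowLen x.1 + μ.colLen x.2 - x.1 - x.2 - 1 = m)) :
    (μ.cells.filter p).card = Hk μ m := by
  unfold Hk
  exact congrArg Finset.card (Finset.filter_congr hp)

lemma count_filter_map {α : Type*} [DecidableEq α] (s : Finset α) (P : α → Prop)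
    [DecidablePred P] (g : α → ℕ) (k : ℕ) :
    Multiset.count k (Multiset.map g (s.filter P).val)
      = (s.filter (fun a => P a ∧ g a = k)).card := by
  rw [Multiset.count_map, Finset.filter_val, Multiset.filter_filter]
  calc Multiset.card (Multiset.filter (fun a => k = g a ∧ P a) s.val)
      = (s.filter (fun a => k = g a ∧ P a)).card := rfl
    _ = (s.filter (fun a => P a ∧ g a = k)).card :=
        congrArg Finset.card (Finset.filter_congr (fun x _ => by tauto))

lemma count_map' {α : Type*} [DecidableEq α] (s : Finset α) (g : α → ℕ) (k : ℕ) :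
    Multiset.count k (Multiset.map g s.val) = (s.filter (fun a => g a = k)).card := by
  rw [Multiset.count_map]
  calc Multiset.card (Multiset.filter (fun a => k = g a) s.val)
      = (s.filter (fun a => k = g a)).card := rfl
    _ = (s.filter (fun a => g a = k)).card :=
        congrArg Finset.card (Finset.filter_congr (fun x _ => by constructor <;> (intro h; omega)))

end YDHook

/-- **Lemma (hook-length identity, absolute values).** For a Young diagram `μ`,
`∏_{(i,j)∈μ, i≠j} |j−i| · ∏_{((i,j),(l,k))∈μ×μ, 1+i−j+k−l≠0} |1+i−j+k−l|
  = (∏_{□∈μ} h(□)) · ∏_{((i,j),(l,k))∈μ×μ, i−j+k−l≠0} |i−j+k−l|`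
as natural numbers, where `h(i,j) = μ_i + μ̄_j − i − j − 1` is the hook length. -/
theorem youngDiagram_abs_hook_identity (μ : YoungDiagram) :
    (∏ c ∈ μ.cells.filter (fun c => c.1 ≠ c.2), ((c.2 : ℤ) - c.1).natAbs)
      * (∏ p ∈ (μ.cells ×ˢ μ.cells).filter
          (fun p => (1 : ℤ) + p.1.1 - p.1.2 + p.2.2 - p.2.1 ≠ 0),
          ((1 : ℤ) + p.1.1 - p.1.2 + p.2.2 - p.2.1).natAbs)
    = (∏ c ∈ μ.cells, (μ.rowLen c.1 + μ.colLen c.2 - c.1 - c.2 - 1))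
      * (∏ p ∈ (μ.cells ×ˢ μ.cells).filter
          (fun p => (p.1.1 : ℤ) - p.1.2 + p.2.2 - p.2.1 ≠ 0),
          ((p.1.1 : ℤ) - p.1.2 + p.2.2 - p.2.1).natAbs) := by
  classical
  rw [Finset.prod_eq_multiset_prod, Finset.prod_eq_multiset_prod,
    Finset.prod_eq_multiset_prod, Finset.prod_eq_multiset_prod,
    ← Multiset.prod_add, ← Multiset.prod_add]
  congr 1
  refine Multiset.ext.2 fun k => ?_
  rw [Multiset.count_add, Multiset.count_add,
    YDHook.count_filter_map, YDHook.count_filter_map, YDHook.count_filter_map,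
    YDHook.count_map']
  rcases Nat.eq_zero_or_pos k with hk | hk
  · subst hk
    have c1 : (μ.cells.filter (fun a => a.1 ≠ a.2 ∧ ((a.2 : ℤ) - a.1).natAbs = 0)).card = 0 := by
      rw [Finset.card_eq_zero, Finset.filter_eq_empty_iff]
      rintro x _ ⟨hne, habs⟩
      have := Int.natAbs_eq_zero.1 habs
      omega
    have c2 : ((μ.cells ×ˢ μ.cells).filter (fun p =>
        ((1 : ℤ) + p.1.1 - p.1.2 + p.2.2 - p.2.1 ≠ 0) ∧
          ((1 : ℤ) + p.1.1 - p.1.2 + p.2.2 - p.2.1).natAbs = 0)).card = 0 := by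
      rw [Finset.card_eq_zero, Finset.filter_eq_empty_iff]
      rintro x _ ⟨hne, habs⟩
      exact hne (Int.natAbs_eq_zero.1 habs)
    have c3 : (μ.cells.filter (fun a =>
        μ.rowLen a.1 + μ.colLen a.2 - a.1 - a.2 - 1 = 0)).card = 0 := by
      rw [Finset.card_eq_zero, Finset.filter_eq_empty_iff]
      intro x hx h0
      have := YDHook.hook_pos (μ := μ) hx
      omega
    have c4 : ((μ.cells ×ˢ μ.cells).filter (fun p =>
        ((p.1.1 : ℤ) - p.1.2 + p.2.2 - p.2.1 ≠ 0) ∧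
          ((p.1.1 : ℤ) - p.1.2 + p.2.2 - p.2.1).natAbs = 0)).card = 0 := by
      rw [Finset.card_eq_zero, Finset.filter_eq_empty_iff]
      rintro x _ ⟨hne, habs⟩
      exact hne (Int.natAbs_eq_zero.1 habs)
    rw [c1, c2, c3, c4]
  · have hk' : (1 : ℤ) ≤ (k : ℤ) := by exact_mod_cast hk
    have c1 : (μ.cells.filter (fun a => a.1 ≠ a.2 ∧ ((a.2 : ℤ) - a.1).natAbs = k)).card
        = YDHook.N μ (k : ℤ) + YDHook.N μ (-(k : ℤ)) := by
      have hcg : μ.cells.filter (fun a => a.1 ≠ a.2 ∧ ((a.2 : ℤ) - a.1).natAbs = k)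
          = μ.cells.filter (fun a => ((a.2 : ℤ) - a.1 = (k : ℤ)) ∨ ((a.2 : ℤ) - a.1 = -(k : ℤ))) := by
        apply Finset.filter_congr
        intro x _
        constructor
        · rintro ⟨hne, habs⟩
          exact Int.natAbs_eq_iff.1 habs
        · intro h
          refine ⟨by omega, Int.natAbs_eq_iff.2 h⟩
      rw [hcg, Finset.filter_or, Finset.card_union_of_disjoint (by
        rw [Finset.disjoint_left]
        intro a ha hb
        simp only [Finset.mem_filter] at ha hb
        omega)]
      rw [YDHook.card_eq_N (μ := μ) ((k : ℤ)) (fun x _ => Iff.rfl),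
        YDHook.card_eq_N (μ := μ) (-(k : ℤ)) (fun x _ => Iff.rfl)]
    have c2 : ((μ.cells ×ˢ μ.cells).filter (fun p =>
        ((1 : ℤ) + p.1.1 - p.1.2 + p.2.2 - p.2.1 ≠ 0) ∧
          ((1 : ℤ) + p.1.1 - p.1.2 + p.2.2 - p.2.1).natAbs = k)).card
        = YDHook.Dd μ ((k : ℤ) - 1) + YDHook.Dd μ (-((k : ℤ) + 1)) := by
      have hcg : (μ.cells ×ˢ μ.cells).filter (fun p =>
          ((1 : ℤ) + p.1.1 - p.1.2 + p.2.2 - p.2.1 ≠ 0) ∧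
            ((1 : ℤ) + p.1.1 - p.1.2 + p.2.2 - p.2.1).natAbs = k)
          = (μ.cells ×ˢ μ.cells).filter (fun q =>
            (((q.2.2 : ℤ) - q.2.1) - ((q.1.2 : ℤ) - q.1.1) = (k : ℤ) - 1) ∨
              (((q.2.2 : ℤ) - q.2.1) - ((q.1.2 : ℤ) - q.1.1) = -((k : ℤ) + 1))) := by
        apply Finset.filter_congr
        intro q _
        have hE : (1 : ℤ) + q.1.1 - q.1.2 + q.2.2 - q.2.1
            = 1 + (((q.2.2 : ℤ) - q.2.1) - ((q.1.2 : ℤ) - q.1.1)) := by ring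
        constructor
        · rintro ⟨hne, habs⟩
          rcases Int.natAbs_eq_iff.1 habs with h | h <;> rw [hE] at h
          · left; omega
          · right; omega
        · intro h
          constructor
          · rw [hE]; rcases h with h | h <;> omega
          · apply Int.natAbs_eq_iff.2
            rcases h with h | h
            · left; rw [hE]; omega
            · right; rw [hE]; omega
      rw [hcg, Finset.filter_or, Finset.card_union_of_disjoint (by
        rw [Finset.disjoint_left]
        intro a ha hb
        simp only [Finset.mem_filter] at ha hb
        omega)]
      rw [YDHook.card_eq_Dd (μ := μ) ((k : ℤ) - 1) (fun q _ => Iff.rfl),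
        YDHook.card_eq_Dd (μ := μ) (-((k : ℤ) + 1)) (fun q _ => Iff.rfl)]
    have c3 : (μ.cells.filter (fun a =>
        μ.rowLen a.1 + μ.colLen a.2 - a.1 - a.2 - 1 = k)).card = YDHook.Hk μ k :=
      YDHook.card_eq_Hk (μ := μ) k (fun x _ => Iff.rfl)
    have c4 : ((μ.cells ×ˢ μ.cells).filter (fun p =>
        ((p.1.1 : ℤ) - p.1.2 + p.2.2 - p.2.1 ≠ 0) ∧
          ((p.1.1 : ℤ) - p.1.2 + p.2.2 - p.2.1).natAbs = k)).card
        = YDHook.Dd μ (k : ℤ) + YDHook.Dd μ (-(k : ℤ)) := by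
      have hcg : (μ.cells ×ˢ μ.cells).filter (fun p =>
          ((p.1.1 : ℤ) - p.1.2 + p.2.2 - p.2.1 ≠ 0) ∧
            ((p.1.1 : ℤ) - p.1.2 + p.2.2 - p.2.1).natAbs = k)
          = (μ.cells ×ˢ μ.cells).filter (fun q =>
            (((q.2.2 : ℤ) - q.2.1) - ((q.1.2 : ℤ) - q.1.1) = (k : ℤ)) ∨
              (((q.2.2 : ℤ) - q.2.1) - ((q.1.2 : ℤ) - q.1.1) = -(k : ℤ))) := by
        apply Finset.filter_congr
        intro q _
        have hE : (q.1.1 : ℤ) - q.1.2 + q.2.2 - q.2.1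
            = ((q.2.2 : ℤ) - q.2.1) - ((q.1.2 : ℤ) - q.1.1) := by ring
        constructor
        · rintro ⟨hne, habs⟩
          rcases Int.natAbs_eq_iff.1 habs with h | h <;> rw [hE] at h
          · left; omega
          · right; omega
        · intro h
          constructor
          · rw [hE]; rcases h with h | h <;> omega
          · apply Int.natAbs_eq_iff.2
            rcases h with h | h
            · left; rw [hE]; omega
            · right; rw [hE]; omega
      rw [hcg, Finset.filter_or, Finset.card_union_of_disjoint (by
        rw [Finset.disjoint_left]
        intro a ha hb
        simp only [Finset.mem_filter] at ha hb
        omega)]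
      rw [YDHook.card_eq_Dd (μ := μ) ((k : ℤ)) (fun q _ => Iff.rfl),
        YDHook.card_eq_Dd (μ := μ) (-(k : ℤ)) (fun q _ => Iff.rfl)]
    rw [c1, c2, c3, c4]
    have := YDHook.main μ hk
    omega
end

section
/- Let λ be a Young diagram and k₁, k₂ ∈ ℤ. Set ρ(λ) = Σ_{(i,j)∈λ, i≠j} (i·k₁ + j·k₂) + Σ_{((i,j),(l,k))∈λ×λ, 1+i−j+k−l≠0} ((i−l+1)·k₁ + (j−k)·k₂) + Σ_{((i,j),(l,k))∈λ×λ, i−j+k−l≠0} ((i−l)·k₁ + (j−k)·k₂). Then (−1)^{ρ(λ) + |λ|(k₁+k₂)} · σ(λ)^{k₁+k₂} = (−1)^{|λ|·k₂ + n(λ)·k₁ + n(λ̄)·k₂}. -/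
/-- The integer
`ρ(μ) = Σ_{(i,j)∈μ, i≠j} (i·k₁ + j·k₂)
  + Σ_{((i,j),(l,k))∈μ×μ, 1+i−j+k−l≠0} ((i−l+1)·k₁ + (j−k)·k₂)
  + Σ_{((i,j),(l,k))∈μ×μ, i−j+k−l≠0} ((i−l)·k₁ + (j−k)·k₂)`. -/
def youngRho (μ : YoungDiagram) (k₁ k₂ : ℤ) : ℤ :=
  (∑ c ∈ μ.cells.filter (fun c => c.1 ≠ c.2), ((c.1 : ℤ) * k₁ + (c.2 : ℤ) * k₂))
  + (∑ p ∈ (μ.cells ×ˢ μ.cells).filter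
      (fun p => (1 : ℤ) + p.1.1 - p.1.2 + p.2.2 - p.2.1 ≠ 0),
      (((p.1.1 : ℤ) - p.2.1 + 1) * k₁ + ((p.1.2 : ℤ) - p.2.2) * k₂))
  + (∑ p ∈ (μ.cells ×ˢ μ.cells).filter
      (fun p => (p.1.1 : ℤ) - p.1.2 + p.2.2 - p.2.1 ≠ 0),
      (((p.1.1 : ℤ) - p.2.1) * k₁ + ((p.1.2 : ℤ) - p.2.2) * k₂))

open Finset

namespace YDLS

def χ (n : ℤ) : ℚ := (-1) ^ n
lemma chi_add (a b : ℤ) : χ (a + b) = χ a * χ b := zpow_add₀ (by norm_num) a b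
lemma chi_mul (a b : ℤ) : χ a * χ b = χ (a + b) := (chi_add a b).symm
lemma chi_ne_zero (a : ℤ) : χ a ≠ 0 := zpow_ne_zero _ (by norm_num)
lemma chi_even {a : ℤ} (h : Even a) : χ a = 1 := h.neg_one_zpow
lemma chi_one : χ 1 = -1 := by simp [χ]
lemma chi_eq_of_even {a b : ℤ} (h : Even (a - b)) : χ a = χ b := by
  have h2 : χ a = χ (a - b) * χ b := by rw [chi_mul]; ring_nf
  rw [h2, chi_even h, one_mul]
lemma chi_sum {α : Type*} (s : Finset α) (f : α → ℤ) :
    χ (∑ x ∈ s, f x) = ∏ x ∈ s, χ (f x) := by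
  classical
  induction s using Finset.cons_induction with
  | empty => simp [χ]
  | cons a s ha ih => rw [Finset.sum_cons, Finset.prod_cons, chi_add, ih]


lemma KEYarith (s δ a b : ℤ) :
    (((if (1 + δ) ≠ 0 then (((1 + δ).sign : ℚ)) * χ (a - b + s) else 1)
      * (if δ ≠ 0 then ((δ.sign : ℚ)) * χ (a - b) else 1))
    * ((if (1 - δ) ≠ 0 then (((1 - δ).sign : ℚ)) * χ (b - a + s) else 1)
      * (if (-δ) ≠ 0 then (((-δ).sign : ℚ)) * χ (b - a) else 1)))
    = (if δ = 1 then χ (a - b + s + 1) else 1)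
      * (if δ = -1 then χ (b - a + s + 1) else 1) := by
  rcases lt_trichotomy δ 0 with h | rfl | h
  · rcases eq_or_lt_of_le (Int.add_one_le_iff.mpr h) with h1 | h1
    · -- δ = -1
      have hδ : δ = -1 := by omega
      subst hδ
      norm_num
      rw [show Int.sign 2 = 1 from rfl]
      push_cast
      rw [chi_add (b - a + s) 1, chi_one]
      have e1 : χ (a - b) * χ (b - a) = 1 := by
        rw [chi_mul, show a - b + (b - a) = 0 by ring]; simp [χ]
      linear_combination (-(χ (b - a + s))) * e1
    · -- δ ≤ -2
      have h2 : (1 + δ).sign = -1 := Int.sign_eq_neg_one_of_neg (by omega)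
      have h3 : δ.sign = -1 := Int.sign_eq_neg_one_of_neg (by omega)
      have h4 : (1 - δ).sign = 1 := Int.sign_eq_one_of_pos (by omega)
      have h5 : (-δ).sign = 1 := Int.sign_eq_one_of_pos (by omega)
      rw [if_pos (by omega : (1:ℤ) + δ ≠ 0), if_pos (by omega : δ ≠ 0),
        if_pos (by omega : (1:ℤ) - δ ≠ 0), if_pos (by omega : -δ ≠ 0),
        if_neg (by omega : ¬ δ = 1), if_neg (by omega : ¬ δ = -1), h2, h3, h4, h5]
      push_cast
      rw [show ((-1 : ℚ) * χ (a - b + s)) * (-1 * χ (a - b)) * ((1 * χ (b - a + s)) * (1 * χ (b - a)))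
          = (χ (a-b+s) * χ (b-a+s)) * (χ (a-b) * χ (b-a)) by ring,
        chi_mul, chi_mul, chi_even ⟨s, by ring⟩, chi_even ⟨0, by ring⟩]
      try norm_num
      try ring
  · -- δ = 0
    norm_num
    rw [chi_mul, chi_even ⟨s, by ring⟩]
  · rcases eq_or_lt_of_le (Int.add_one_le_iff.mpr h) with h1 | h1
    · -- δ = 1
      have hδ : δ = 1 := by omega
      subst hδ
      norm_num
      rw [show Int.sign 2 = 1 from rfl]
      push_cast
      rw [chi_add (a - b + s) 1, chi_one]
      have e1 : χ (a - b) * χ (b - a) = 1 := by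
        rw [chi_mul, show a - b + (b - a) = 0 by ring]; simp [χ]
      linear_combination (-(χ (a - b + s))) * e1
    · -- δ ≥ 2
      have h2 : (1 + δ).sign = 1 := Int.sign_eq_one_of_pos (by omega)
      have h3 : δ.sign = 1 := Int.sign_eq_one_of_pos (by omega)
      have h4 : (1 - δ).sign = -1 := Int.sign_eq_neg_one_of_neg (by omega)
      have h5 : (-δ).sign = -1 := Int.sign_eq_neg_one_of_neg (by omega)
      rw [if_pos (by omega : (1:ℤ) + δ ≠ 0), if_pos (by omega : δ ≠ 0),
        if_pos (by omega : (1:ℤ) - δ ≠ 0), if_pos (by omega : -δ ≠ 0),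
        if_neg (by omega : ¬ δ = 1), if_neg (by omega : ¬ δ = -1), h2, h3, h4, h5]
      push_cast
      rw [show ((1 : ℚ) * χ (a - b + s)) * (1 * χ (a - b)) * ((-1 * χ (b - a + s)) * (-1 * χ (b - a)))
          = (χ (a-b+s) * χ (b-a+s)) * (χ (a-b) * χ (b-a)) by ring,
        chi_mul, chi_mul, chi_even ⟨s, by ring⟩, chi_even ⟨0, by ring⟩]
      try norm_num
      try ring


def T (n : ℕ) : ℤ := ∑ i ∈ range n, (i : ℤ)
def g (v : ℕ) : ℤ := ∑ u ∈ range (v + 1), T u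
lemma T_succ (n : ℕ) : T (n + 1) = T n + n := by simp [T, Finset.sum_range_succ]
lemma two_mul_T (n : ℕ) : 2 * T n = n * (n - 1) := by
  induction n with
  | zero => simp [T]
  | succ n ih => rw [T_succ]; push_cast; push_cast at ih; ring_nf; ring_nf at ih; omega
lemma g_succ (v : ℕ) : g (v + 1) = g v + T (v + 1) := by simp [g, Finset.sum_range_succ]

lemma tele_exact {a b : ℕ} (h : b = a ∨ b = a + 1 ∨ a = b + 1) :
    (b : ℤ) * T a - a * T b = g a - g b := by
  rcases h with rfl | rfl | rfl
  · ring
  · rw [g_succ, T_succ]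
    have h2 := two_mul_T a
    push_cast
    nlinarith [h2]
  · rw [g_succ, T_succ]
    have h2 := two_mul_T b
    push_cast
    nlinarith [h2]

lemma tele_parity {a b : ℕ} (h : b = a ∨ b = a + 1) :
    Even ((a : ℤ) + a * b + (T a - T b)) := by
  rcases h with h | h
  · rw [h]
    have := Int.even_mul_succ_self (a : ℤ)
    convert this using 1; ring
  · rw [h, T_succ]
    have := Int.even_mul_succ_self (a : ℤ)
    convert this using 1; push_cast; ring

lemma sum_Ico_int {M : Type*} [AddCommMonoid M] (a b : ℤ) (f : ℤ → M) :
    ∑ c ∈ Finset.Ico a b, f c = ∑ k ∈ Finset.range (b - a).toNat, f (a + k) := by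
  apply Finset.sum_nbij' (i := fun c => (c - a).toNat) (j := fun k => a + (k : ℤ))
  · intro c hc; simp only [Finset.mem_Ico] at hc; simp only [Finset.mem_range]; omega
  · intro k hk; simp only [Finset.mem_range] at hk; simp only [Finset.mem_Ico]; omega
  · intro c hc; simp only [Finset.mem_Ico] at hc; omega
  · intro k hk; simp only [Finset.mem_range] at hk; omega
  · intro c hc; simp only [Finset.mem_Ico] at hc
    congr 1; omega

def dgn (p : ℕ × ℕ) : ℤ := (p.2 : ℤ) - p.1

section L
variable (μ : YoungDiagram) (w : ℕ × ℕ → ℤ) (s : ℤ)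

private def Ffun (p : (ℕ × ℕ) × (ℕ × ℕ)) : ℚ :=
  (if (1 : ℤ) + p.1.1 - p.1.2 + p.2.2 - p.2.1 ≠ 0 then
      (((1 : ℤ) + p.1.1 - p.1.2 + p.2.2 - p.2.1).sign : ℚ) * χ (w p.1 - w p.2 + s) else 1)
  * (if (p.1.1 : ℤ) - p.1.2 + p.2.2 - p.2.1 ≠ 0 then
      (((p.1.1 : ℤ) - p.1.2 + p.2.2 - p.2.1).sign : ℚ) * χ (w p.1 - w p.2) else 1)

private def Efun (p : (ℕ × ℕ) × (ℕ × ℕ)) : ℚ :=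
  (if p.1 = p.2 then χ s else 1)
  * (if dgn p.2 = dgn p.1 + 1 then χ (w p.1 - w p.2 + s + 1) else 1)

lemma Efun_ne_zero (p : (ℕ × ℕ) × (ℕ × ℕ)) : Efun w s p ≠ 0 := by
  unfold Efun
  apply mul_ne_zero <;> split <;> first | exact chi_ne_zero _ | exact one_ne_zero

lemma KEY (p : (ℕ × ℕ) × (ℕ × ℕ)) :
    Ffun w s p * Ffun w s p.swap = Efun w s p * Efun w s p.swap := by
  obtain ⟨⟨i, j⟩, ⟨l, k⟩⟩ := p
  have harith := KEYarith s (((k : ℤ) - l) - ((j : ℤ) - i)) (w (i, j)) (w (l, k))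
  unfold Ffun Efun
  simp only [Prod.swap_prod_mk]
  have e1 : (1 : ℤ) + (i : ℤ) - j + k - l = 1 + (((k : ℤ) - l) - ((j : ℤ) - i)) := by ring
  have e2 : (i : ℤ) - j + k - l = ((k : ℤ) - l) - ((j : ℤ) - i) := by ring
  have e3 : (1 : ℤ) + (l : ℤ) - k + j - i = 1 - (((k : ℤ) - l) - ((j : ℤ) - i)) := by ring
  have e4 : (l : ℤ) - k + j - i = -(((k : ℤ) - l) - ((j : ℤ) - i)) := by ring
  rw [e1, e2, e3, e4, harith]
  have hd1 : (dgn (l, k) = dgn (i, j) + 1) ↔ (((k : ℤ) - l) - ((j : ℤ) - i) = 1) := by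
    simp only [dgn]; omega
  have hd2 : (dgn (i, j) = dgn (l, k) + 1) ↔ (((k : ℤ) - l) - ((j : ℤ) - i) = -1) := by
    simp only [dgn]; omega
  simp only [hd1, hd2]
  by_cases hpq : ((i, j) : ℕ × ℕ) = (l, k)
  · have hi : i = l := congrArg Prod.fst hpq
    have hj : j = k := congrArg Prod.snd hpq
    subst hi; subst hj
    simp only [if_pos rfl, if_true]
    rw [if_neg (by omega : ¬ (((j : ℤ) - i) - ((j : ℤ) - i) = 1)),
      if_neg (by omega : ¬ (((j : ℤ) - i) - ((j : ℤ) - i) = -1))]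
    simp only [mul_one, one_mul]
    rw [chi_mul]
    exact (chi_even ⟨s, by ring⟩).symm
  · rw [if_neg hpq, if_neg (show ¬((l, k) : ℕ × ℕ) = (i, j) from fun h => hpq h.symm)]
    ring

lemma prod_F_eq_prod_E :
    ∏ p ∈ μ.cells ×ˢ μ.cells, Ffun w s p = ∏ p ∈ μ.cells ×ˢ μ.cells, Efun w s p := by
  classical
  have hEne : ∀ p, Efun w s p ≠ 0 := Efun_ne_zero w s
  have h1 : ∏ p ∈ μ.cells ×ˢ μ.cells, (Ffun w s p / Efun w s p) = 1 := by
    apply Finset.prod_involution (g := fun p _ => Prod.swap p)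
    · intro p hp
      rw [div_mul_div_comm, KEY w s p,
        div_self (mul_ne_zero (hEne p) (hEne p.swap))]
    · intro p hp hne hswap
      apply hne
      obtain ⟨pa, pb⟩ := p
      have hba : pa = pb := by simpa using congrArg Prod.snd hswap
      subst hba
      unfold Ffun Efun
      simp only
      rw [show (1 : ℤ) + (pa.1 : ℤ) - pa.2 + pa.2 - pa.1 = 1 by ring,
        show (pa.1 : ℤ) - pa.2 + pa.2 - pa.1 = 0 by ring,
        show w pa - w pa + s = s by ring]
      rw [if_pos (by norm_num : (1 : ℤ) ≠ 0), if_neg (by norm_num : ¬ (0 : ℤ) ≠ 0),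
        if_neg (by omega : ¬ dgn pa = dgn pa + 1)]
      rw [show Int.sign 1 = 1 from rfl]
      simp [chi_ne_zero s]
      -- end fixed point
    · intro p hp
      rw [Finset.mem_product] at hp ⊢
      exact ⟨hp.2, hp.1⟩
    · intro p hp
      exact Prod.swap_swap p
  rw [Finset.prod_div_distrib] at h1
  have hEprod : ∏ p ∈ μ.cells ×ˢ μ.cells, Efun w s p ≠ 0 :=
    Finset.prod_ne_zero_iff.mpr (fun p _ => hEne p)
  field_simp at h1
  exact h1

lemma diag_filter_card :
    ((μ.cells ×ˢ μ.cells).filter (fun p => p.1 = p.2)).card = μ.card := by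
  classical
  have hset : (μ.cells ×ˢ μ.cells).filter (fun p => p.1 = p.2)
      = μ.cells.image (fun c => (c, c)) := by
    ext ⟨a, b⟩
    simp only [Finset.mem_filter, Finset.mem_product, Finset.mem_image]
    constructor
    · rintro ⟨⟨h1, h2⟩, h3⟩
      exact ⟨a, h1, by rw [show a = b from h3]⟩
    · rintro ⟨c, hc, hcc⟩
      have h1 : c = a := by simpa using congrArg Prod.fst hcc
      have h2 : c = b := by simpa using congrArg Prod.snd hcc
      subst h1
      constructor
      · exact ⟨hc, by rwa [← h2]⟩
      · simpa using h2
  rw [hset, Finset.card_image_of_injective _ (fun x y h => by simpa using congrArg Prod.fst h)]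

lemma L_prod :
    (∏ p ∈ (μ.cells ×ˢ μ.cells).filter
        (fun p => (1 : ℤ) + p.1.1 - p.1.2 + p.2.2 - p.2.1 ≠ 0),
        (((1 : ℤ) + p.1.1 - p.1.2 + p.2.2 - p.2.1).sign : ℚ) * χ (w p.1 - w p.2 + s))
      * (∏ p ∈ (μ.cells ×ˢ μ.cells).filter
        (fun p => (p.1.1 : ℤ) - p.1.2 + p.2.2 - p.2.1 ≠ 0),
        (((p.1.1 : ℤ) - p.1.2 + p.2.2 - p.2.1).sign : ℚ) * χ (w p.1 - w p.2))
      = (χ s) ^ μ.card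
        * χ (∑ q ∈ (μ.cells ×ˢ μ.cells).filter (fun q => dgn q.2 = dgn q.1 + 1),
            (w q.1 - w q.2 + s + 1)) := by
  classical
  rw [Finset.prod_filter, Finset.prod_filter, ← Finset.prod_mul_distrib]
  have hF : ∏ p ∈ μ.cells ×ˢ μ.cells,
      ((if (1 : ℤ) + p.1.1 - p.1.2 + p.2.2 - p.2.1 ≠ 0 then
          (((1 : ℤ) + p.1.1 - p.1.2 + p.2.2 - p.2.1).sign : ℚ) * χ (w p.1 - w p.2 + s) else 1)
        * (if (p.1.1 : ℤ) - p.1.2 + p.2.2 - p.2.1 ≠ 0 then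
          (((p.1.1 : ℤ) - p.1.2 + p.2.2 - p.2.1).sign : ℚ) * χ (w p.1 - w p.2) else 1))
      = ∏ p ∈ μ.cells ×ˢ μ.cells, Ffun w s p := rfl
  rw [hF, prod_F_eq_prod_E μ w s]
  unfold Efun
  rw [Finset.prod_mul_distrib]
  congr 1
  · rw [← Finset.prod_filter, Finset.prod_const, diag_filter_card μ]
  · rw [← Finset.prod_filter, ← chi_sum]


end L

lemma cell_bound (μ : YoungDiagram) {p : ℕ × ℕ} (hp : p ∈ μ.cells) :
    p.1 < μ.card ∧ p.2 < μ.card := by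
  rw [YoungDiagram.mem_cells] at hp
  constructor
  · have hsub : (Finset.range (p.1 + 1)).image (fun t => (t, p.2)) ⊆ μ.cells := by
      intro q hq
      simp only [Finset.mem_image, Finset.mem_range] at hq
      obtain ⟨t, ht, rfl⟩ := hq
      rw [YoungDiagram.mem_cells]
      exact μ.up_left_mem (by omega) le_rfl hp
    have := Finset.card_le_card hsub
    rwa [Finset.card_image_of_injective _ (fun x y h => by simpa using congrArg Prod.fst h),
      Finset.card_range] at this
  · have hsub : (Finset.range (p.2 + 1)).image (fun t => (p.1, t)) ⊆ μ.cells := by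
      intro q hq
      simp only [Finset.mem_image, Finset.mem_range] at hq
      obtain ⟨t, ht, rfl⟩ := hq
      rw [YoungDiagram.mem_cells]
      exact μ.up_left_mem le_rfl (by omega) hp
    have := Finset.card_le_card hsub
    rwa [Finset.card_image_of_injective _ (fun x y h => by simpa using congrArg Prod.snd h),
      Finset.card_range] at this


def D (μ : YoungDiagram) (c : ℤ) : Finset (ℕ × ℕ) := μ.cells.filter (fun p => dgn p = c)
def m (μ : YoungDiagram) (c : ℤ) : ℕ := (D μ c).card


lemma fst_injOn (c : ℤ) : Set.InjOn Prod.fst {p : ℕ × ℕ | dgn p = c} := by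
  intro p hp q hq h
  simp only [Set.mem_setOf_eq, dgn] at hp hq
  have : p.2 = q.2 := by omega
  exact Prod.ext h this

lemma diag_image (μ : YoungDiagram) (c : ℤ) :
    (D μ c).image Prod.fst = Finset.Ico (-c).toNat ((-c).toNat + m μ c) := by
  set I := (D μ c).image Prod.fst with hI
  have hcard : I.card = m μ c := by
    rw [hI, Finset.card_image_of_injOn, m]
    intro p hp q hq h
    apply fst_injOn c _ _ h
    · simpa [D, Finset.mem_filter] using (Finset.mem_filter.mp hp).2
    · simpa [D, Finset.mem_filter] using (Finset.mem_filter.mp hq).2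
  -- lower bound
  have hlb : ∀ i ∈ I, (-c).toNat ≤ i := by
    intro i hi
    simp only [hI, Finset.mem_image] at hi
    obtain ⟨p, hp, rfl⟩ := hi
    have := (Finset.mem_filter.mp hp).2
    simp only [dgn] at this
    omega
  -- downward closure
  have hdc : ∀ i ∈ I, ∀ i', (-c).toNat ≤ i' → i' ≤ i → i' ∈ I := by
    intro i hi i' h1 h2
    simp only [hI, Finset.mem_image] at hi ⊢
    obtain ⟨p, hp, rfl⟩ := hi
    rw [D, Finset.mem_filter, YoungDiagram.mem_cells] at hp
    have hc : dgn p = c := hp.2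
    simp only [dgn] at hc
    refine ⟨(i', (i' + c).toNat), ?_, rfl⟩
    rw [D, Finset.mem_filter, YoungDiagram.mem_cells]
    constructor
    · have : ((i' + c).toNat : ℤ) = (i' : ℤ) + c := by omega
      apply μ.up_left_mem h2 (by omega) hp.1
    · simp only [dgn]; omega
  -- conclude
  have hsub : I ⊆ Finset.Ico (-c).toNat ((-c).toNat + m μ c) := by
    intro i hi
    rw [Finset.mem_Ico]
    refine ⟨hlb i hi, ?_⟩
    by_contra hcon
    push_neg at hcon
    have hsub2 : Finset.Icc (-c).toNat i ⊆ I := by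
      intro i' hi'
      rw [Finset.mem_Icc] at hi'
      exact hdc i hi i' hi'.1 hi'.2
    have := Finset.card_le_card hsub2
    rw [Nat.card_Icc, hcard] at this
    omega
  apply Finset.eq_of_subset_of_card_le hsub
  rw [hcard, Nat.card_Ico]
  omega

lemma mem_diag_iff (μ : YoungDiagram) (c : ℤ) {i j : ℕ} (h : (j : ℤ) - i = c) :
    (i, j) ∈ μ ↔ i < (-c).toNat + m μ c := by
  have himg := diag_image μ c
  constructor
  · intro hij
    have : i ∈ (D μ c).image Prod.fst := by
      simp only [Finset.mem_image]
      exact ⟨(i, j), by rw [D, Finset.mem_filter]; exact ⟨by rwa [YoungDiagram.mem_cells], by simp only [dgn]; omega⟩, rfl⟩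
    rw [himg, Finset.mem_Ico] at this
    omega
  · intro hlt
    have hmem : i ∈ Finset.Ico (-c).toNat ((-c).toNat + m μ c) := by
      rw [Finset.mem_Ico]; omega
    rw [← himg, Finset.mem_image] at hmem
    obtain ⟨p, hp, hfst⟩ := hmem
    rw [D, Finset.mem_filter, YoungDiagram.mem_cells] at hp
    have hc : dgn p = c := hp.2
    simp only [dgn] at hc
    have h2 : p.2 = j := by omega
    have hpij : p = (i, j) := Prod.ext hfst h2
    rw [← hpij]
    exact hp.1


lemma R_eq (μ : YoungDiagram) (c : ℤ) :
    ∑ p ∈ D μ c, (p.1 : ℤ) = ((-c).toNat : ℤ) * m μ c + T (m μ c) := by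
  have himg := diag_image μ c
  have hinj : ∀ p ∈ D μ c, ∀ q ∈ D μ c, p.1 = q.1 → p = q := by
    intro p hp q hq h
    apply fst_injOn c _ _ h
    · exact (Finset.mem_filter.mp hp).2
    · exact (Finset.mem_filter.mp hq).2
  have : ∑ p ∈ D μ c, ((p.1 : ℤ)) = ∑ i ∈ (D μ c).image Prod.fst, (i : ℤ) := by
    rw [Finset.sum_image hinj]
  rw [this, himg, Finset.sum_Ico_eq_sum_range]
  have hn : (-c).toNat + m μ c - (-c).toNat = m μ c := by omega
  rw [hn, T]
  push_cast
  rw [Finset.sum_add_distrib, Finset.sum_const, Finset.card_range, nsmul_eq_mul]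
  ring

lemma m_step_nonneg (μ : YoungDiagram) {c : ℤ} (hc : 0 ≤ c) :
    m μ (c + 1) ≤ m μ c ∧ m μ c ≤ m μ (c + 1) + 1 := by
  have ha : (-c).toNat = 0 := by omega
  have ha' : (-(c+1)).toNat = 0 := by omega
  constructor
  · rcases Nat.eq_zero_or_pos (m μ (c+1)) with h | h
    · omega
    · -- top cell of D (c+1): (m_{c+1}-1, m_{c+1}-1 + c + 1)
      set t := m μ (c+1) - 1 with ht
      have htop : (t, (t + c + 1).toNat) ∈ μ := by
        rw [mem_diag_iff μ (c+1) (by omega)]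
        omega
      have hmem : (t, (t + c).toNat) ∈ μ := by
        apply μ.up_left_mem le_rfl (by omega) htop
      rw [mem_diag_iff μ c (by omega)] at hmem
      omega
  · rcases Nat.lt_or_ge (m μ c) 2 with h | h
    · omega
    · set t := m μ c - 1 with ht
      have htop : (t, (t + c).toNat) ∈ μ := by
        rw [mem_diag_iff μ c (by omega)]; omega
      have hmem : (t - 1, (t - 1 + c + 1).toNat) ∈ μ := by
        apply μ.up_left_mem (by omega) (by omega) htop
      rw [mem_diag_iff μ (c+1) (by omega)] at hmem
      omega

lemma m_step_neg (μ : YoungDiagram) {c : ℤ} (hc : c < 0) :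
    m μ c ≤ m μ (c + 1) ∧ m μ (c + 1) ≤ m μ c + 1 := by
  have ha : ((-c).toNat : ℤ) = -c := by omega
  have ha' : ((-(c+1)).toNat : ℤ) = -(c+1) := by omega
  constructor
  · rcases Nat.eq_zero_or_pos (m μ c) with h | h
    · omega
    · set t := (-c).toNat + m μ c - 1 with ht
      have htop : (t, ((t : ℤ) + c).toNat) ∈ μ := by
        rw [mem_diag_iff μ c (by omega)]; omega
      have hmem : (t - 1, ((t : ℤ) + c).toNat) ∈ μ := by
        apply μ.up_left_mem (by omega) (by omega) htop
      have h2 : (((t:ℤ) + c).toNat : ℤ) - (t - 1 : ℕ) = c + 1 := by omega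
      rw [mem_diag_iff μ (c+1) h2] at hmem
      omega
  · rcases Nat.lt_or_ge (m μ (c+1)) 2 with h | h
    · rcases Nat.eq_zero_or_pos (m μ c) with h0 | h0 <;> omega
    · set t := (-(c+1)).toNat + m μ (c+1) - 1 with ht
      have htop : (t, ((t : ℤ) + c + 1).toNat) ∈ μ := by
        rw [mem_diag_iff μ (c+1) (by omega)]; omega
      have hmem : (t, ((t : ℤ) + c).toNat) ∈ μ := by
        apply μ.up_left_mem le_rfl (by omega) htop
      rw [mem_diag_iff μ c (by omega)] at hmem
      omega

lemma m_outside (μ : YoungDiagram) {c : ℤ}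
    (hc : c ≤ -(μ.card : ℤ) ∨ (μ.card : ℤ) ≤ c) : m μ c = 0 := by
  rw [m, Finset.card_eq_zero]
  by_contra h
  obtain ⟨p, hp⟩ := Finset.nonempty_of_ne_empty h
  rw [D, Finset.mem_filter] at hp
  have hb := cell_bound μ hp.1
  have := hp.2
  simp only [dgn] at this
  omega

lemma dgn_mem_Ico' (μ : YoungDiagram) {p : ℕ × ℕ} (hp : p ∈ μ.cells) :
    dgn p ∈ Finset.Ico (-(μ.card : ℤ)) (μ.card : ℤ) := by
  have := cell_bound μ hp
  simp only [Finset.mem_Ico, dgn]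
  omega

def Ssum (μ : YoungDiagram) : ℤ :=
  ∑ q ∈ (μ.cells ×ˢ μ.cells).filter (fun q => dgn q.2 = dgn q.1 + 1),
    ((q.1.1 : ℤ) - q.2.1)

lemma Ssum_eq (μ : YoungDiagram) :
    Ssum μ = ∑ c ∈ Finset.Ico (-(μ.card : ℤ)) (μ.card : ℤ),
      ((m μ (c + 1) : ℤ) * (∑ p ∈ D μ c, (p.1 : ℤ))
        - (m μ c : ℤ) * (∑ p ∈ D μ (c + 1), (p.1 : ℤ))) := by
  classical
  rw [Ssum]
  rw [← Finset.sum_fiberwise_of_maps_to (g := fun q : (ℕ×ℕ)×(ℕ×ℕ) => dgn q.1)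
    (t := Finset.Ico (-(μ.card : ℤ)) (μ.card : ℤ))
    (fun q hq => dgn_mem_Ico' μ (Finset.mem_product.mp (Finset.mem_filter.mp hq).1).1)]
  apply Finset.sum_congr rfl
  intro c _
  have hset : ((μ.cells ×ˢ μ.cells).filter (fun q => dgn q.2 = dgn q.1 + 1)).filter
      (fun q => dgn q.1 = c) = (D μ c) ×ˢ (D μ (c + 1)) := by
    ext q
    simp only [Finset.mem_filter, Finset.mem_product, D]
    constructor
    · rintro ⟨⟨⟨h1, h2⟩, h3⟩, h4⟩
      exact ⟨⟨h1, h4⟩, ⟨h2, by omega⟩⟩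
    · rintro ⟨⟨h1, h4⟩, ⟨h2, h5⟩⟩
      exact ⟨⟨⟨h1, h2⟩, by omega⟩, h4⟩
  rw [hset, Finset.sum_product]
  have hinner : ∀ p : ℕ × ℕ, ∑ q ∈ D μ (c + 1), ((p.1 : ℤ) - q.1)
      = (m μ (c + 1) : ℤ) * p.1 - ∑ q ∈ D μ (c + 1), (q.1 : ℤ) := by
    intro p
    rw [Finset.sum_sub_distrib, Finset.sum_const, nsmul_eq_mul, m]
  simp only [hinner]
  rw [Finset.sum_sub_distrib, Finset.sum_const, nsmul_eq_mul, ← Finset.mul_sum]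
  simp only [m]

lemma eps_eq (μ : YoungDiagram) :
    ((μ.cells.filter (fun p => p.2 < p.1)).card : ℤ)
      = ∑ c ∈ Finset.Ico (-(μ.card : ℤ)) 0, (m μ c : ℤ) := by
  classical
  have hmaps : ∀ p ∈ μ.cells.filter (fun p => p.2 < p.1),
      dgn p ∈ Finset.Ico (-(μ.card : ℤ)) 0 := by
    intro p hp
    rw [Finset.mem_filter] at hp
    have := cell_bound μ hp.1
    have h2 := hp.2
    simp only [Finset.mem_Ico, dgn]
    omega
  rw [Finset.card_eq_sum_card_fiberwise hmaps]
  push_cast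
  apply Finset.sum_congr rfl
  intro c hc
  rw [Finset.mem_Ico] at hc
  have hfib : (μ.cells.filter (fun p => p.2 < p.1)).filter (fun p => dgn p = c) = D μ c := by
    ext p
    rw [Finset.filter_filter, D, Finset.mem_filter, Finset.mem_filter]
    constructor
    · rintro ⟨h1, _, h3⟩; exact ⟨h1, h3⟩
    · rintro ⟨h1, h3⟩
      have h4 : dgn p = c := h3
      simp only [dgn] at h4
      exact ⟨h1, by omega, h3⟩
  rw [hfib, m]

lemma diag_sum (μ : YoungDiagram) :
    ∑ p ∈ μ.cells.filter (fun p => p.1 = p.2), (p.1 : ℤ) = T (m μ 0) := by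
  have hset : μ.cells.filter (fun p => p.1 = p.2) = D μ 0 := by
    ext p
    rw [D, Finset.mem_filter, Finset.mem_filter]; simp only [dgn]
    constructor
    · rintro ⟨h1, h2⟩; exact ⟨h1, by omega⟩
    · rintro ⟨h1, h2⟩; exact ⟨h1, by omega⟩
  rw [hset, R_eq]
  norm_num


lemma MCL (μ : YoungDiagram) :
    Even (((μ.cells.filter (fun p => p.2 < p.1)).card : ℤ) + Ssum μ + T (m μ 0)) := by
  classical
  set N := μ.card with hN
  -- pointwise rewriting of the summand of Ssum_eq
  have key : ∀ c ∈ Finset.Ico (-(N : ℤ)) (N : ℤ),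
      (m μ (c + 1) : ℤ) * (∑ p ∈ D μ c, (p.1 : ℤ))
        - (m μ c : ℤ) * (∑ p ∈ D μ (c + 1), (p.1 : ℤ))
      = (g (m μ c) - g (m μ (c + 1)))
        + (if c < 0 then (m μ c : ℤ) * m μ (c + 1) else 0) := by
    intro c _
    rw [R_eq, R_eq]
    have hstep : m μ (c+1) = m μ c ∨ m μ (c+1) = m μ c + 1 ∨ m μ c = m μ (c+1) + 1 := by
      rcases le_or_gt 0 c with h | h
      · have := m_step_nonneg μ h; omega
      · have := m_step_neg μ h; omega
    have hte := tele_exact hstep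
    by_cases hc : c < 0
    · simp only [hc, if_true]
      have h1 : ((-c).toNat : ℤ) = -c := by omega
      have h2 : ((-(c+1)).toNat : ℤ) = -(c+1) := by omega
      rw [h1, h2]
      linear_combination hte
    · simp only [hc, if_false]
      have h1 : ((-c).toNat : ℤ) = 0 := by omega
      have h2 : ((-(c+1)).toNat : ℤ) = 0 := by omega
      rw [h1, h2]
      linear_combination hte
  have hS : Ssum μ = ∑ c ∈ Finset.Ico (-(N : ℤ)) 0, (m μ c : ℤ) * m μ (c + 1) := by
    rw [Ssum_eq, Finset.sum_congr rfl key, Finset.sum_add_distrib]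
    have htel : ∑ c ∈ Finset.Ico (-(N : ℤ)) (N : ℤ), (g (m μ c) - g (m μ (c + 1))) = 0 := by
      rw [sum_Ico_int]
      have : ∀ k ∈ Finset.range ((N : ℤ) - -(N : ℤ)).toNat,
          g (m μ (-(N : ℤ) + k)) - g (m μ (-(N : ℤ) + k + 1))
          = (fun k : ℕ => g (m μ (-(N : ℤ) + k))) k - (fun k : ℕ => g (m μ (-(N : ℤ) + k))) (k + 1) := by
        intro k _
        simp only
        congr 3
        push_cast
        ring
      rw [Finset.sum_congr rfl this, Finset.sum_range_sub']
      have hm1 : m μ (-(N : ℤ) + (0 : ℕ)) = 0 := m_outside μ (by push_cast; omega)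
      have hm2 : m μ (-(N : ℤ) + (((N : ℤ) - -(N : ℤ)).toNat : ℕ)) = 0 := by
        apply m_outside μ
        right
        push_cast
        omega
      rw [hm1, hm2]
      ring
    rw [htel, zero_add]
    have hfilter : Finset.Ico (-(N : ℤ)) 0
        = (Finset.Ico (-(N : ℤ)) (N : ℤ)).filter (fun c => c < 0) := by
      ext c
      simp only [Finset.mem_Ico, Finset.mem_filter]
      omega
    rw [hfilter, Finset.sum_filter]
  -- the parity part
  have hstep2 : ∀ c ∈ Finset.Ico (-(N : ℤ)) 0,
      Even ((m μ c : ℤ) + (m μ c : ℤ) * m μ (c + 1) + (T (m μ c) - T (m μ (c + 1)))) := by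
    intro c hc
    rw [Finset.mem_Ico] at hc
    apply tele_parity
    have := m_step_neg μ hc.2
    omega
  have heven := Finset.even_sum _ hstep2
  have htel2 : ∑ c ∈ Finset.Ico (-(N : ℤ)) 0, (T (m μ c) - T (m μ (c + 1)))
      = - T (m μ 0) := by
    rw [sum_Ico_int]
    have : ∀ k ∈ Finset.range ((0 : ℤ) - -(N : ℤ)).toNat,
        T (m μ (-(N : ℤ) + k)) - T (m μ (-(N : ℤ) + k + 1))
        = (fun k : ℕ => T (m μ (-(N : ℤ) + k))) k - (fun k : ℕ => T (m μ (-(N : ℤ) + k))) (k + 1) := by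
      intro k _
      simp only
      congr 3
      push_cast
      ring
    rw [Finset.sum_congr rfl this, Finset.sum_range_sub']
    have hm1 : m μ (-(N : ℤ) + (0 : ℕ)) = 0 := m_outside μ (by push_cast; omega)
    have hm2 : -(N : ℤ) + (((0 : ℤ) - -(N : ℤ)).toNat : ℕ) = 0 := by push_cast; omega
    rw [hm1, hm2]
    simp [T]
  have hsum : ∑ c ∈ Finset.Ico (-(N : ℤ)) 0,
      ((m μ c : ℤ) + (m μ c : ℤ) * m μ (c + 1) + (T (m μ c) - T (m μ (c + 1))))
      = ((μ.cells.filter (fun p => p.2 < p.1)).card : ℤ) + Ssum μ - T (m μ 0) := by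
    rw [Finset.sum_add_distrib, Finset.sum_add_distrib, htel2, eps_eq μ, hS]
    ring
  rw [hsum] at heven
  have : ((μ.cells.filter (fun p => p.2 < p.1)).card : ℤ) + Ssum μ + T (m μ 0)
      = (((μ.cells.filter (fun p => p.2 < p.1)).card : ℤ) + Ssum μ - T (m μ 0))
        + 2 * T (m μ 0) := by ring
  rw [this]
  exact heven.add (even_two_mul _)

lemma chi_cancel (n : ℕ) : (χ 1) ^ n * χ (n : ℤ) = 1 := by
  rw [chi_one, χ, zpow_natCast, ← mul_pow]
  norm_num

lemma chi_zero_pow (n : ℕ) : (χ 0) ^ n = 1 := by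
  rw [show χ 0 = 1 by simp [χ], one_pow]

lemma signA (μ : YoungDiagram) :
    ∏ c ∈ μ.cells.filter (fun c => c.1 ≠ c.2), (((c.2 : ℤ) - c.1).sign : ℚ)
      = χ ((μ.cells.filter (fun p => p.2 < p.1)).card) := by
  classical
  have hpt : ∀ c ∈ μ.cells.filter (fun c => c.1 ≠ c.2),
      (((c.2 : ℤ) - c.1).sign : ℚ) = if c.2 < c.1 then (-1 : ℚ) else 1 := by
    intro c hc
    rw [Finset.mem_filter] at hc
    have hne := hc.2
    by_cases h : c.2 < c.1
    · rw [if_pos h, Int.sign_eq_neg_one_of_neg (by omega)]; norm_num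
    · rw [if_neg h, Int.sign_eq_one_of_pos (by omega)]; norm_num
  rw [Finset.prod_congr rfl hpt, Finset.prod_ite, Finset.prod_const, Finset.prod_const,
    one_pow, mul_one]
  have hset : (μ.cells.filter (fun c => c.1 ≠ c.2)).filter (fun c => c.2 < c.1)
      = μ.cells.filter (fun p => p.2 < p.1) := by
    ext p
    rw [Finset.filter_filter, Finset.mem_filter, Finset.mem_filter]
    constructor
    · rintro ⟨h1, _, h3⟩; exact ⟨h1, h3⟩
    · rintro ⟨h1, h3⟩; exact ⟨h1, by omega, h3⟩
  rw [hset, χ, zpow_natCast]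

lemma sumA_fst (μ : YoungDiagram) :
    ∑ c ∈ μ.cells.filter (fun c => c.1 ≠ c.2), (c.1 : ℤ)
      = (∑ c ∈ μ.cells, (c.1 : ℤ)) - T (m μ 0) := by
  classical
  have h := Finset.sum_filter_add_sum_filter_not μ.cells (fun c => c.1 ≠ c.2)
    (fun c => (c.1 : ℤ))
  have hnot : μ.cells.filter (fun c => ¬ c.1 ≠ c.2) = μ.cells.filter (fun c => c.1 = c.2) := by
    apply Finset.filter_congr
    intro c _
    simp
  rw [hnot, diag_sum μ] at h
  omega

lemma sumA_snd (μ : YoungDiagram) :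
    ∑ c ∈ μ.cells.filter (fun c => c.1 ≠ c.2), (c.2 : ℤ)
      = (∑ c ∈ μ.cells, (c.2 : ℤ)) - T (m μ 0) := by
  classical
  have h := Finset.sum_filter_add_sum_filter_not μ.cells (fun c => c.1 ≠ c.2)
    (fun c => (c.2 : ℤ))
  have hnot : μ.cells.filter (fun c => ¬ c.1 ≠ c.2) = μ.cells.filter (fun c => c.1 = c.2) := by
    apply Finset.filter_congr
    intro c _
    simp
  have hdiag : ∑ p ∈ μ.cells.filter (fun p => p.1 = p.2), (p.2 : ℤ) = T (m μ 0) := by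
    rw [← diag_sum μ]
    apply Finset.sum_congr rfl
    intro c hc
    rw [Finset.mem_filter] at hc
    have h := hc.2
    omega
  rw [hnot, hdiag] at h
  omega

lemma identI (μ : YoungDiagram) :
    χ (youngRho μ 1 0 + μ.card) * (youngSigma μ : ℚ)
      = χ (∑ c ∈ μ.cells, (c.1 : ℤ)) := by
  classical
  have hrho : youngRho μ 1 0
      = (∑ c ∈ μ.cells.filter (fun c => c.1 ≠ c.2), (c.1 : ℤ))
        + (∑ p ∈ (μ.cells ×ˢ μ.cells).filter
            (fun p => (1 : ℤ) + p.1.1 - p.1.2 + p.2.2 - p.2.1 ≠ 0),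
            ((fun c : ℕ × ℕ => (c.1 : ℤ)) p.1 - (fun c : ℕ × ℕ => (c.1 : ℤ)) p.2 + 1))
        + (∑ p ∈ (μ.cells ×ˢ μ.cells).filter
            (fun p => (p.1.1 : ℤ) - p.1.2 + p.2.2 - p.2.1 ≠ 0),
            ((fun c : ℕ × ℕ => (c.1 : ℤ)) p.1 - (fun c : ℕ × ℕ => (c.1 : ℤ)) p.2)) := by
    unfold youngRho
    congr 1
    · congr 1
      · exact Finset.sum_congr rfl (fun c _ => by ring)
      · exact Finset.sum_congr rfl (fun p _ => by simp only; ring)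
    · exact Finset.sum_congr rfl (fun p _ => by simp only; ring)
  rw [hrho, chi_add, chi_add, chi_add]
  unfold youngSigma
  push_cast
  rw [chi_sum ((μ.cells ×ˢ μ.cells).filter
        (fun p => (1 : ℤ) + p.1.1 - p.1.2 + p.2.2 - p.2.1 ≠ 0))
      (fun p => ((fun c : ℕ × ℕ => (c.1 : ℤ)) p.1 - (fun c : ℕ × ℕ => (c.1 : ℤ)) p.2 + 1)),
    chi_sum ((μ.cells ×ˢ μ.cells).filter
        (fun p => (p.1.1 : ℤ) - p.1.2 + p.2.2 - p.2.1 ≠ 0))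
      (fun p => ((fun c : ℕ × ℕ => (c.1 : ℤ)) p.1 - (fun c : ℕ × ℕ => (c.1 : ℤ)) p.2))]
  rw [show ∀ (a b c d e f g : ℚ), a * b * c * d * (e * f * g)
      = (e * a) * (((f * b) * (g * c)) * d) from fun _ _ _ _ _ _ _ => by ring]
  rw [← Finset.prod_mul_distrib, ← Finset.prod_mul_distrib]
  rw [L_prod μ (fun c : ℕ × ℕ => (c.1 : ℤ)) 1]
  rw [signA μ, sumA_fst μ]
  have hsum2 : ∑ q ∈ (μ.cells ×ˢ μ.cells).filter (fun q => dgn q.2 = dgn q.1 + 1),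
      ((fun c : ℕ × ℕ => (c.1 : ℤ)) q.1 - (fun c : ℕ × ℕ => (c.1 : ℤ)) q.2 + 1 + 1)
      = Ssum μ + 2 * ((μ.cells ×ˢ μ.cells).filter (fun q => dgn q.2 = dgn q.1 + 1)).card := by
    rw [Ssum]
    rw [show (fun q : (ℕ × ℕ) × (ℕ × ℕ) =>
        (fun c : ℕ × ℕ => (c.1 : ℤ)) q.1 - (fun c : ℕ × ℕ => (c.1 : ℤ)) q.2 + 1 + 1)
      = fun q : (ℕ × ℕ) × (ℕ × ℕ) => ((q.1.1 : ℤ) - q.2.1) + 2 from funext fun q => by simp only; ring]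
    rw [Finset.sum_add_distrib, Finset.sum_const, nsmul_eq_mul]
    ring
  rw [hsum2]
  -- now pure χ computation
  rw [show (χ 1) ^ μ.card * χ (Ssum μ
        + 2 * ((μ.cells ×ˢ μ.cells).filter (fun q => dgn q.2 = dgn q.1 + 1)).card)
        * χ (μ.card)
      = χ (Ssum μ + 2 * ((μ.cells ×ˢ μ.cells).filter
          (fun q => dgn q.2 = dgn q.1 + 1)).card)
        * ((χ 1) ^ μ.card * χ (μ.card)) from by ring,
    chi_cancel, mul_one]
  rw [chi_mul, chi_mul]
  apply chi_eq_of_even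
  obtain ⟨t, ht⟩ := MCL μ
  refine ⟨t + ((μ.cells ×ˢ μ.cells).filter (fun q => dgn q.2 = dgn q.1 + 1)).card
    - T (m μ 0), by push_cast at ht ⊢; linarith⟩

lemma identII (μ : YoungDiagram) :
    χ (youngRho μ 0 1 + μ.card) * (youngSigma μ : ℚ)
      = χ ((μ.card : ℤ) + ∑ c ∈ μ.cells, (c.2 : ℤ)) := by
  classical
  have hrho : youngRho μ 0 1
      = (∑ c ∈ μ.cells.filter (fun c => c.1 ≠ c.2), (c.2 : ℤ))
        + (∑ p ∈ (μ.cells ×ˢ μ.cells).filter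
            (fun p => (1 : ℤ) + p.1.1 - p.1.2 + p.2.2 - p.2.1 ≠ 0),
            ((fun c : ℕ × ℕ => (c.2 : ℤ)) p.1 - (fun c : ℕ × ℕ => (c.2 : ℤ)) p.2 + 0))
        + (∑ p ∈ (μ.cells ×ˢ μ.cells).filter
            (fun p => (p.1.1 : ℤ) - p.1.2 + p.2.2 - p.2.1 ≠ 0),
            ((fun c : ℕ × ℕ => (c.2 : ℤ)) p.1 - (fun c : ℕ × ℕ => (c.2 : ℤ)) p.2)) := by
    unfold youngRho
    congr 1
    · congr 1
      · exact Finset.sum_congr rfl (fun c _ => by ring)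
      · exact Finset.sum_congr rfl (fun p _ => by simp only; ring)
    · exact Finset.sum_congr rfl (fun p _ => by simp only; ring)
  rw [hrho, chi_add, chi_add, chi_add]
  unfold youngSigma
  push_cast
  rw [chi_sum ((μ.cells ×ˢ μ.cells).filter
        (fun p => (1 : ℤ) + p.1.1 - p.1.2 + p.2.2 - p.2.1 ≠ 0))
      (fun p => ((fun c : ℕ × ℕ => (c.2 : ℤ)) p.1 - (fun c : ℕ × ℕ => (c.2 : ℤ)) p.2 + 0)),
    chi_sum ((μ.cells ×ˢ μ.cells).filter
        (fun p => (p.1.1 : ℤ) - p.1.2 + p.2.2 - p.2.1 ≠ 0))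
      (fun p => ((fun c : ℕ × ℕ => (c.2 : ℤ)) p.1 - (fun c : ℕ × ℕ => (c.2 : ℤ)) p.2))]
  rw [show ∀ (a b c d e f g : ℚ), a * b * c * d * (e * f * g)
      = (e * a) * (((f * b) * (g * c)) * d) from fun _ _ _ _ _ _ _ => by ring]
  rw [← Finset.prod_mul_distrib, ← Finset.prod_mul_distrib]
  rw [L_prod μ (fun c : ℕ × ℕ => (c.2 : ℤ)) 0]
  rw [signA μ, sumA_snd μ]
  have hsum2 : ∑ q ∈ (μ.cells ×ˢ μ.cells).filter (fun q => dgn q.2 = dgn q.1 + 1),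
      ((fun c : ℕ × ℕ => (c.2 : ℤ)) q.1 - (fun c : ℕ × ℕ => (c.2 : ℤ)) q.2 + 0 + 1)
      = Ssum μ := by
    rw [Ssum]
    apply Finset.sum_congr rfl
    intro q hq
    rw [Finset.mem_filter] at hq
    have := hq.2
    simp only [dgn] at this
    simp only
    omega
  rw [hsum2, chi_zero_pow, one_mul]
  rw [chi_mul, chi_mul, chi_mul]
  apply chi_eq_of_even
  obtain ⟨t, ht⟩ := MCL μ
  refine ⟨t - T (m μ 0), by push_cast at ht ⊢; linarith⟩

lemma transpose_sum (μ : YoungDiagram) :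
    ∑ c ∈ μ.transpose.cells, (c.1 : ℤ) = ∑ c ∈ μ.cells, (c.2 : ℤ) := by
  apply Finset.sum_nbij' (i := Prod.swap) (j := Prod.swap)
  · intro a ha
    simp only [YoungDiagram.mem_cells, YoungDiagram.mem_transpose] at ha ⊢
    exact ha
  · intro a ha
    simp only [YoungDiagram.mem_cells, YoungDiagram.mem_transpose] at ha ⊢
    simpa using ha
  · intro a _; simp
  · intro a _; simp
  · intro a _; simp


lemma sigma_ne_zero (μ : YoungDiagram) : (youngSigma μ : ℚ) ≠ 0 := by
  have h : youngSigma μ ≠ 0 := by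
    unfold youngSigma
    apply mul_ne_zero; apply mul_ne_zero
    all_goals
      rw [Finset.prod_ne_zero_iff]
      intro p hp
      rw [Finset.mem_filter] at hp
      have h2 := hp.2
      simp only [ne_eq, Int.sign_eq_zero_iff_zero]
      first
      | exact h2
      | · simp only [ne_eq] at h2; omega
  exact_mod_cast h


lemma rho_linear (μ : YoungDiagram) (k₁ k₂ : ℤ) :
    youngRho μ k₁ k₂ = k₁ * youngRho μ 1 0 + k₂ * youngRho μ 0 1 := by
  unfold youngRho
  have hA : ∑ c ∈ μ.cells.filter (fun c => c.1 ≠ c.2), ((c.1 : ℤ) * k₁ + (c.2 : ℤ) * k₂)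
      = ∑ c ∈ μ.cells.filter (fun c => c.1 ≠ c.2), (k₁ * ((c.1 : ℤ) * 1 + (c.2 : ℤ) * 0))
        + ∑ c ∈ μ.cells.filter (fun c => c.1 ≠ c.2), (k₂ * ((c.1 : ℤ) * 0 + (c.2 : ℤ) * 1)) := by
    rw [← Finset.sum_add_distrib]
    exact Finset.sum_congr rfl (fun p _ => by ring)
  have hB : ∑ p ∈ (μ.cells ×ˢ μ.cells).filter
        (fun p => (1 : ℤ) + p.1.1 - p.1.2 + p.2.2 - p.2.1 ≠ 0),
        (((p.1.1 : ℤ) - p.2.1 + 1) * k₁ + ((p.1.2 : ℤ) - p.2.2) * k₂)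
      = ∑ p ∈ (μ.cells ×ˢ μ.cells).filter
          (fun p => (1 : ℤ) + p.1.1 - p.1.2 + p.2.2 - p.2.1 ≠ 0),
          (k₁ * (((p.1.1 : ℤ) - p.2.1 + 1) * 1 + ((p.1.2 : ℤ) - p.2.2) * 0))
        + ∑ p ∈ (μ.cells ×ˢ μ.cells).filter
          (fun p => (1 : ℤ) + p.1.1 - p.1.2 + p.2.2 - p.2.1 ≠ 0),
          (k₂ * (((p.1.1 : ℤ) - p.2.1 + 1) * 0 + ((p.1.2 : ℤ) - p.2.2) * 1)) := by
    rw [← Finset.sum_add_distrib]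
    exact Finset.sum_congr rfl (fun p _ => by ring)
  have hC : ∑ p ∈ (μ.cells ×ˢ μ.cells).filter
        (fun p => (p.1.1 : ℤ) - p.1.2 + p.2.2 - p.2.1 ≠ 0),
        (((p.1.1 : ℤ) - p.2.1) * k₁ + ((p.1.2 : ℤ) - p.2.2) * k₂)
      = ∑ p ∈ (μ.cells ×ˢ μ.cells).filter
          (fun p => (p.1.1 : ℤ) - p.1.2 + p.2.2 - p.2.1 ≠ 0),
          (k₁ * (((p.1.1 : ℤ) - p.2.1) * 1 + ((p.1.2 : ℤ) - p.2.2) * 0))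
        + ∑ p ∈ (μ.cells ×ˢ μ.cells).filter
          (fun p => (p.1.1 : ℤ) - p.1.2 + p.2.2 - p.2.1 ≠ 0),
          (k₂ * (((p.1.1 : ℤ) - p.2.1) * 0 + ((p.1.2 : ℤ) - p.2.2) * 1)) := by
    rw [← Finset.sum_add_distrib]
    exact Finset.sum_congr rfl (fun p _ => by ring)
  rw [hA, hB, hC]
  simp only [mul_add, Finset.mul_sum]
  ring

end YDLS

/-- **Lemma (sign of the leading term).** For a Young diagram `μ` and `k₁, k₂ ∈ ℤ`,
`(−1)^{ρ(μ) + |μ|(k₁+k₂)} · σ(μ)^{k₁+k₂} = (−1)^{|μ|·k₂ + n(μ)·k₁ + n(μ̄)·k₂}`,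
where `n(μ) = Σ_{(i,j)∈μ} i` and `μ̄` is the conjugate partition. -/
theorem youngDiagram_leading_sign (μ : YoungDiagram) (k₁ k₂ : ℤ) :
    ((-1 : ℚ) ^ (youngRho μ k₁ k₂ + (μ.card : ℤ) * (k₁ + k₂)))
        * ((youngSigma μ : ℚ) ^ (k₁ + k₂))
      = (-1 : ℚ) ^ ((μ.card : ℤ) * k₂ + (∑ c ∈ μ.cells, (c.1 : ℤ)) * k₁
          + (∑ c ∈ μ.transpose.cells, (c.1 : ℤ)) * k₂) := by
  classical
  have hσ := YDLS.sigma_ne_zero μ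
  have hne : (-1 : ℚ) ≠ 0 := by norm_num
  rw [YDLS.transpose_sum μ, YDLS.rho_linear μ k₁ k₂]
  have lhs_eq :
      ((-1 : ℚ) ^ (k₁ * youngRho μ 1 0 + k₂ * youngRho μ 0 1 + (μ.card : ℤ) * (k₁ + k₂)))
          * ((youngSigma μ : ℚ) ^ (k₁ + k₂))
        = (YDLS.χ (youngRho μ 1 0 + μ.card) * (youngSigma μ : ℚ)) ^ k₁
          * (YDLS.χ (youngRho μ 0 1 + μ.card) * (youngSigma μ : ℚ)) ^ k₂ := by
    rw [mul_zpow, mul_zpow, YDLS.χ, YDLS.χ, ← zpow_mul, ← zpow_mul,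
      show k₁ * youngRho μ 1 0 + k₂ * youngRho μ 0 1 + (μ.card : ℤ) * (k₁ + k₂)
        = (youngRho μ 1 0 + μ.card) * k₁ + ((youngRho μ 0 1 + μ.card) * k₂) by ring,
      zpow_add₀ hne, zpow_add₀ hσ]
    ring
  rw [lhs_eq, YDLS.identI μ, YDLS.identII μ, YDLS.χ, YDLS.χ, ← zpow_mul, ← zpow_mul,
    show (μ.card : ℤ) * k₂ + (∑ c ∈ μ.cells, (c.1 : ℤ)) * k₁ + (∑ c ∈ μ.cells, (c.2 : ℤ)) * k₂
      = (∑ c ∈ μ.cells, (c.1 : ℤ)) * k₁ + (((μ.card : ℤ) + ∑ c ∈ μ.cells, (c.2 : ℤ)) * k₂) by ring,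
    zpow_add₀ hne]
end

section
/- Let λ be a Young diagram and set D(λ) = Σ_{(a,a)∈λ} a + Σ_{((i,j),(l,k))∈λ×λ, i−l+1 = j−k} (i−l+1) + Σ_{((i,j),(l,k))∈λ×λ, i−l = j−k} (i−l). Then (−1)^{D(λ)} · σ(λ) = 1. -/
/-- The integer
`D(μ) = Σ_{(a,a)∈μ} a + Σ_{((i,j),(l,k))∈μ×μ, i−l+1 = j−k} (i−l+1)
  + Σ_{((i,j),(l,k))∈μ×μ, i−l = j−k} (i−l)`. -/
def youngD (μ : YoungDiagram) : ℤ :=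
  (∑ c ∈ μ.cells.filter (fun c => c.1 = c.2), (c.1 : ℤ))
  + (∑ p ∈ (μ.cells ×ˢ μ.cells).filter
      (fun p => (p.1.1 : ℤ) - p.2.1 + 1 = (p.1.2 : ℤ) - p.2.2),
      ((p.1.1 : ℤ) - p.2.1 + 1))
  + (∑ p ∈ (μ.cells ×ˢ μ.cells).filter
      (fun p => (p.1.1 : ℤ) - p.2.1 = (p.1.2 : ℤ) - p.2.2),
      ((p.1.1 : ℤ) - p.2.1))

open Finset

namespace YoungAux

/-- cell weight -/
def w (x : ℕ × ℕ) : ℤ := if x.1 = x.2 then (x.1 : ℤ) else if x.2 < x.1 then 1 else 0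

/-- pair weight on the `t = 0` diagonal (antisymmetric, sums to zero) -/
def u0 (p : (ℕ × ℕ) × (ℕ × ℕ)) : ℤ :=
  if (p.1.2 : ℤ) - p.1.1 = (p.2.2 : ℤ) - p.2.1 then (p.1.1 : ℤ) - p.2.1 else 0

/-- pair weight on the `t = -1` diagonal -/
def u (p : (ℕ × ℕ) × (ℕ × ℕ)) : ℤ :=
  if (p.1.2 : ℤ) - p.1.1 = (p.2.2 : ℤ) - p.2.1 + 1 then (p.1.1 : ℤ) - p.2.1 else 0

/-- the reduced exponent -/
def E (μ : YoungDiagram) : ℤ :=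
  (∑ x ∈ μ.cells, w x) + ∑ p ∈ μ.cells ×ˢ μ.cells, u p

lemma neg_one_zpow_sum {α : Type*} (s : Finset α) (f : α → ℤ) :
    (-1 : ℚ) ^ (∑ a ∈ s, f a) = ∏ a ∈ s, (-1 : ℚ) ^ (f a) := by
  classical
  induction s using Finset.induction_on with
  | empty => simp
  | insert _ _ h ih =>
      rw [Finset.sum_insert h, Finset.prod_insert h, zpow_add₀ (by norm_num : (-1:ℚ) ≠ 0), ih]

lemma cell_eq (i j : ℕ) :
    (-1 : ℚ) ^ (if i = j then (i : ℤ) else 0)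
      * (if (i : ℕ) ≠ j then ((((j : ℤ) - i).sign : ℤ) : ℚ) else 1)
    = (-1 : ℚ) ^ (if i = j then (i : ℤ) else if j < i then 1 else 0) := by
  rcases lt_trichotomy i j with h | h | h
  · rw [if_neg (by omega), if_pos (by omega), if_neg (by omega), if_neg (by omega),
      Int.sign_eq_one_iff_pos.mpr (by omega)]
    norm_num
  · rw [if_pos h, if_neg (by omega), if_pos h]
    norm_num
  · rw [if_neg (by omega), if_pos (by omega), if_neg (by omega), if_pos h,
      Int.sign_eq_neg_one_iff_neg.mpr (by omega)]
    norm_num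

lemma pair_eq (i j l k : ℤ) :
    (-1 : ℚ) ^ (if i - l + 1 = j - k then i - l + 1 else 0)
      * (-1 : ℚ) ^ (if i - l = j - k then i - l else 0)
      * (if (1 : ℤ) + i - j + k - l ≠ 0 then ((((1 : ℤ) + i - j + k - l).sign : ℤ) : ℚ) else 1)
      * (if i - j + k - l ≠ 0 then (((i - j + k - l).sign : ℤ) : ℚ) else 1)
    = (-1 : ℚ) ^ ((if j - i = k - l then i - l else 0)
        + (if j - i = k - l + 1 then i - l else 0)) := by
  by_cases h0 : i - j + k - l = 0
  · rw [if_neg (by omega), if_pos (by omega), if_pos (by omega), if_neg (by omega),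
      if_pos (by omega), if_neg (by omega),
      show (1 : ℤ) + i - j + k - l = 1 by omega]
    simp
  by_cases h1 : i - j + k - l = -1
  · rw [if_pos (by omega), if_neg (by omega), if_neg (by omega), if_pos (by omega),
      if_neg (by omega), if_pos (by omega),
      show i - j + k - l = -1 by omega,
      zpow_add_one₀ (by norm_num : (-1:ℚ) ≠ 0),
      show ((-1 : ℤ)).sign = -1 from rfl]
    norm_num
  by_cases hpos : 0 < i - j + k - l
  · rw [if_neg (by omega), if_neg (by omega), if_pos (by omega), if_pos (by omega),
      if_neg (by omega), if_neg (by omega),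
      Int.sign_eq_one_iff_pos.mpr (by omega),
      Int.sign_eq_one_iff_pos.mpr (by omega : (0:ℤ) < i - j + k - l)]
    norm_num
  · rw [if_neg (by omega), if_neg (by omega), if_pos (by omega), if_pos (by omega),
      if_neg (by omega), if_neg (by omega),
      Int.sign_eq_neg_one_iff_neg.mpr (by omega),
      Int.sign_eq_neg_one_iff_neg.mpr (by omega : i - j + k - l < 0)]
    norm_num

lemma sum_u0_eq_zero (A : Finset (ℕ × ℕ)) : ∑ p ∈ A ×ˢ A, u0 p = 0 := by
  have hswap : ∑ p ∈ A ×ˢ A, u0 p = ∑ p ∈ A ×ˢ A, u0 (p.2, p.1) := by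
    refine Finset.sum_equiv (Equiv.prodComm (ℕ × ℕ) (ℕ × ℕ)) ?_ ?_
    · intro p; simp [Finset.mem_product, and_comm]
    · intro p _; rfl
  have hanti : ∀ p : (ℕ × ℕ) × (ℕ × ℕ), u0 (p.2, p.1) = -u0 p := by
    rintro ⟨⟨a, b⟩, ⟨c, d⟩⟩
    unfold u0
    dsimp only
    by_cases h : (b : ℤ) - a = (d : ℤ) - c
    · rw [if_pos h, if_pos (by omega)]
      omega
    · rw [if_neg h, if_neg (by omega)]
      omega
  have : ∑ p ∈ A ×ˢ A, u0 p = -∑ p ∈ A ×ˢ A, u0 p := by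
    nth_rewrite 1 [hswap]
    rw [← Finset.sum_neg_distrib]
    exact Finset.sum_congr rfl fun p _ => hanti p
  omega

/-- Reduction: the original quantity equals `(-1) ^ E μ`. -/
lemma reduction (μ : YoungDiagram) :
    ((-1 : ℚ) ^ (youngD μ)) * (youngSigma μ : ℚ) = (-1 : ℚ) ^ (E μ) := by
  classical
  unfold youngD youngSigma
  rw [Int.cast_mul, Int.cast_mul, Int.cast_prod, Int.cast_prod, Int.cast_prod]
  rw [zpow_add₀ (by norm_num : (-1:ℚ) ≠ 0), zpow_add₀ (by norm_num : (-1:ℚ) ≠ 0)]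
  rw [Finset.sum_filter, Finset.sum_filter, Finset.sum_filter,
    Finset.prod_filter, Finset.prod_filter, Finset.prod_filter]
  rw [neg_one_zpow_sum, neg_one_zpow_sum, neg_one_zpow_sum]
  have hcells :
      (∏ x ∈ μ.cells, (-1:ℚ) ^ (if x.1 = x.2 then (x.1 : ℤ) else 0))
        * (∏ x ∈ μ.cells, (if x.1 ≠ x.2 then ((((x.2 : ℤ) - x.1).sign : ℤ) : ℚ) else 1))
      = ∏ x ∈ μ.cells, (-1:ℚ) ^ (w x) := by
    rw [← Finset.prod_mul_distrib]
    exact Finset.prod_congr rfl fun x _ => cell_eq x.1 x.2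
  have hpairs :
      (∏ p ∈ μ.cells ×ˢ μ.cells,
          (-1:ℚ) ^ (if (p.1.1 : ℤ) - p.2.1 + 1 = (p.1.2 : ℤ) - p.2.2
            then (p.1.1 : ℤ) - p.2.1 + 1 else 0))
        * (∏ p ∈ μ.cells ×ˢ μ.cells,
          (-1:ℚ) ^ (if (p.1.1 : ℤ) - p.2.1 = (p.1.2 : ℤ) - p.2.2
            then (p.1.1 : ℤ) - p.2.1 else 0))
        * (∏ p ∈ μ.cells ×ˢ μ.cells,
            (if (1 : ℤ) + p.1.1 - p.1.2 + p.2.2 - p.2.1 ≠ 0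
              then ((((1 : ℤ) + p.1.1 - p.1.2 + p.2.2 - p.2.1).sign : ℤ) : ℚ) else 1))
        * (∏ p ∈ μ.cells ×ˢ μ.cells,
            (if (p.1.1 : ℤ) - p.1.2 + p.2.2 - p.2.1 ≠ 0
              then ((((p.1.1 : ℤ) - p.1.2 + p.2.2 - p.2.1).sign : ℤ) : ℚ) else 1))
      = ∏ p ∈ μ.cells ×ˢ μ.cells, (-1:ℚ) ^ (u0 p + u p) := by
    rw [← Finset.prod_mul_distrib, ← Finset.prod_mul_distrib, ← Finset.prod_mul_distrib]
    exact Finset.prod_congr rfl fun p _ => pair_eq p.1.1 p.1.2 p.2.1 p.2.2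
  have key : ∀ a1 a2 a3 b1 b2 b3 r : ℚ,
      a1 * b1 * (a2 * a3 * b2 * b3) = r → a1 * a2 * a3 * (b1 * b2 * b3) = r := by
    intro a1 a2 a3 b1 b2 b3 r h
    rw [← h]; ring
  refine key _ _ _ _ _ _ _ ?_
  rw [hcells, hpairs]
  rw [← neg_one_zpow_sum, ← neg_one_zpow_sum, Finset.sum_add_distrib,
    sum_u0_eq_zero, zero_add, ← zpow_add₀ (by norm_num : (-1:ℚ) ≠ 0)]
  rfl

lemma diag_struct (μ : YoungDiagram) (o q : ℕ) (hoq : o = 0 ∨ q = 0) :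
    ∃ n : ℕ, (μ.cells.filter (fun y => (y.2 : ℤ) - y.1 = (q : ℤ) - o)
      = (Finset.range n).image (fun k => (o + k, q + k)))
    ∧ ∀ k : ℕ, ((o + k, q + k) ∈ μ ↔ k < n) := by
  have hanti : ∀ k k' : ℕ, k' ≤ k → (o + k, q + k) ∈ μ → (o + k', q + k') ∈ μ := by
    intro k k' h hm
    exact μ.up_left_mem (by omega) (by omega) hm
  have hex : ∃ N, (o + N, q + N) ∉ μ := by
    refine ⟨μ.colLen 0, fun hm => ?_⟩
    have h1 := YoungDiagram.mem_iff_lt_colLen.mp hm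
    have h2 := μ.colLen_anti 0 (q + μ.colLen 0) (Nat.zero_le _)
    omega
  have hiff : ∀ k : ℕ, ((o + k, q + k) ∈ μ ↔ k < Nat.find hex) := by
    intro k
    constructor
    · intro hm
      by_contra h
      exact Nat.find_spec hex (hanti k (Nat.find hex) (by omega) hm)
    · intro h
      by_contra hm
      have := Nat.find_min' hex hm
      omega
  refine ⟨Nat.find hex, ?_, hiff⟩
  ext y
  obtain ⟨i, j⟩ := y
  simp only [Finset.mem_filter, Finset.mem_image, Finset.mem_range, YoungDiagram.mem_cells,
    Prod.mk.injEq]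
  constructor
  · rintro ⟨hm, hd⟩
    have hio : o ≤ i := by rcases hoq with h | h <;> omega
    refine ⟨i - o, ?_, by omega, by omega⟩
    refine (hiff (i - o)).mp ?_
    have h1 : (o + (i - o), q + (i - o)) = (i, j) := by
      rw [show o + (i - o) = i by omega, show q + (i - o) = j by omega]
    rw [h1]
    exact hm
  · rintro ⟨k, hk, hk1, hk2⟩
    have hm := (hiff k).mpr hk
    rw [hk1, hk2] at hm
    refine ⟨hm, by omega⟩

lemma pin {ν : YoungDiagram} {o q n : ℕ}
    (hiff : ∀ k : ℕ, ((o + k, q + k) ∈ ν ↔ k < n)) (m : ℕ)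
    (hlo : m = 0 ∨ (o + (m - 1), q + (m - 1)) ∈ ν) (hhi : (o + m, q + m) ∉ ν) : n = m := by
  have h2 : ¬(m < n) := fun hh => hhi ((hiff m).mpr hh)
  rcases hlo with h | h
  · omega
  · have h1 := (hiff (m - 1)).mp h
    omega

lemma sum_over_diag (ν : YoungDiagram) (o q n : ℕ)
    (h : ν.cells.filter (fun y => (y.2 : ℤ) - y.1 = (q : ℤ) - o)
      = (Finset.range n).image (fun k => (o + k, q + k)))
    (g : ℕ × ℕ → ℤ) :
    (∑ y ∈ ν.cells, if (y.2 : ℤ) - y.1 = (q : ℤ) - o then g y else 0)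
      = ∑ k ∈ Finset.range n, g (o + k, q + k) := by
  rw [← Finset.sum_filter, h, Finset.sum_image]
  intro a _ b _ hab
  simp only [Prod.mk.injEq] at hab
  omega

lemma sum_cancel (n : ℕ) (a : ℤ) :
    ((∑ k ∈ Finset.range n, (a - (k : ℤ))) + ∑ k ∈ Finset.range n, ((k : ℤ) - a)) = 0 := by
  rw [← Finset.sum_add_distrib]
  simp

theorem even_E (μ₀ : YoungDiagram) : Even (E μ₀) := by
  suffices H : ∀ (N : ℕ) (μ : YoungDiagram), μ.cells.card = N → Even (E μ) from H _ μ₀ rfl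
  intro N
  induction N using Nat.strong_induction_on with
  | _ N IH =>
  intro μ hN
  rcases Finset.eq_empty_or_nonempty μ.cells with hemp | hne
  · unfold E
    rw [hemp]
    simp
  -- the largest occupied row
  obtain ⟨r, hr_mem, hr_max⟩ :
      ∃ r : ℕ, (∃ j, (r, j) ∈ μ) ∧ ∀ p ∈ μ.cells, p.1 ≤ r := by
    refine ⟨(μ.cells.image Prod.fst).max' (hne.image _), ?_, ?_⟩
    · obtain ⟨p, hp, hp2⟩ :=
        Finset.mem_image.mp ((μ.cells.image Prod.fst).max'_mem (hne.image _))
      exact ⟨p.2, by rw [← hp2]; exact hp⟩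
    · intro p hp
      exact Finset.le_max' _ _ (Finset.mem_image_of_mem _ hp)
  have hr_max' : ∀ a b : ℕ, (a, b) ∈ μ → a ≤ r := fun a b h => hr_max (a, b) h
  set s := μ.rowLen r - 1 with hs
  have hrowpos : 0 < μ.rowLen r := by
    obtain ⟨j, hj⟩ := hr_mem
    have := YoungDiagram.mem_iff_lt_rowLen.mp hj
    omega
  have hx : (r, s) ∈ μ := YoungDiagram.mem_iff_lt_rowLen.mpr (by omega)
  have hcol_max : ∀ j, (r, j) ∈ μ → j ≤ s := by
    intro j hj
    have := YoungDiagram.mem_iff_lt_rowLen.mp hj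
    omega
  -- the erased diagram
  have hlower : IsLowerSet (↑(μ.cells.erase (r, s)) : Set (ℕ × ℕ)) := by
    intro a b hba hmem
    simp only [Finset.coe_erase, Set.mem_diff, Finset.mem_coe, Set.mem_singleton_iff] at hmem ⊢
    obtain ⟨hma, hane⟩ := hmem
    refine ⟨μ.isLowerSet hba hma, ?_⟩
    intro hb
    apply hane
    have h1 := hr_max a hma
    obtain ⟨hba1, hba2⟩ := Prod.le_def.mp hba
    rw [hb] at hba1 hba2
    have h2 : a.1 = r := le_antisymm h1 hba1
    have h3 : a.2 ≤ s := hcol_max a.2 (by rw [← h2]; exact hma)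
    have h4 : a.2 = s := le_antisymm h3 hba2
    rw [Prod.ext_iff]
    exact ⟨h2, h4⟩
  set ν : YoungDiagram := ⟨μ.cells.erase (r, s), hlower⟩ with hν
  have hνcells : ν.cells = μ.cells.erase (r, s) := rfl
  have hnotmem : (r, s) ∉ ν.cells := Finset.notMem_erase _ _
  have hinsert : μ.cells = insert (r, s) ν.cells := (Finset.insert_erase hx).symm
  have hνmem : ∀ a b : ℕ, ((a, b) ∈ ν ↔ ((a, b) ≠ (r, s) ∧ (a, b) ∈ μ)) := by
    intro a b
    exact Finset.mem_erase
  have hνsub : ∀ a b : ℕ, (a, b) ∈ ν → (a, b) ∈ μ := fun a b h => ((hνmem a b).mp h).2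
  have hEν : Even (E ν) := by
    refine IH ν.cells.card ?_ ν rfl
    rw [hνcells, Finset.card_erase_of_mem hx, hN]
    have : 0 < N := by rw [← hN]; exact Finset.card_pos.mpr hne
    omega
  -- decomposition of E μ
  have hE : E μ = E ν + (w (r, s)
      + ((∑ y ∈ ν.cells, u ((r, s), y)) + ∑ y ∈ ν.cells, u (y, (r, s)))) := by
    unfold E
    rw [hinsert, Finset.sum_insert hnotmem, Finset.sum_product, Finset.sum_insert hnotmem,
      Finset.sum_insert hnotmem]
    rw [Finset.sum_congr rfl (fun a (_ : a ∈ ν.cells) => Finset.sum_insert hnotmem),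
      Finset.sum_add_distrib, ← Finset.sum_product]
    have huxx : u ((r, s), (r, s)) = 0 := by
      unfold u
      dsimp only
      rw [if_neg (by omega)]
    rw [huxx]
    ring
  rw [hE]
  refine hEν.add ?_
  -- now the combinatorics of the two adjacent diagonals
  rcases lt_trichotomy r s with hrs | hrs | hrs
  · -- case r < s
    obtain ⟨nm, hmEq, hmIff⟩ := diag_struct ν 0 (s - 1 - r) (Or.inl rfl)
    obtain ⟨np, hpEq, hpIff⟩ := diag_struct ν 0 (s + 1 - r) (Or.inl rfl)
    have hnm : nm = r + 1 := by
      refine pin hmIff (r + 1) (Or.inr ?_) ?_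
      · rw [show 0 + (r + 1 - 1) = r by omega, show s - 1 - r + (r + 1 - 1) = s - 1 by omega]
        refine (hνmem r (s - 1)).mpr ⟨by simp only [ne_eq, Prod.mk.injEq, not_and]; omega, μ.up_left_mem le_rfl (by omega) hx⟩
      · intro hm
        have h5 := hr_max' _ _ (hνsub _ _ hm)
        omega
    have hnp : np = r := by
      refine pin hpIff r ?_ ?_
      · rcases Nat.eq_zero_or_pos r with h0 | h0
        · exact Or.inl h0
        · refine Or.inr ?_
          rw [show 0 + (r - 1) = r - 1 by omega, show s + 1 - r + (r - 1) = s by omega]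
          exact (hνmem (r - 1) s).mpr ⟨by simp only [ne_eq, Prod.mk.injEq, not_and]; omega, μ.up_left_mem (by omega) le_rfl hx⟩
      · intro hm
        rw [show (0 : ℕ) + r = r by omega, show s + 1 - r + r = s + 1 by omega] at hm
        exact absurd (hcol_max _ (hνsub _ _ hm)) (by omega)
    have hSm : (∑ y ∈ ν.cells, u ((r, s), y))
        = ∑ k ∈ Finset.range nm, ((r : ℤ) - (k : ℤ)) := by
      rw [show (∑ y ∈ ν.cells, u ((r, s), y))
          = ∑ y ∈ ν.cells, (if (y.2 : ℤ) - y.1 = ((s - 1 - r : ℕ) : ℤ) - (0 : ℕ)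
              then (r : ℤ) - y.1 else 0) from
        Finset.sum_congr rfl fun y _ => by
          unfold u
          dsimp only
          exact if_congr (by push_cast [hrs.le]; omega) rfl rfl]
      rw [sum_over_diag ν _ _ _ hmEq (fun y => (r : ℤ) - y.1)]
      exact Finset.sum_congr rfl fun k _ => by push_cast; ring
    have hSp : (∑ y ∈ ν.cells, u (y, (r, s)))
        = ∑ k ∈ Finset.range np, ((k : ℤ) - (r : ℤ)) := by
      rw [show (∑ y ∈ ν.cells, u (y, (r, s)))
          = ∑ y ∈ ν.cells, (if (y.2 : ℤ) - y.1 = ((s + 1 - r : ℕ) : ℤ) - (0 : ℕ)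
              then (y.1 : ℤ) - r else 0) from
        Finset.sum_congr rfl fun y _ => by
          unfold u
          dsimp only
          exact if_congr (by push_cast [hrs.le]; omega) rfl rfl]
      rw [sum_over_diag ν _ _ _ hpEq (fun y => (y.1 : ℤ) - r)]
      exact Finset.sum_congr rfl fun k _ => by push_cast; ring
    rw [hSm, hSp, hnm, hnp]
    have hw : w (r, s) = 0 := by
      unfold w
      rw [if_neg (by omega), if_neg (by omega)]
    rw [hw, Finset.sum_range_succ, show (r : ℤ) - (r : ℤ) = 0 by ring, add_zero,
      sum_cancel r ((r : ℕ) : ℤ)]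
    simp
  · -- case r = s
    obtain ⟨nm, hmEq, hmIff⟩ := diag_struct ν 1 0 (Or.inr rfl)
    obtain ⟨np, hpEq, hpIff⟩ := diag_struct ν 0 1 (Or.inl rfl)
    have hnm : nm = r := by
      refine pin hmIff r ?_ ?_
      · rcases Nat.eq_zero_or_pos r with h0 | h0
        · exact Or.inl h0
        · refine Or.inr ?_
          rw [show 1 + (r - 1) = r by omega, show 0 + (r - 1) = r - 1 by omega]
          refine (hνmem r (r - 1)).mpr ⟨by simp only [ne_eq, Prod.mk.injEq, not_and]; omega, ?_⟩
          rw [← hrs] at hx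
          exact μ.up_left_mem le_rfl (by omega) hx
      · intro hm
        have h5 := hr_max' _ _ (hνsub _ _ hm)
        omega
    have hnp : np = r := by
      refine pin hpIff r ?_ ?_
      · rcases Nat.eq_zero_or_pos r with h0 | h0
        · exact Or.inl h0
        · refine Or.inr ?_
          rw [show 0 + (r - 1) = r - 1 by omega, show 1 + (r - 1) = r by omega]
          refine (hνmem (r - 1) r).mpr ⟨by simp only [ne_eq, Prod.mk.injEq, not_and]; omega, ?_⟩
          rw [← hrs] at hx
          exact μ.up_left_mem (by omega) le_rfl hx
      · intro hm
        rw [show (0 : ℕ) + r = r by omega, show (1 : ℕ) + r = r + 1 by omega] at hm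
        refine absurd (hcol_max _ (hνsub _ _ hm)) (by omega)
    have hSm : (∑ y ∈ ν.cells, u ((r, s), y))
        = ∑ k ∈ Finset.range nm, ((r : ℤ) - 1 - (k : ℤ)) := by
      rw [show (∑ y ∈ ν.cells, u ((r, s), y))
          = ∑ y ∈ ν.cells, (if (y.2 : ℤ) - y.1 = ((0 : ℕ) : ℤ) - (1 : ℕ)
              then (r : ℤ) - y.1 else 0) from
        Finset.sum_congr rfl fun y _ => by
          unfold u
          dsimp only
          exact if_congr (by rw [← hrs]; push_cast; omega) rfl rfl]
      rw [sum_over_diag ν _ _ _ hmEq (fun y => (r : ℤ) - y.1)]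
      exact Finset.sum_congr rfl fun k _ => by push_cast; ring
    have hSp : (∑ y ∈ ν.cells, u (y, (r, s)))
        = ∑ k ∈ Finset.range np, ((k : ℤ) - (r : ℤ)) := by
      rw [show (∑ y ∈ ν.cells, u (y, (r, s)))
          = ∑ y ∈ ν.cells, (if (y.2 : ℤ) - y.1 = ((1 : ℕ) : ℤ) - (0 : ℕ)
              then (y.1 : ℤ) - r else 0) from
        Finset.sum_congr rfl fun y _ => by
          unfold u
          dsimp only
          exact if_congr (by rw [← hrs]; push_cast; omega) rfl rfl]
      rw [sum_over_diag ν _ _ _ hpEq (fun y => (y.1 : ℤ) - r)]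
      exact Finset.sum_congr rfl fun k _ => by push_cast; ring
    rw [hSm, hSp, hnm, hnp]
    have hw : w (r, s) = (r : ℤ) := by
      unfold w
      rw [if_pos (by omega)]
    rw [hw, ← Finset.sum_add_distrib]
    rw [Finset.sum_congr rfl (fun k (_ : k ∈ Finset.range r) =>
      show ((r : ℤ) - 1 - k) + ((k : ℤ) - r) = -1 by ring)]
    rw [Finset.sum_const, Finset.card_range]
    refine ⟨0, by simp⟩
  · -- case r > s
    obtain ⟨nm, hmEq, hmIff⟩ := diag_struct ν (r + 1 - s) 0 (Or.inr rfl)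
    obtain ⟨np, hpEq, hpIff⟩ := diag_struct ν (r - 1 - s) 0 (Or.inr rfl)
    have hnm : nm = s := by
      refine pin hmIff s ?_ ?_
      · rcases Nat.eq_zero_or_pos s with h0 | h0
        · exact Or.inl h0
        · refine Or.inr ?_
          rw [show r + 1 - s + (s - 1) = r by omega, show 0 + (s - 1) = s - 1 by omega]
          exact (hνmem r (s - 1)).mpr ⟨by simp only [ne_eq, Prod.mk.injEq, not_and]; omega, μ.up_left_mem le_rfl (by omega) hx⟩
      · intro hm
        rw [show r + 1 - s + s = r + 1 by omega] at hm
        have h5 := hr_max' _ _ (hνsub _ _ hm)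
        omega
    have hnp : np = s + 1 := by
      refine pin hpIff (s + 1) (Or.inr ?_) ?_
      · rw [show r - 1 - s + (s + 1 - 1) = r - 1 by omega, show 0 + (s + 1 - 1) = s by omega]
        exact (hνmem (r - 1) s).mpr ⟨by simp only [ne_eq, Prod.mk.injEq, not_and]; omega, μ.up_left_mem (by omega) le_rfl hx⟩
      · intro hm
        rw [show r - 1 - s + (s + 1) = r by omega, show 0 + (s + 1) = s + 1 by omega] at hm
        exact absurd (hcol_max _ (hνsub _ _ hm)) (by omega)
    have hSm : (∑ y ∈ ν.cells, u ((r, s), y))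
        = ∑ k ∈ Finset.range nm, ((s : ℤ) - 1 - (k : ℤ)) := by
      rw [show (∑ y ∈ ν.cells, u ((r, s), y))
          = ∑ y ∈ ν.cells, (if (y.2 : ℤ) - y.1 = ((0 : ℕ) : ℤ) - ((r + 1 - s : ℕ))
              then (r : ℤ) - y.1 else 0) from
        Finset.sum_congr rfl fun y _ => by
          unfold u
          dsimp only
          exact if_congr (by push_cast [Nat.le_of_lt hrs]; omega) rfl rfl]
      rw [sum_over_diag ν _ _ _ hmEq (fun y => (r : ℤ) - y.1)]
      refine Finset.sum_congr rfl fun k _ => ?_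
      omega
    have hSp : (∑ y ∈ ν.cells, u (y, (r, s)))
        = ∑ k ∈ Finset.range np, ((k : ℤ) - (s : ℤ) - 1) := by
      rw [show (∑ y ∈ ν.cells, u (y, (r, s)))
          = ∑ y ∈ ν.cells, (if (y.2 : ℤ) - y.1 = ((0 : ℕ) : ℤ) - ((r - 1 - s : ℕ))
              then (y.1 : ℤ) - r else 0) from
        Finset.sum_congr rfl fun y _ => by
          unfold u
          dsimp only
          exact if_congr (by push_cast [Nat.le_of_lt hrs]; omega) rfl rfl]
      rw [sum_over_diag ν _ _ _ hpEq (fun y => (y.1 : ℤ) - r)]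
      refine Finset.sum_congr rfl fun k _ => ?_
      omega
    rw [hSm, hSp, hnm, hnp]
    have hw : w (r, s) = 1 := by
      unfold w
      rw [if_neg (by omega), if_pos (by omega)]
    rw [hw, Finset.sum_range_succ, show ((s : ℕ) : ℤ) - (s : ℤ) - 1 = -1 by ring]
    rw [show ((∑ k ∈ Finset.range s, ((s : ℤ) - 1 - (k : ℤ)))
        + ((∑ k ∈ Finset.range s, ((k : ℤ) - (s : ℤ) - 1)) + -1))
      = ((∑ k ∈ Finset.range s, ((s : ℤ) - 1 - (k : ℤ)))
        + (∑ k ∈ Finset.range s, ((k : ℤ) - (s : ℤ) - 1))) + -1 by ring]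
    rw [← Finset.sum_add_distrib]
    rw [Finset.sum_congr rfl (fun k (_ : k ∈ Finset.range s) =>
      show ((s : ℤ) - 1 - k) + ((k : ℤ) - s - 1) = -2 by ring)]
    rw [Finset.sum_const, Finset.card_range]
    exact ⟨-(s : ℤ), by ring⟩

end YoungAux

/-- **Lemma.** For every Young diagram `μ`, `(−1)^{D(μ)} · σ(μ) = 1`. -/
theorem youngDiagram_negOnePow_D_mul_sigma (μ : YoungDiagram) :
    ((-1 : ℚ) ^ (youngD μ)) * (youngSigma μ : ℚ) = 1 := by
  rw [YoungAux.reduction μ]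
  exact Even.neg_one_zpow (YoungAux.even_E μ)
end
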